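/- arXiv:1608.06953 — 5 statements merged into one kernel-verified Lean document; each statement's English description precedes it below -/
import Mathlib

section
/- Let X be a real random variable that has either nonzero mean or infinite second moment, let ε ∈ (0,1), and for each n let A_n be an n × n random matrix whose entries are i.i.d. copies of X. For each n define m_n as the minimum of ‖Ã_n‖/√n over all matrices Ã_n obtained from A_n by arbitrarily modifying the entries in any ⌊εn⌋ × ⌊εn⌋ submatrix (i.e., Ã_n agrees with A_n outside some product set I × J with |I|, |J| ≤ εn). Then m_n → ∞ as n → ∞ almost surely. -/
open MeasureTheory ProbabilityTheory
open scoped ENNReal NNReal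

/-- The `ℓ₂ → ℓ₂` operator norm of a real matrix. -/
noncomputable def l2OpNorm {m k : Type*} [Fintype m] [Fintype k] [DecidableEq k]
    (A : Matrix m k ℝ) : ℝ :=
  ‖LinearMap.toContinuousLinearMap (Matrix.toEuclideanLin (𝕜 := ℝ) A)‖

section NormLemmas

variable {n : ℕ}

lemma l2OpNorm_nonneg (A : Matrix (Fin n) (Fin n) ℝ) : 0 ≤ l2OpNorm A := norm_nonneg _

lemma l2OpNorm_neg (A : Matrix (Fin n) (Fin n) ℝ) : l2OpNorm (-A) = l2OpNorm A := by
  unfold l2OpNorm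
  rw [map_neg, map_neg, norm_neg]

/-- bound for the image of a vector -/
lemma norm_image_le (A : Matrix (Fin n) (Fin n) ℝ) (x : EuclideanSpace ℝ (Fin n)) :
    ‖Matrix.toEuclideanLin (𝕜 := ℝ) A x‖ ≤ l2OpNorm A * ‖x‖ := by
  have h := (LinearMap.toContinuousLinearMap (Matrix.toEuclideanLin (𝕜 := ℝ) A)).le_opNorm x
  rwa [LinearMap.coe_toContinuousLinearMap'] at h

/-- column sum of squares bound -/
lemma col_sq_sum_le (A : Matrix (Fin n) (Fin n) ℝ) (j : Fin n) :
    ∑ i, (A i j) ^ 2 ≤ (l2OpNorm A) ^ 2 := by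
  classical
  set x : EuclideanSpace ℝ (Fin n) :=
    (WithLp.equiv 2 (Fin n → ℝ)).symm (fun k => if k = j then (1:ℝ) else 0) with hx
  have hxapp : ∀ k, x k = if k = j then (1:ℝ) else 0 := fun k => rfl
  have hxnorm : ‖x‖ = 1 := by
    rw [EuclideanSpace.norm_eq]
    have : ∀ k, ‖x k‖ ^ 2 = if k = j then (1:ℝ) else 0 := by
      intro k; rw [hxapp]; split <;> simp
    rw [Finset.sum_congr rfl fun k _ => this k, Finset.sum_ite_eq' Finset.univ j fun _ => (1:ℝ)]
    simp
  have himg : ∀ i, (Matrix.toEuclideanLin (𝕜 := ℝ) A x) i = A i j := by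
    intro i
    rw [Matrix.toEuclideanLin_apply]
    show (A.mulVec fun k => if k = j then (1:ℝ) else 0) i = A i j
    rw [Matrix.mulVec, dotProduct]
    rw [Finset.sum_congr rfl (fun k _ => show A i k * (if k = j then (1:ℝ) else 0)
      = if k = j then A i j else 0 by split <;> simp_all)]
    simp
  have h1 : ‖Matrix.toEuclideanLin (𝕜 := ℝ) A x‖ ^ 2 = ∑ i, (A i j) ^ 2 := by
    rw [EuclideanSpace.norm_eq, Real.sq_sqrt (by positivity)]
    refine Finset.sum_congr rfl fun i _ => ?_
    rw [himg i, Real.norm_eq_abs, sq_abs]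
  have h2 := norm_image_le A x
  rw [hxnorm, mul_one] at h2
  calc ∑ i, (A i j) ^ 2 = ‖Matrix.toEuclideanLin (𝕜 := ℝ) A x‖ ^ 2 := h1.symm
    _ ≤ (l2OpNorm A) ^ 2 := pow_le_pow_left₀ (norm_nonneg _) h2 2

/-- Frobenius-type bound on a minor -/
lemma minor_sq_sum_le (A : Matrix (Fin n) (Fin n) ℝ) (S T : Finset (Fin n)) :
    ∑ p ∈ S ×ˢ T, (A p.1 p.2) ^ 2 ≤ n * (l2OpNorm A) ^ 2 := by
  classical
  have h1 : ∑ p ∈ S ×ˢ T, (A p.1 p.2) ^ 2 ≤ ∑ p : Fin n × Fin n, (A p.1 p.2) ^ 2 := by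
    apply Finset.sum_le_sum_of_subset_of_nonneg (Finset.subset_univ _)
    intros; positivity
  have h2 : ∑ p : Fin n × Fin n, (A p.1 p.2) ^ 2 = ∑ j, ∑ i, (A i j) ^ 2 := by
    rw [← Finset.univ_product_univ, Finset.sum_product]
    exact Finset.sum_comm
  refine h1.trans ?_
  rw [h2]
  calc ∑ j, ∑ i, (A i j) ^ 2 ≤ ∑ _j : Fin n, (l2OpNorm A) ^ 2 :=
        Finset.sum_le_sum fun j _ => col_sq_sum_le A j
    _ = n * (l2OpNorm A) ^ 2 := by simp [mul_comm]

/-- bilinear bound on a minor -/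
lemma minor_sum_le (A : Matrix (Fin n) (Fin n) ℝ) (S T : Finset (Fin n)) :
    ∑ p ∈ S ×ˢ T, A p.1 p.2 ≤ l2OpNorm A * n := by
  classical
  set u : EuclideanSpace ℝ (Fin n) :=
    (WithLp.equiv 2 (Fin n → ℝ)).symm (fun i => if i ∈ S then (1:ℝ) else 0) with hu
  set v : EuclideanSpace ℝ (Fin n) :=
    (WithLp.equiv 2 (Fin n → ℝ)).symm (fun j => if j ∈ T then (1:ℝ) else 0) with hv
  have huapp : ∀ i, u i = if i ∈ S then (1:ℝ) else 0 := fun _ => rfl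
  have hvapp : ∀ j, v j = if j ∈ T then (1:ℝ) else 0 := fun _ => rfl
  have hbd : ∀ (w : EuclideanSpace ℝ (Fin n)), (∀ i, ‖w i‖ ^ 2 ≤ 1) → ‖w‖ ≤ Real.sqrt n := by
    intro w hw
    rw [EuclideanSpace.norm_eq]
    apply Real.sqrt_le_sqrt
    calc ∑ i, ‖w i‖ ^ 2 ≤ ∑ _i : Fin n, 1 := Finset.sum_le_sum fun i _ => hw i
      _ = n := by simp
  have hunorm : ‖u‖ ≤ Real.sqrt n := hbd u (by intro i; rw [huapp]; split <;> simp)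
  have hvnorm : ‖v‖ ≤ Real.sqrt n := hbd v (by intro j; rw [hvapp]; split <;> simp)
  have himg : ∀ i, (Matrix.toEuclideanLin (𝕜 := ℝ) A v) i = ∑ j ∈ T, A i j := by
    intro i
    rw [Matrix.toEuclideanLin_apply]
    show (A.mulVec fun j => if j ∈ T then (1:ℝ) else 0) i = ∑ j ∈ T, A i j
    rw [Matrix.mulVec, dotProduct]
    rw [Finset.sum_congr rfl (fun k _ => show A i k * (if k ∈ T then (1:ℝ) else 0)
      = if k ∈ T then A i k else 0 by split <;> simp)]
    rw [Finset.sum_ite_mem Finset.univ T (fun k => A i k), Finset.univ_inter]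
  have hinner : (inner ℝ u (Matrix.toEuclideanLin (𝕜 := ℝ) A v) : ℝ)
      = ∑ p ∈ S ×ˢ T, A p.1 p.2 := by
    have hterm : ∀ i, (inner ℝ (u i) ((Matrix.toEuclideanLin (𝕜 := ℝ) A v) i) : ℝ)
        = if i ∈ S then ∑ j ∈ T, A i j else 0 := by
      intro i
      rw [himg i, RCLike.inner_apply, huapp i]
      split <;> simp
    rw [PiLp.inner_apply, Finset.sum_congr rfl fun i _ => hterm i,
      Finset.sum_ite_mem Finset.univ S _, Finset.univ_inter, Finset.sum_product]
  have hcs : (inner ℝ u (Matrix.toEuclideanLin (𝕜 := ℝ) A v) : ℝ)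
      ≤ ‖u‖ * ‖Matrix.toEuclideanLin (𝕜 := ℝ) A v‖ := real_inner_le_norm u _
  rw [hinner] at hcs
  have h3 : ‖u‖ * ‖Matrix.toEuclideanLin (𝕜 := ℝ) A v‖
      ≤ Real.sqrt n * (l2OpNorm A * Real.sqrt n) := by
    apply mul_le_mul hunorm ((norm_image_le A v).trans ?_) (norm_nonneg _) (Real.sqrt_nonneg _)
    exact mul_le_mul_of_nonneg_left hvnorm (l2OpNorm_nonneg A)
  refine hcs.trans (h3.trans (le_of_eq ?_))
  rw [show Real.sqrt n * (l2OpNorm A * Real.sqrt n) = l2OpNorm A * (Real.sqrt n * Real.sqrt n) by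
    ring, Real.mul_self_sqrt (Nat.cast_nonneg n)]

end NormLemmas

lemma exp_le_one_add_add_sq {x : ℝ} (hx : |x| ≤ 1) : Real.exp x ≤ 1 + x + x ^ 2 := by
  have h := Real.exp_bound hx (n := 2) (by norm_num)
  have hs : ∑ i ∈ Finset.range 2, x ^ i / (Nat.factorial i) = 1 + x := by
    simp [Finset.sum_range_succ]
  rw [hs] at h
  have h2 : Real.exp x - (1 + x) ≤ |x| ^ 2 * ((2:ℕ).succ / ((2:ℕ).factorial * 2)) :=
    (abs_le.1 h).2
  have h3 : ((2:ℕ).succ : ℝ) / (((2:ℕ).factorial : ℝ) * 2) = 3 / 4 := by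
    norm_num [Nat.factorial]
  rw [h3, sq_abs] at h2
  nlinarith [sq_nonneg x]

lemma mgf_le_of_bounded {Ω' : Type*} {m : MeasurableSpace Ω'} {μ : Measure Ω'}
    [IsProbabilityMeasure μ]
    (W : Ω' → ℝ) (hW : Measurable W) (K s : ℝ) (hbd : ∀ ω, |W ω| ≤ K)
    (hmean : ∫ ω, W ω ∂μ = 0) (hsK : |s| * K ≤ 1) :
    mgf W μ s ≤ Real.exp (s ^ 2 * K ^ 2) := by
  have hpt : ∀ ω, Real.exp (s * W ω) ≤ 1 + s * W ω + s ^ 2 * W ω ^ 2 := by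
    intro ω
    have h1 : |s * W ω| ≤ 1 := by
      rw [abs_mul]
      calc |s| * |W ω| ≤ |s| * K := by gcongr; exact hbd ω
        _ ≤ 1 := hsK
    have := exp_le_one_add_add_sq h1
    calc Real.exp (s * W ω) ≤ 1 + s * W ω + (s * W ω) ^ 2 := this
      _ = 1 + s * W ω + s ^ 2 * W ω ^ 2 := by ring
  have hiW : Integrable W μ :=
    Integrable.mono' (integrable_const K) hW.aestronglyMeasurable
      (Filter.Eventually.of_forall fun ω => by rw [Real.norm_eq_abs]; exact hbd ω)
  have hiW2 : Integrable (fun ω => W ω ^ 2) μ :=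
    Integrable.mono' (integrable_const (K ^ 2)) (hW.pow_const 2).aestronglyMeasurable
      (Filter.Eventually.of_forall fun ω => by
        rw [Real.norm_eq_abs, abs_pow, sq_abs, ← sq_abs]
        exact pow_le_pow_left₀ (abs_nonneg _) (hbd ω) 2)
  have hiexp : Integrable (fun ω => Real.exp (s * W ω)) μ :=
    Integrable.mono' (integrable_const (Real.exp (|s| * K)))
      ((hW.const_mul s).exp).aestronglyMeasurable
      (Filter.Eventually.of_forall fun ω => by
        rw [Real.norm_eq_abs, Real.abs_exp]
        apply Real.exp_le_exp.2
        calc s * W ω ≤ |s * W ω| := le_abs_self _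
          _ = |s| * |W ω| := abs_mul _ _
          _ ≤ |s| * K := by gcongr; exact hbd ω)
  have hW2K : ∫ ω, W ω ^ 2 ∂μ ≤ K ^ 2 := by
    calc ∫ ω, W ω ^ 2 ∂μ ≤ ∫ _ω, K ^ 2 ∂μ := by
          apply integral_mono hiW2 (integrable_const _)
          intro ω
          calc W ω ^ 2 = |W ω| ^ 2 := (sq_abs _).symm
            _ ≤ K ^ 2 := pow_le_pow_left₀ (abs_nonneg _) (hbd ω) 2
      _ = K ^ 2 := by simp
  have key : mgf W μ s ≤ 1 + s ^ 2 * ∫ ω, W ω ^ 2 ∂μ := by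
    have h1 : mgf W μ s ≤ ∫ ω, (1 + s * W ω + s ^ 2 * W ω ^ 2) ∂μ := by
      apply integral_mono hiexp _ hpt
      exact (((integrable_const 1).add (hiW.const_mul s)).add (hiW2.const_mul (s ^ 2)))
    have e1 : ∫ ω, (1 + s * W ω + s ^ 2 * W ω ^ 2) ∂μ
        = (∫ ω, (1 + s * W ω) ∂μ) + ∫ ω, s ^ 2 * W ω ^ 2 ∂μ :=
      integral_add ((integrable_const 1).add (hiW.const_mul s)) (hiW2.const_mul (s ^ 2))
    have e2 : ∫ ω, (1 + s * W ω) ∂μ = (∫ _ω, (1:ℝ) ∂μ) + ∫ ω, s * W ω ∂μ :=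
      integral_add (integrable_const 1) (hiW.const_mul s)
    have h2 : ∫ ω, (1 + s * W ω + s ^ 2 * W ω ^ 2) ∂μ = 1 + s ^ 2 * ∫ ω, W ω ^ 2 ∂μ := by
      rw [e1, e2, integral_const_mul, integral_const_mul, hmean]
      simp
    rw [h2] at h1
    exact h1
  calc mgf W μ s ≤ 1 + s ^ 2 * ∫ ω, W ω ^ 2 ∂μ := key
    _ ≤ 1 + s ^ 2 * K ^ 2 := by gcongr
    _ ≤ Real.exp (s ^ 2 * K ^ 2) := by
        have := Real.add_one_le_exp (s ^ 2 * K ^ 2)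
        linarith

section Helpers

variable {Ω' : Type} [MeasureSpace Ω'] [IsProbabilityMeasure (ℙ : Measure Ω')]

lemma summable_four_pow_exp {c : ℝ} (hc : 0 < c) :
    Summable (fun n : ℕ => (4:ℝ) ^ n * Real.exp (-(c * n ^ 2))) := by
  set N : ℕ := ⌈Real.log 8 / c⌉₊ with hN
  have hNlog : Real.log 8 ≤ c * N := by
    rw [mul_comm, ← div_le_iff₀ hc]
    exact Nat.le_ceil _
  rw [← summable_nat_add_iff N]
  have hgsum : Summable (fun n : ℕ => (1/2:ℝ) ^ (n + N)) := by
    have heq : (fun n : ℕ => (1/2:ℝ) ^ (n + N)) = fun n => ((1/2:ℝ) ^ N) * (1/2) ^ n := by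
      funext n; rw [pow_add]; ring
    rw [heq]
    exact (summable_geometric_of_lt_one (by norm_num) (by norm_num)).mul_left _
  refine Summable.of_nonneg_of_le (fun n => by positivity) (fun n => ?_) hgsum
  · 
    set m : ℕ := n + N with hm
    have hmN : (N:ℝ) ≤ m := by
      exact_mod_cast Nat.le_add_left N n
    have h4 : (4:ℝ) ^ m = Real.exp (m * Real.log 4) := by
      rw [Real.exp_nat_mul, Real.exp_log]; norm_num
    have h2 : ((1:ℝ)/2) ^ m = Real.exp (m * Real.log (1/2)) := by
      rw [Real.exp_nat_mul, Real.exp_log]; norm_num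
    rw [h4, h2, ← Real.exp_add]
    apply Real.exp_le_exp.2
    have hlog8 : Real.log 4 - Real.log (1/2) = Real.log 8 := by
      rw [← Real.log_div (by norm_num) (by norm_num)]
      norm_num
    have hcm : Real.log 8 ≤ c * m := hNlog.trans (by
      apply mul_le_mul_of_nonneg_left hmN hc.le)
    have hm0 : (0:ℝ) ≤ m := Nat.cast_nonneg _
    nlinarith [mul_le_mul_of_nonneg_left hcm hm0]

lemma trunc_measurable (M : ℝ) : Measurable (fun x : ℝ => max (-M) (min x M)) :=
  measurable_const.max (measurable_id.min measurable_const)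

lemma abs_trunc_le {M : ℝ} (hM : 0 ≤ M) (x : ℝ) : |max (-M) (min x M)| ≤ M := by
  apply abs_le.2
  constructor
  · exact le_max_left _ _
  · exact max_le (by linarith) (min_le_right _ _)

lemma abs_sub_trunc_le {M : ℝ} (hM : 0 ≤ M) (x : ℝ) :
    |x - max (-M) (min x M)| ≤ |x| := by
  rcases le_total 0 x with hx | hx
  · have hmin : min x M ≤ x := min_le_left _ _
    have hmin0 : 0 ≤ min x M := le_min hx hM
    have heq : max (-M) (min x M) = min x M := max_eq_right (by linarith)
    rw [heq, abs_of_nonneg (by linarith), abs_of_nonneg hx]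
    linarith
  · have hminx : min x M = x := min_eq_left (by linarith)
    rw [hminx]
    have h1 : x ≤ max (-M) x := le_max_right _ _
    have h2 : max (-M) x ≤ 0 := max_le (by linarith) hx
    rw [abs_of_nonpos (by linarith), abs_of_nonpos hx]
    linarith

lemma trunc_eq_self {M x : ℝ} (h : |x| ≤ M) : max (-M) (min x M) = x := by
  have h1 := abs_le.1 h
  rw [min_eq_left h1.2, max_eq_right h1.1]

lemma integrable_sq_of_lintegral_ne_top (X : Ω' → ℝ) (hX : Measurable X)
    (h : ∫⁻ ω, (‖X ω‖₊ : ℝ≥0∞) ^ 2 ∂ℙ ≠ ⊤) : Integrable (fun ω => X ω ^ 2) ℙ := by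
  refine ⟨(hX.pow_const 2).aestronglyMeasurable, ?_⟩
  show (∫⁻ ω, (‖X ω ^ 2‖₊ : ℝ≥0∞) ∂ℙ) < ⊤
  have heq : ∀ ω : Ω', (‖X ω ^ 2‖₊ : ℝ≥0∞) = (‖X ω‖₊ : ℝ≥0∞) ^ 2 := by
    intro ω
    rw [← ENNReal.coe_pow]
    norm_cast
    exact nnnorm_pow _ _
  simp_rw [heq]
  exact lt_top_iff_ne_top.2 h

lemma exists_good_trunc (X : Ω' → ℝ) (hX : Measurable X) (hint : Integrable X ℙ)
    {η : ℝ} (hη : 0 < η) :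
    ∃ M : ℝ, 1 ≤ M ∧ ∫ ω, |X ω - max (-M) (min (X ω) M)| ∂ℙ ≤ η := by
  have hFmeas : ∀ m : ℕ, AEStronglyMeasurable
      (fun ω => |X ω - max (-(m:ℝ)) (min (X ω) m)|) (ℙ : Measure Ω') := fun m =>
    ((hX.sub ((trunc_measurable (m:ℝ)).comp hX)).abs).aestronglyMeasurable
  have h := tendsto_integral_filter_of_dominated_convergence (μ := (ℙ : Measure Ω'))
    (F := fun (m : ℕ) ω => |X ω - max (-(m:ℝ)) (min (X ω) m)|)
    (f := fun _ => (0:ℝ)) (bound := fun ω => |X ω|)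
    (Filter.Eventually.of_forall hFmeas)
    (Filter.Eventually.of_forall fun m => Filter.Eventually.of_forall fun ω => by
      rw [Real.norm_eq_abs, abs_abs]
      exact abs_sub_trunc_le (Nat.cast_nonneg m) _)
    hint.abs
    (Filter.Eventually.of_forall fun ω => by
      apply tendsto_const_nhds.congr'
      filter_upwards [Filter.eventually_ge_atTop ⌈|X ω|⌉₊] with m hm
      rw [trunc_eq_self (le_trans (Nat.le_ceil _) (by exact_mod_cast hm)), sub_self, abs_zero])
  rw [integral_zero] at h
  have h2 := (h.eventually (gt_mem_nhds hη)).and (Filter.eventually_ge_atTop 1)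
  obtain ⟨m, hm1, hm2⟩ := h2.exists
  exact ⟨(m:ℝ), by exact_mod_cast hm2, hm1.le⟩

lemma exists_trunc_sq (X : Ω' → ℝ) (hX : Measurable X)
    (hsq : ∫⁻ ω, (‖X ω‖₊ : ℝ≥0∞) ^ 2 ∂ℙ = ⊤) (K : ℝ) :
    ∃ M : ℝ, 1 ≤ M ∧ K ≤ ∫ ω, min (X ω ^ 2) M ∂ℙ := by
  set F : ℕ → Ω' → ℝ≥0∞ := fun m ω => ENNReal.ofReal (min (X ω ^ 2) m) with hF
  have hFmeas : ∀ m, Measurable (F m) := fun m =>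
    ((hX.pow_const 2).min measurable_const).ennreal_ofReal
  have hFmono : Monotone F := by
    intro a b hab ω
    apply ENNReal.ofReal_le_ofReal
    exact min_le_min le_rfl (by exact_mod_cast hab)
  have hsup : ∀ ω, (⨆ m, F m ω) = (‖X ω‖₊ : ℝ≥0∞) ^ 2 := by
    intro ω
    have hx2 : (‖X ω‖₊ : ℝ≥0∞) ^ 2 = ENNReal.ofReal (X ω ^ 2) := by
      rw [← enorm_eq_nnnorm, Real.enorm_eq_ofReal_abs, ← ENNReal.ofReal_pow (abs_nonneg _), sq_abs]
    rw [hx2]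
    apply le_antisymm
    · exact iSup_le fun m => ENNReal.ofReal_le_ofReal (min_le_left _ _)
    · refine le_iSup_of_le ⌈X ω ^ 2⌉₊ ?_
      rw [hF]
      simp only []
      rw [min_eq_left (Nat.le_ceil _)]
  have hlim : (⨆ m, ∫⁻ ω, F m ω ∂ℙ) = ⊤ := by
    rw [← lintegral_iSup hFmeas hFmono]
    rw [← hsq]
    congr 1
    ext ω
    exact hsup ω
  have hlt : ENNReal.ofReal (max K 0) < ⨆ m, ∫⁻ ω, F m ω ∂ℙ := by
    rw [hlim]; exact ENNReal.ofReal_lt_top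
  obtain ⟨m, hm⟩ := lt_iSup_iff.1 hlt
  have hfin : ∫⁻ ω, F m ω ∂ℙ ≤ ENNReal.ofReal (m:ℝ) := by
    calc ∫⁻ ω, F m ω ∂ℙ ≤ ∫⁻ _ω, ENNReal.ofReal (m:ℝ) ∂ℙ := by
          apply lintegral_mono
          intro ω
          exact ENNReal.ofReal_le_ofReal (min_le_right _ _)
      _ = ENNReal.ofReal (m:ℝ) := by simp
  have hint : ∫ ω, min (X ω ^ 2) ((m:ℕ):ℝ) ∂ℙ = (∫⁻ ω, F m ω ∂ℙ).toReal := by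
    rw [integral_eq_lintegral_of_nonneg_ae
      (Filter.Eventually.of_forall fun ω => le_min (sq_nonneg _) (Nat.cast_nonneg _))
      ((hX.pow_const 2).min measurable_const).aestronglyMeasurable]
  refine ⟨max (m:ℝ) 1, le_max_right _ _, ?_⟩
  have hKm : K ≤ ∫ ω, min (X ω ^ 2) ((m:ℕ):ℝ) ∂ℙ := by
    rw [hint]
    calc K ≤ max K 0 := le_max_left _ _
      _ = (ENNReal.ofReal (max K 0)).toReal := by rw [ENNReal.toReal_ofReal (le_max_right _ _)]
      _ ≤ (∫⁻ ω, F m ω ∂ℙ).toReal := by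
          apply ENNReal.toReal_mono (ne_top_of_le_ne_top ENNReal.ofReal_ne_top hfin) hm.le
  refine hKm.trans ?_
  apply integral_mono
  · exact Integrable.mono' (integrable_const ((m:ℕ):ℝ))
      ((hX.pow_const 2).min measurable_const).aestronglyMeasurable
      (Filter.Eventually.of_forall fun ω => by
        rw [Real.norm_eq_abs, abs_of_nonneg (le_min (sq_nonneg _) (Nat.cast_nonneg _))]
        exact min_le_right _ _)
  · exact Integrable.mono' (integrable_const (max (m:ℝ) 1))
      ((hX.pow_const 2).min measurable_const).aestronglyMeasurable
      (Filter.Eventually.of_forall fun ω => by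
        rw [Real.norm_eq_abs, abs_of_nonneg (le_min (sq_nonneg _)
          (le_trans (by norm_num) (le_max_right (m:ℝ) 1)))]
        exact min_le_right _ _)
  · intro ω
    exact min_le_min le_rfl (le_max_left _ _)

end Helpers

lemma minor_union_bound {Ω : Type} [MeasureSpace Ω] [IsProbabilityMeasure (ℙ : Measure Ω)]
    {Ω' : Type} [MeasureSpace Ω'] [IsProbabilityMeasure (ℙ : Measure Ω')]
    (X : Ω' → ℝ) (hX : Measurable X)
    (n : ℕ) (A : Ω → Matrix (Fin n) (Fin n) ℝ)
    (hmeas : ∀ i j, Measurable fun ω => A ω i j)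
    (hindep : iIndepFun
      (fun p : Fin n × Fin n => fun ω => A ω p.1 p.2) ℙ)
    (hident : ∀ i j, IdentDistrib (fun ω => A ω i j) X ℙ ℙ)
    (g : ℝ → ℝ) (hg : Measurable g) (K : ℝ) (hbd : ∀ x, |g x| ≤ K)
    (θ s₀ : ℝ) (hθ : 0 < θ) (hs₀ : 0 < s₀) (hs₀K : s₀ * (2 * K) ≤ 1) :
    ℙ (⋃ S : Finset (Fin n), ⋃ T : Finset (Fin n),
      {ω | ∑ p ∈ S ×ˢ T, g (A ω p.1 p.2)
        ≤ (S.card : ℝ) * T.card * (∫ x, g (X x) ∂ℙ) - θ * n ^ 2})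
      ≤ ENNReal.ofReal ((4:ℝ) ^ n *
        Real.exp (-(s₀ * θ * n ^ 2) + 4 * s₀ ^ 2 * K ^ 2 * n ^ 2)) := by
  classical
  have hK0 : 0 ≤ K := le_trans (abs_nonneg _) (hbd 0)
  set v : ℝ := ∫ x, g (X x) ∂ℙ with hv
  set W : Fin n × Fin n → Ω → ℝ := fun p ω => g (A ω p.1 p.2) - v with hW
  set β : ℝ := Real.exp (-(s₀ * θ * n ^ 2) + 4 * s₀ ^ 2 * K ^ 2 * n ^ 2) with hβ
  have hWmeas : ∀ p : Fin n × Fin n, Measurable (W p) := fun p =>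
    (hg.comp (hmeas p.1 p.2)).sub measurable_const
  have hWindep : iIndepFun W ℙ :=
    hindep.comp (fun _ => fun x : ℝ => g x - v) (fun _ => hg.sub measurable_const)
  set W0 : Ω' → ℝ := fun ω' => g (X ω') - v with hW0
  have hW0meas : Measurable W0 := (hg.comp hX).sub measurable_const
  have higX : Integrable (fun ω' => g (X ω')) ℙ :=
    Integrable.mono' (integrable_const K) (hg.comp hX).aestronglyMeasurable
      (Filter.Eventually.of_forall fun ω => by rw [Real.norm_eq_abs]; exact hbd _)
  have hvK : |v| ≤ K := by
    rw [hv]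
    have := norm_integral_le_of_norm_le_const
      (μ := (ℙ : Measure Ω')) (f := fun x => g (X x)) (C := K)
      (Filter.Eventually.of_forall fun ω => by rw [Real.norm_eq_abs]; exact hbd _)
    simpa using this
  have hW0mean : ∫ ω', W0 ω' ∂ℙ = 0 := by
    rw [hW0]
    rw [integral_sub higX (integrable_const v)]
    simp [hv]
  have hW0bd : ∀ ω', |W0 ω'| ≤ 2 * K := by
    intro ω'
    calc |W0 ω'| ≤ |g (X ω')| + |v| := abs_sub _ _
      _ ≤ K + K := add_le_add (hbd _) hvK
      _ = 2 * K := by ring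
  have hmgfW0 : mgf W0 ℙ (-s₀) ≤ Real.exp (4 * s₀ ^ 2 * K ^ 2) := by
    have h := mgf_le_of_bounded W0 hW0meas (2 * K) (-s₀) hW0bd hW0mean
      (by rw [abs_neg, abs_of_pos hs₀]; exact hs₀K)
    calc mgf W0 ℙ (-s₀) ≤ Real.exp ((-s₀) ^ 2 * (2 * K) ^ 2) := h
      _ = Real.exp (4 * s₀ ^ 2 * K ^ 2) := by ring_nf
  have hWident : ∀ p : Fin n × Fin n, IdentDistrib (W p) W0 ℙ ℙ := fun p =>
    (hident p.1 p.2).comp (hg.sub measurable_const)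
  have hmgfW : ∀ p : Fin n × Fin n, mgf (W p) ℙ (-s₀) = mgf W0 ℙ (-s₀) := by
    intro p
    have h := ((hWident p).comp (measurable_id.const_mul (-s₀)).exp).integral_eq
    exact h
  have hexpint : ∀ p : Fin n × Fin n, Integrable (fun ω => Real.exp (-s₀ * W p ω)) ℙ := by
    intro p
    refine Integrable.mono' (integrable_const (Real.exp (s₀ * (2 * K))))
      (((hWmeas p).const_mul (-s₀)).exp).aestronglyMeasurable
      (Filter.Eventually.of_forall fun ω => ?_)
    rw [Real.norm_eq_abs, Real.abs_exp]
    apply Real.exp_le_exp.2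
    have hWb : |W p ω| ≤ 2 * K := by
      calc |W p ω| ≤ |g (A ω p.1 p.2)| + |v| := abs_sub _ _
        _ ≤ K + K := add_le_add (hbd _) hvK
        _ = 2 * K := by ring
    calc -s₀ * W p ω ≤ |(-s₀) * W p ω| := le_abs_self _
      _ = s₀ * |W p ω| := by rw [abs_mul, abs_neg, abs_of_pos hs₀]
      _ ≤ s₀ * (2 * K) := by gcongr
  have hpair : ∀ S T : Finset (Fin n),
      ℙ {ω | ∑ p ∈ S ×ˢ T, g (A ω p.1 p.2) ≤ (S.card : ℝ) * T.card * v - θ * n ^ 2}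
        ≤ ENNReal.ofReal β := by
    intro S T
    have hset : {ω | ∑ p ∈ S ×ˢ T, g (A ω p.1 p.2) ≤ (S.card : ℝ) * T.card * v - θ * n ^ 2}
        = {ω | (∑ p ∈ S ×ˢ T, W p) ω ≤ -(θ * n ^ 2)} := by
      ext ω
      simp only [Set.mem_setOf_eq, Finset.sum_apply]
      have hsum : ∑ p ∈ S ×ˢ T, W p ω
          = (∑ p ∈ S ×ˢ T, g (A ω p.1 p.2)) - (S.card : ℝ) * T.card * v := by
        rw [hW]
        rw [Finset.sum_sub_distrib, Finset.sum_const, Finset.card_product, nsmul_eq_mul]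
        push_cast
        ring
      rw [hsum]
      constructor <;> intro h <;> linarith
    rw [hset]
    have hintsum : Integrable (fun ω => Real.exp (-s₀ * (∑ p ∈ S ×ˢ T, W p) ω)) ℙ :=
      iIndepFun.integrable_exp_mul_sum hWindep hWmeas (fun p _ => hexpint p)
    have hchern := measure_le_le_exp_mul_mgf (μ := (ℙ : Measure Ω))
      (X := ∑ p ∈ S ×ˢ T, W p) (-(θ * n ^ 2)) (t := -s₀) (by linarith) hintsum
    have hmgfsum : mgf (∑ p ∈ S ×ˢ T, W p) ℙ (-s₀) = ∏ p ∈ S ×ˢ T, mgf (W p) ℙ (-s₀) :=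
      hWindep.mgf_sum hWmeas (S ×ˢ T)
    have hprod : ∏ p ∈ S ×ˢ T, mgf (W p) ℙ (-s₀)
        ≤ Real.exp (4 * s₀ ^ 2 * K ^ 2 * n ^ 2) := by
      rw [Finset.prod_congr rfl fun p _ => hmgfW p, Finset.prod_const]
      calc mgf W0 ℙ (-s₀) ^ (S ×ˢ T).card
          ≤ Real.exp (4 * s₀ ^ 2 * K ^ 2) ^ (S ×ˢ T).card :=
            pow_le_pow_left₀ mgf_nonneg hmgfW0 _
        _ = Real.exp (4 * s₀ ^ 2 * K ^ 2 * (S ×ˢ T).card) := by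
            rw [← Real.exp_nat_mul]; ring_nf
        _ ≤ Real.exp (4 * s₀ ^ 2 * K ^ 2 * n ^ 2) := by
            apply Real.exp_le_exp.2
            have hcard : ((S ×ˢ T).card : ℝ) ≤ (n : ℝ) ^ 2 := by
              rw [Finset.card_product]
              push_cast
              calc (S.card : ℝ) * T.card ≤ n * n := by
                    apply mul_le_mul _ _ (Nat.cast_nonneg _) (Nat.cast_nonneg _) <;>
                      exact_mod_cast Finset.card_le_card (Finset.subset_univ _) |>.trans
                        (le_of_eq (Finset.card_univ.trans (Fintype.card_fin n)))
                _ = (n:ℝ) ^ 2 := by ring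
            exact mul_le_mul_of_nonneg_left hcard (by positivity)
      -- end
    have htoreal : (ℙ {ω | (∑ p ∈ S ×ˢ T, W p) ω ≤ -(θ * n ^ 2)}).toReal ≤ β := by
      calc (ℙ {ω | (∑ p ∈ S ×ˢ T, W p) ω ≤ -(θ * n ^ 2)}).toReal
          ≤ Real.exp (-(-s₀) * -(θ * n ^ 2)) * mgf (∑ p ∈ S ×ˢ T, W p) ℙ (-s₀) := hchern
        _ ≤ Real.exp (-(s₀ * θ * n ^ 2)) * Real.exp (4 * s₀ ^ 2 * K ^ 2 * n ^ 2) := by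
            rw [show -(-s₀) * -(θ * n ^ 2) = -(s₀ * θ * n ^ 2) by ring]
            apply mul_le_mul_of_nonneg_left _ (Real.exp_nonneg _)
            rw [hmgfsum]
            exact hprod
        _ = β := by rw [hβ, ← Real.exp_add]
    rw [← ENNReal.ofReal_toReal (measure_ne_top _ _)]
    exact ENNReal.ofReal_le_ofReal htoreal
  calc ℙ (⋃ S : Finset (Fin n), ⋃ T : Finset (Fin n),
        {ω | ∑ p ∈ S ×ˢ T, g (A ω p.1 p.2) ≤ (S.card : ℝ) * T.card * v - θ * n ^ 2})
      ≤ ∑ S : Finset (Fin n), ℙ (⋃ T : Finset (Fin n),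
        {ω | ∑ p ∈ S ×ˢ T, g (A ω p.1 p.2) ≤ (S.card : ℝ) * T.card * v - θ * n ^ 2}) :=
        measure_iUnion_fintype_le _ _
    _ ≤ ∑ _S : Finset (Fin n), ∑ _T : Finset (Fin n), ENNReal.ofReal β := by
        apply Finset.sum_le_sum
        intro S _
        exact (measure_iUnion_fintype_le _ _).trans (Finset.sum_le_sum fun T _ => hpair S T)
    _ = ((2 ^ n * 2 ^ n : ℕ) : ℝ≥0∞) * ENNReal.ofReal β := by
        rw [Finset.sum_const, Finset.sum_const, Finset.card_univ, Fintype.card_finset,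
          Fintype.card_fin, nsmul_eq_mul, nsmul_eq_mul, ← mul_assoc]
        push_cast
        ring
    _ = ENNReal.ofReal ((4:ℝ) ^ n * β) := by
        rw [show ((2 ^ n * 2 ^ n : ℕ) : ℝ≥0∞) = ENNReal.ofReal ((2 ^ n * 2 ^ n : ℕ) : ℝ) by
          rw [ENNReal.ofReal_natCast]]
        rw [← ENNReal.ofReal_mul (by positivity)]
        congr 1
        have h4 : (4:ℝ) ^ n = 2 ^ n * 2 ^ n := by
          rw [show (4:ℝ) = 2 * 2 by norm_num, mul_pow]
        rw [h4]
        push_cast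
        ring

section Key

variable {Ω' : Type} [MeasureSpace Ω'] [IsProbabilityMeasure (ℙ : Measure Ω')]
variable {Ω : Type} [MeasureSpace Ω] [IsProbabilityMeasure (ℙ : Measure Ω)]

lemma compl_card_bound {n : ℕ} {ε : ℝ} {I : Finset (Fin n)} (hI : (I.card : ℝ) ≤ ε * n) :
    (1 - ε) * n ≤ ((Iᶜ : Finset (Fin n)).card : ℝ) := by
  have h1 : (Iᶜ : Finset (Fin n)).card = n - I.card := by
    rw [Finset.card_compl, Fintype.card_fin]
  have h2 : I.card ≤ n := by
    calc I.card ≤ (Finset.univ : Finset (Fin n)).card := Finset.card_le_card (Finset.subset_univ _)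
      _ = n := by rw [Finset.card_univ, Fintype.card_fin]
  rw [h1, Nat.cast_sub h2]
  have : (I.card : ℝ) ≤ ε * n := hI
  linarith

/-- choose s₀ for the exponent bargain -/
lemma exponent_choice {M θ : ℝ} (hM : 1 ≤ M) (hθ : 0 < θ) :
    ∃ s₀ : ℝ, 0 < s₀ ∧ s₀ * (2 * M) ≤ 1 ∧ 4 * s₀ ^ 2 * M ^ 2 ≤ s₀ * θ / 2 := by
  have hM0 : 0 < M := by linarith
  refine ⟨min (1 / (2 * M)) (θ / (8 * M ^ 2)), ?_, ?_, ?_⟩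
  · apply lt_min (by positivity) (by positivity)
  · have h := min_le_left (1 / (2 * M)) (θ / (8 * M ^ 2))
    calc min (1 / (2 * M)) (θ / (8 * M ^ 2)) * (2 * M) ≤ (1 / (2 * M)) * (2 * M) := by
          apply mul_le_mul_of_nonneg_right h (by positivity)
      _ = 1 := by field_simp
  · set s₀ := min (1 / (2 * M)) (θ / (8 * M ^ 2)) with hs₀
    have hs₀pos : 0 < s₀ := lt_min (by positivity) (by positivity)
    have h2 : s₀ ≤ θ / (8 * M ^ 2) := min_le_right _ _
    have h3 : 4 * s₀ * M ^ 2 * s₀ ≤ 4 * s₀ * M ^ 2 * (θ / (8 * M ^ 2)) :=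
      mul_le_mul_of_nonneg_left h2 (by positivity)
    have h4 : 4 * s₀ * M ^ 2 * (θ / (8 * M ^ 2)) = s₀ * θ / 2 := by
      field_simp
      ring
    calc 4 * s₀ ^ 2 * M ^ 2 = 4 * s₀ * M ^ 2 * s₀ := by ring
      _ ≤ s₀ * θ / 2 := by rw [← h4]; exact h3

lemma keyA (X : Ω' → ℝ) (hX : Measurable X)
    (hsq : ∫⁻ ω, (‖X ω‖₊ : ℝ≥0∞) ^ 2 ∂ℙ = ⊤)
    (ε : ℝ) (hε0 : 0 < ε) (hε1 : ε < 1)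
    (A : (n : ℕ) → Ω → Matrix (Fin n) (Fin n) ℝ)
    (hmeas : ∀ n i j, Measurable fun ω => A n ω i j)
    (hindep : ∀ n, iIndepFun
      (fun p : Fin n × Fin n => fun ω => A n ω p.1 p.2) ℙ)
    (hident : ∀ n i j, IdentDistrib (fun ω => A n ω i j) X ℙ ℙ)
    (C : ℝ) (hC : 0 < C) :
    ∃ E : ℕ → Set Ω, (∑' n, ℙ (E n)) ≠ ⊤ ∧ ∀ᶠ (n : ℕ) in Filter.atTop, ∀ ω, ω ∉ E n →
      ∀ (B : Matrix (Fin n) (Fin n) ℝ) (I J : Finset (Fin n)),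
        (I.card : ℝ) ≤ ε * n → (J.card : ℝ) ≤ ε * n →
        (∀ i j, (i ∉ I ∨ j ∉ J) → B i j = A n ω i j) →
        C ≤ l2OpNorm B / Real.sqrt n := by
  classical
  have h1ε : 0 < 1 - ε := by linarith
  obtain ⟨M, hM1, hMv⟩ := exists_trunc_sq X hX hsq (2 * C ^ 2 / (1 - ε) ^ 2)
  have hM0 : 0 < M := by linarith
  set g : ℝ → ℝ := fun x => min (x ^ 2) M with hgdef
  have hg : Measurable g := (measurable_id.pow_const 2).min measurable_const
  have hg0 : ∀ x, 0 ≤ g x := fun x => le_min (sq_nonneg _) hM0.le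
  have hgbd : ∀ x, |g x| ≤ M := fun x => by
    rw [abs_of_nonneg (hg0 x)]; exact min_le_right _ _
  have hgsq : ∀ x, g x ≤ x ^ 2 := fun x => min_le_left _ _
  set v : ℝ := ∫ ω, g (X ω) ∂ℙ with hvdef
  have hv : 2 * C ^ 2 / (1 - ε) ^ 2 ≤ v := hMv
  have hv0 : 0 < v := lt_of_lt_of_le (by positivity) hv
  set θ : ℝ := (1 - ε) ^ 2 * v / 2 with hθdef
  have hθ : 0 < θ := by positivity
  obtain ⟨s₀, hs₀pos, hs₀M, hs₀exp⟩ := exponent_choice hM1 hθ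
  set c : ℝ := s₀ * θ / 2 with hcdef
  have hc : 0 < c := by positivity
  set E : ℕ → Set Ω := fun n => ⋃ S : Finset (Fin n), ⋃ T : Finset (Fin n),
    {ω | ∑ p ∈ S ×ˢ T, g (A n ω p.1 p.2)
      ≤ (S.card : ℝ) * T.card * v - θ * n ^ 2} with hEdef
  have hEbound : ∀ n, ℙ (E n) ≤ ENNReal.ofReal ((4:ℝ) ^ n * Real.exp (-(c * n ^ 2))) := by
    intro n
    refine le_trans (minor_union_bound X hX n (A n) (hmeas n) (hindep n) (hident n)
      g hg M hgbd θ s₀ hθ hs₀pos hs₀M) ?_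
    apply ENNReal.ofReal_le_ofReal
    apply mul_le_mul_of_nonneg_left _ (by positivity)
    apply Real.exp_le_exp.2
    have hn2 : (0:ℝ) ≤ (n:ℝ) ^ 2 := by positivity
    nlinarith [mul_le_mul_of_nonneg_right hs₀exp hn2]
  refine ⟨E, ?_, ?_⟩
  · have hsumm := summable_four_pow_exp hc
    have h2 := ENNReal.tsum_le_tsum hEbound
    refine ne_top_of_le_ne_top ?_ h2
    rw [← ENNReal.ofReal_tsum_of_nonneg (fun n => by positivity) hsumm]
    exact ENNReal.ofReal_ne_top
  · filter_upwards [Filter.eventually_ge_atTop 1] with n hn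
    intro ω hω B I J hI hJ hB
    have hn0 : (0:ℝ) < n := by exact_mod_cast hn
    have hgood : ∀ S T : Finset (Fin n),
        (S.card : ℝ) * T.card * v - θ * n ^ 2 < ∑ p ∈ S ×ˢ T, g (A n ω p.1 p.2) := by
      intro S T
      by_contra h
      push_neg at h
      exact hω (Set.mem_iUnion.2 ⟨S, Set.mem_iUnion.2 ⟨T, h⟩⟩)
    set S := Iᶜ with hSdef
    set T := Jᶜ with hTdef
    have hS : (1 - ε) * n ≤ (S.card : ℝ) := compl_card_bound hI
    have hT : (1 - ε) * n ≤ (T.card : ℝ) := compl_card_bound hJ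
    have hSn0 : (0:ℝ) ≤ (1 - ε) * n := by positivity
    have hST : (1 - ε) ^ 2 * (n:ℝ) ^ 2 * v ≤ (S.card : ℝ) * T.card * v := by
      apply mul_le_mul_of_nonneg_right _ hv0.le
      calc (1 - ε) ^ 2 * (n:ℝ) ^ 2 = ((1 - ε) * n) * ((1 - ε) * n) := by ring
        _ ≤ (S.card : ℝ) * T.card := mul_le_mul hS hT hSn0 (Nat.cast_nonneg _)
    have key1 : θ * n ^ 2 ≤ ∑ p ∈ S ×ˢ T, g (A n ω p.1 p.2) := by
      have h := hgood S T
      have : (1 - ε) ^ 2 * (n:ℝ) ^ 2 * v = 2 * θ * n ^ 2 := by rw [hθdef]; ring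
      nlinarith
    have key2 : ∑ p ∈ S ×ˢ T, g (A n ω p.1 p.2) ≤ ∑ p ∈ S ×ˢ T, (B p.1 p.2) ^ 2 := by
      apply Finset.sum_le_sum
      intro p hp
      rw [Finset.mem_product] at hp
      have hBp : B p.1 p.2 = A n ω p.1 p.2 :=
        hB p.1 p.2 (Or.inl (Finset.mem_compl.1 hp.1))
      rw [hBp]
      exact hgsq _
    have key3 : ∑ p ∈ S ×ˢ T, (B p.1 p.2) ^ 2 ≤ n * (l2OpNorm B) ^ 2 := minor_sq_sum_le B S T
    have hθC : C ^ 2 ≤ θ := by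
      have h2 := (div_le_iff₀ (by positivity : (0:ℝ) < (1 - ε) ^ 2)).1 hv
      have hcomm : v * (1 - ε) ^ 2 = (1 - ε) ^ 2 * v := mul_comm _ _
      rw [hθdef]
      linarith
    have hBn : C ^ 2 * (n:ℝ) ^ 2 ≤ (n:ℝ) * (l2OpNorm B) ^ 2 :=
      le_trans (mul_le_mul_of_nonneg_right hθC (by positivity))
        (le_trans key1 (le_trans key2 key3))
    have hB2 : C ^ 2 * n ≤ (l2OpNorm B) ^ 2 := by
      have h3 : (n:ℝ) * (C ^ 2 * n) ≤ (n:ℝ) * (l2OpNorm B) ^ 2 := by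
        calc (n:ℝ) * (C ^ 2 * n) = C ^ 2 * (n:ℝ) ^ 2 := by ring
          _ ≤ (n:ℝ) * (l2OpNorm B) ^ 2 := hBn
      exact le_of_mul_le_mul_left h3 hn0
    have hsqrtn : C * Real.sqrt n ≤ l2OpNorm B := by
      have h1 : (C * Real.sqrt n) ^ 2 ≤ (l2OpNorm B) ^ 2 := by
        rw [mul_pow, Real.sq_sqrt hn0.le]
        exact hB2
      calc C * Real.sqrt n = Real.sqrt ((C * Real.sqrt n) ^ 2) :=
            (Real.sqrt_sq (by positivity)).symm
        _ ≤ Real.sqrt ((l2OpNorm B) ^ 2) := Real.sqrt_le_sqrt h1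
        _ = l2OpNorm B := Real.sqrt_sq (l2OpNorm_nonneg B)
    rw [le_div_iff₀ (Real.sqrt_pos.2 hn0)]
    exact hsqrtn

end Key

lemma arith_lemma (ε μ₀ nreal : ℝ) (h1ε : 0 < 1 - ε) (hε2le1 : (1 - ε) ^ 2 ≤ 1)
    (hm : 0 ≤ μ₀) (hn2 : 0 ≤ nreal ^ 2) :
    (1 - ε) ^ 2 * μ₀ / 2 * nreal ^ 2
      ≤ ((1 - ε) ^ 2 * nreal ^ 2 * (μ₀ - (1 - ε) ^ 2 * μ₀ / 8)
          - (1 - ε) ^ 2 * μ₀ / 8 * nreal ^ 2)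
        + (-(2 * ((1 - ε) ^ 2 * μ₀ / 8) * nreal ^ 2)) := by
  nlinarith [mul_nonneg (mul_nonneg (mul_nonneg (sq_nonneg (1 - ε))
    (by linarith : (0:ℝ) ≤ 1 - (1 - ε) ^ 2)) hm) hn2]

section KeyB

variable {Ω' : Type} [MeasureSpace Ω'] [IsProbabilityMeasure (ℙ : Measure Ω')]
variable {Ω : Type} [MeasureSpace Ω] [IsProbabilityMeasure (ℙ : Measure Ω)]

lemma keyB (X : Ω' → ℝ) (hX : Measurable X)
    (hint : Integrable X ℙ) (hpos : 0 < ∫ ω, X ω ∂ℙ)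
    (hsqfin : ∫⁻ ω, (‖X ω‖₊ : ℝ≥0∞) ^ 2 ∂ℙ ≠ ⊤)
    (ε : ℝ) (hε0 : 0 < ε) (hε1 : ε < 1)
    (A : (n : ℕ) → Ω → Matrix (Fin n) (Fin n) ℝ)
    (hmeas : ∀ n i j, Measurable fun ω => A n ω i j)
    (hindep : ∀ n, iIndepFun
      (fun p : Fin n × Fin n => fun ω => A n ω p.1 p.2) ℙ)
    (hident : ∀ n i j, IdentDistrib (fun ω => A n ω i j) X ℙ ℙ)
    (C : ℝ) (hC : 0 < C) :
    ∃ E : ℕ → Set Ω, (∑' n, ℙ (E n)) ≠ ⊤ ∧ ∀ᶠ (n : ℕ) in Filter.atTop, ∀ ω, ω ∉ E n →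
      ∀ (B : Matrix (Fin n) (Fin n) ℝ) (I J : Finset (Fin n)),
        (I.card : ℝ) ≤ ε * n → (J.card : ℝ) ≤ ε * n →
        (∀ i j, (i ∉ I ∨ j ∉ J) → B i j = A n ω i j) →
        C ≤ l2OpNorm B / Real.sqrt n := by
  classical
  have h1ε : 0 < 1 - ε := by linarith
  set μ₀ : ℝ := ∫ ω, X ω ∂ℙ with hμ₀def
  set η : ℝ := (1 - ε) ^ 2 * μ₀ / 8 with hηdef
  have hη : 0 < η := by positivity
  have hε2le1 : (1 - ε) ^ 2 ≤ 1 := by nlinarith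
  have hημ : η ≤ μ₀ / 8 := by
    rw [hηdef]
    rw [div_le_div_iff_of_pos_right (by norm_num)]
    nlinarith
  obtain ⟨M, hM1, hMη⟩ := exists_good_trunc X hX hint hη
  have hM0 : (0:ℝ) ≤ M := by linarith
  set g : ℝ → ℝ := fun x => max (-M) (min x M) with hgdef
  have hg : Measurable g := trunc_measurable M
  have hgbd : ∀ x, |g x| ≤ M := fun x => abs_trunc_le hM0 x
  set h₀ : ℝ → ℝ := fun x => |x - g x| with hh₀def
  have hh₀ : Measurable h₀ := (measurable_id.sub hg).abs
  have hh₀0 : ∀ x, 0 ≤ h₀ x := fun x => abs_nonneg _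
  have hh₀le : ∀ x, h₀ x ≤ |x| := fun x => abs_sub_trunc_le hM0 x
  set Z0 : Ω' → ℝ := fun ω' => h₀ (X ω') with hZ0def
  have hZ0meas : Measurable Z0 := hh₀.comp hX
  have hZ0η : ∫ ω', Z0 ω' ∂ℙ ≤ η := hMη
  have hZ0nonneg : 0 ≤ ∫ ω', Z0 ω' ∂ℙ :=
    integral_nonneg fun ω' => hh₀0 _
  -- Memℒp Z0 2
  have hXsqint : Integrable (fun ω => X ω ^ 2) ℙ := integrable_sq_of_lintegral_ne_top X hX hsqfin
  have hZ0sq : Integrable (fun ω' => Z0 ω' ^ 2) ℙ := by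
    refine Integrable.mono' hXsqint ((hZ0meas.pow_const 2).aestronglyMeasurable)
      (Filter.Eventually.of_forall fun ω' => ?_)
    rw [Real.norm_eq_abs, abs_of_nonneg (sq_nonneg _)]
    calc Z0 ω' ^ 2 ≤ |X ω'| ^ 2 := by
          apply pow_le_pow_left₀ (hh₀0 _) (hh₀le _)
      _ = X ω' ^ 2 := sq_abs _
  have hZ0mem : MemLp Z0 2 ℙ :=
    (memLp_two_iff_integrable_sq hZ0meas.aestronglyMeasurable).2 hZ0sq
  have hZ0int : Integrable Z0 ℙ := hZ0mem.integrable one_le_two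
  set τ : ℝ := variance Z0 ℙ with hτdef
  have hτ0 : 0 ≤ τ := variance_nonneg _ _
  -- v = mean of truncated variable
  set v : ℝ := ∫ ω', g (X ω') ∂ℙ with hvdef
  have hgXint : Integrable (fun ω' => g (X ω')) ℙ :=
    Integrable.mono' (integrable_const M) ((hg.comp hX).aestronglyMeasurable)
      (Filter.Eventually.of_forall fun ω' => by rw [Real.norm_eq_abs]; exact hgbd _)
  have hvμ : μ₀ - η ≤ v := by
    have hsub : ∫ ω', (X ω' - g (X ω')) ∂ℙ = μ₀ - v := by
      rw [integral_sub hint hgXint]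
    have habs : |∫ ω', (X ω' - g (X ω')) ∂ℙ| ≤ ∫ ω', Z0 ω' ∂ℙ := by
      calc |∫ ω', (X ω' - g (X ω')) ∂ℙ| = ‖∫ ω', (X ω' - g (X ω')) ∂ℙ‖ :=
            (Real.norm_eq_abs _).symm
        _ ≤ ∫ ω', ‖X ω' - g (X ω')‖ ∂ℙ := norm_integral_le_integral_norm _
        _ = ∫ ω', Z0 ω' ∂ℙ := by
            apply integral_congr_ae
            exact Filter.Eventually.of_forall fun ω' => Real.norm_eq_abs _
    rw [hsub] at habs
    have := (abs_le.1 habs).2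
    linarith
  have hv0 : 0 < v := by linarith [hμ₀def ▸ hpos, hημ]
  obtain ⟨s₀, hs₀pos, hs₀M, hs₀exp⟩ := exponent_choice hM1 hη
  set c : ℝ := s₀ * η / 2 with hcdef
  have hc : 0 < c := by positivity
  set c₀ : ℝ := (1 - ε) ^ 2 * μ₀ / 2 with hc₀def
  have hc₀ : 0 < c₀ := by positivity
  -- the events
  set D : (n : ℕ) → Set Ω := fun n => ⋃ S : Finset (Fin n), ⋃ T : Finset (Fin n),
    {ω | ∑ p ∈ S ×ˢ T, g (A n ω p.1 p.2)
      ≤ (S.card : ℝ) * T.card * v - η * n ^ 2} with hDdef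
  set Rsum : (n : ℕ) → Ω → ℝ := fun n => ∑ p : Fin n × Fin n, fun ω => h₀ (A n ω p.1 p.2)
    with hRdef
  set Ch : (n : ℕ) → Set Ω := fun n =>
    {ω | η * n ^ 2 ≤ |Rsum n ω - ∫ x, Rsum n x ∂ℙ|} with hChdef
  set E : ℕ → Set Ω := fun n => if n = 0 then ∅ else D n ∪ Ch n with hEdef
  -- facts about Rsum
  have hZp : ∀ n (p : Fin n × Fin n), IdentDistrib (fun ω => h₀ (A n ω p.1 p.2)) Z0 ℙ ℙ :=
    fun n p => (hident n p.1 p.2).comp hh₀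
  have hZpmem : ∀ n (p : Fin n × Fin n), MemLp (fun ω => h₀ (A n ω p.1 p.2)) 2 ℙ :=
    fun n p => (hZp n p).symm.memLp_snd hZ0mem
  have hRmem : ∀ n, MemLp (Rsum n) 2 ℙ := fun n =>
    memLp_finset_sum' _ (fun p _ => hZpmem n p)
  have hRvar : ∀ n, variance (Rsum n) ℙ = (n : ℝ) ^ 2 * τ := by
    intro n
    rw [hRdef]
    rw [IndepFun.variance_sum (fun p _ => hZpmem n p)
      (fun p _ q _ hpq => ((hindep n).comp (fun _ => h₀) (fun _ => hh₀)).indepFun hpq)]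
    rw [Finset.sum_congr rfl (fun p _ => (hZp n p).variance_eq)]
    rw [Finset.sum_const, Finset.card_univ, Fintype.card_prod, Fintype.card_fin,
      nsmul_eq_mul]
    push_cast
    ring
  have hRmean : ∀ n, ∫ x, Rsum n x ∂ℙ ≤ (n : ℝ) ^ 2 * η := by
    intro n
    rw [hRdef]
    simp only [Finset.sum_apply]
    rw [integral_finset_sum _ (fun p _ => ((hZp n p).symm.integrable_snd hZ0int))]
    rw [Finset.sum_congr rfl (fun p _ => ((hZp n p).integral_eq))]
    rw [Finset.sum_const, Finset.card_univ, Fintype.card_prod, Fintype.card_fin,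
      nsmul_eq_mul]
    have : ((n * n : ℕ) : ℝ) = (n:ℝ) ^ 2 := by push_cast; ring
    rw [this]
    exact mul_le_mul_of_nonneg_left hZ0η (by positivity)
  -- measure bounds
  have hDbound : ∀ n, ℙ (D n) ≤ ENNReal.ofReal ((4:ℝ) ^ n * Real.exp (-(c * n ^ 2))) := by
    intro n
    refine le_trans (minor_union_bound X hX n (A n) (hmeas n) (hindep n) (hident n)
      g hg M hgbd η s₀ hη hs₀pos hs₀M) ?_
    apply ENNReal.ofReal_le_ofReal
    apply mul_le_mul_of_nonneg_left _ (by positivity)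
    apply Real.exp_le_exp.2
    have hn2 : (0:ℝ) ≤ (n:ℝ) ^ 2 := by positivity
    nlinarith [mul_le_mul_of_nonneg_right hs₀exp hn2]
  have hChbound : ∀ n : ℕ, n ≠ 0 → ℙ (Ch n) ≤ ENNReal.ofReal (τ / (η ^ 2 * n ^ 2)) := by
    intro n hn
    have hn0 : (0:ℝ) < n := by
      have : 0 < n := Nat.pos_of_ne_zero hn
      exact_mod_cast this
    have hc2 : 0 < η * (n:ℝ) ^ 2 := by positivity
    have h := meas_ge_le_variance_div_sq (μ := (ℙ : Measure Ω)) (hRmem n) hc2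
    rw [hRvar n] at h
    refine le_trans h (ENNReal.ofReal_le_ofReal (le_of_eq ?_))
    field_simp
  have hEbound : ∀ n, ℙ (E n) ≤ ENNReal.ofReal ((4:ℝ) ^ n * Real.exp (-(c * n ^ 2)))
      + ENNReal.ofReal (τ / (η ^ 2 * n ^ 2)) := by
    intro n
    by_cases hn : n = 0
    · rw [hEdef]
      simp only [hn, if_pos rfl]
      simp
    · rw [hEdef]
      simp only [if_neg hn]
      exact le_trans (measure_union_le _ _) (add_le_add (hDbound n) (hChbound n hn))
  refine ⟨E, ?_, ?_⟩
  · have hs1 : Summable (fun n : ℕ => (4:ℝ) ^ n * Real.exp (-(c * n ^ 2))) :=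
      summable_four_pow_exp hc
    have hs2 : Summable (fun n : ℕ => τ / (η ^ 2 * n ^ 2)) := by
      have heq : (fun n : ℕ => τ / (η ^ 2 * (n:ℝ) ^ 2))
          = fun n : ℕ => (τ / η ^ 2) * (1 / (n:ℝ) ^ 2) := by
        funext n
        rcases eq_or_ne ((n:ℝ)) 0 with h | h
        · rw [h]; simp
        · field_simp
      rw [heq]
      exact (Real.summable_one_div_nat_pow.2 one_lt_two).mul_left _
    refine ne_top_of_le_ne_top ?_ (ENNReal.tsum_le_tsum hEbound)
    rw [ENNReal.tsum_add]
    apply ENNReal.add_ne_top.2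
    constructor
    · rw [← ENNReal.ofReal_tsum_of_nonneg (fun n => by positivity) hs1]
      exact ENNReal.ofReal_ne_top
    · rw [← ENNReal.ofReal_tsum_of_nonneg
        (fun n => div_nonneg hτ0 (by positivity)) hs2]
      exact ENNReal.ofReal_ne_top
  · filter_upwards [Filter.eventually_ge_atTop 1,
      Filter.eventually_ge_atTop ⌈(C / c₀) ^ 2⌉₊] with n hn1 hnN
    intro ω hω B I J hI hJ hB
    have hn0 : (0:ℝ) < n := by exact_mod_cast hn1
    have hnne : n ≠ 0 := by omega
    rw [hEdef] at hω
    simp only [if_neg hnne] at hω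
    have hωD : ω ∉ D n := fun h => hω (Set.mem_union_left _ h)
    have hωC : ω ∉ Ch n := fun h => hω (Set.mem_union_right _ h)
    have hgood : ∀ S T : Finset (Fin n),
        (S.card : ℝ) * T.card * v - η * n ^ 2 < ∑ p ∈ S ×ˢ T, g (A n ω p.1 p.2) := by
      intro S T
      by_contra h
      push_neg at h
      exact hωD (Set.mem_iUnion.2 ⟨S, Set.mem_iUnion.2 ⟨T, h⟩⟩)
    have hRbound : Rsum n ω ≤ 2 * η * n ^ 2 := by
      have h1 : ¬ (η * (n:ℝ) ^ 2 ≤ |Rsum n ω - ∫ x, Rsum n x ∂ℙ|) := hωC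
      push_neg at h1
      have h2 := (abs_lt.1 h1).2
      have h3 := hRmean n
      linarith
    set S := Iᶜ with hSdef
    set T := Jᶜ with hTdef
    have hS : (1 - ε) * n ≤ (S.card : ℝ) := compl_card_bound hI
    have hT : (1 - ε) * n ≤ (T.card : ℝ) := compl_card_bound hJ
    have hsplit : ∑ p ∈ S ×ˢ T, B p.1 p.2
        = (∑ p ∈ S ×ˢ T, g (A n ω p.1 p.2))
          + ∑ p ∈ S ×ˢ T, (A n ω p.1 p.2 - g (A n ω p.1 p.2)) := by
      rw [← Finset.sum_add_distrib]
      apply Finset.sum_congr rfl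
      intro p hp
      rw [Finset.mem_product] at hp
      rw [hB p.1 p.2 (Or.inl (Finset.mem_compl.1 hp.1))]
      ring
    have hdiff : -(2 * η * (n:ℝ) ^ 2)
        ≤ ∑ p ∈ S ×ˢ T, (A n ω p.1 p.2 - g (A n ω p.1 p.2)) := by
      have h2 : ∑ p ∈ S ×ˢ T, -(h₀ (A n ω p.1 p.2))
          ≤ ∑ p ∈ S ×ˢ T, (A n ω p.1 p.2 - g (A n ω p.1 p.2)) :=
        Finset.sum_le_sum fun p _ => neg_abs_le _
      have h3 : ∑ p ∈ S ×ˢ T, h₀ (A n ω p.1 p.2) ≤ Rsum n ω := by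
        rw [hRdef]
        simp only [Finset.sum_apply]
        apply Finset.sum_le_sum_of_subset_of_nonneg (Finset.subset_univ _)
        intro p _ _
        exact hh₀0 _
      rw [Finset.sum_neg_distrib] at h2
      linarith
    have hminor : (1 - ε) ^ 2 * (n:ℝ) ^ 2 * (μ₀ - η) - η * n ^ 2
        ≤ ∑ p ∈ S ×ˢ T, g (A n ω p.1 p.2) := by
      have h := hgood S T
      have hμη : (0:ℝ) ≤ μ₀ - η := by linarith
      have hST : (1 - ε) ^ 2 * (n:ℝ) ^ 2 * (μ₀ - η) ≤ (S.card : ℝ) * T.card * v := by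
        calc (1 - ε) ^ 2 * (n:ℝ) ^ 2 * (μ₀ - η)
            = ((1 - ε) * n) * ((1 - ε) * n) * (μ₀ - η) := by ring
          _ ≤ (S.card : ℝ) * T.card * (μ₀ - η) := by
              apply mul_le_mul_of_nonneg_right _ hμη
              exact mul_le_mul hS hT (mul_nonneg h1ε.le (Nat.cast_nonneg _)) (Nat.cast_nonneg _)
          _ ≤ (S.card : ℝ) * T.card * v := by
              apply mul_le_mul_of_nonneg_left hvμ
              exact mul_nonneg (Nat.cast_nonneg _) (Nat.cast_nonneg _)
      linarith
    have harith : c₀ * (n:ℝ) ^ 2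
        ≤ ((1 - ε) ^ 2 * (n:ℝ) ^ 2 * (μ₀ - η) - η * (n:ℝ) ^ 2) + (-(2 * η * (n:ℝ) ^ 2)) := by
      rw [hc₀def, hηdef]
      exact arith_lemma ε μ₀ (n:ℝ) h1ε hε2le1 hpos.le (sq_nonneg _)
    have htotal : c₀ * (n:ℝ) ^ 2 ≤ ∑ p ∈ S ×ˢ T, B p.1 p.2 := by
      rw [hsplit]
      have := add_le_add hminor hdiff
      linarith
    have hBn : c₀ * n ≤ l2OpNorm B := by
      have h1 := minor_sum_le B S T
      have h2 : c₀ * (n:ℝ) * n ≤ l2OpNorm B * n := by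
        calc c₀ * (n:ℝ) * n = c₀ * (n:ℝ) ^ 2 := by ring
          _ ≤ ∑ p ∈ S ×ˢ T, B p.1 p.2 := htotal
          _ ≤ l2OpNorm B * n := h1
      exact le_of_mul_le_mul_right h2 hn0
    have hsqn : C / c₀ ≤ Real.sqrt n := by
      have h1 : ((C / c₀) ^ 2 : ℝ) ≤ n := le_trans (Nat.le_ceil _) (by exact_mod_cast hnN)
      calc C / c₀ = Real.sqrt ((C / c₀) ^ 2) := (Real.sqrt_sq (by positivity)).symm
        _ ≤ Real.sqrt n := Real.sqrt_le_sqrt h1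
    rw [le_div_iff₀ (Real.sqrt_pos.2 hn0)]
    calc C * Real.sqrt n ≤ (c₀ * Real.sqrt n) * Real.sqrt n := by
          apply mul_le_mul_of_nonneg_right _ (Real.sqrt_nonneg _)
          rw [← div_le_iff₀' hc₀]
          exact hsqn
      _ = c₀ * n := by rw [mul_assoc, Real.mul_self_sqrt hn0.le]
      _ ≤ l2OpNorm B := hBn

end KeyB

/-- **Global problem.** If the entries of the `n × n` random matrices `A n` are i.i.d. copies of a
random variable `X` with either nonzero mean or infinite second moment, and `ε ∈ (0,1)`, then
the minimum of `‖Ã‖/√n` over all matrices `Ã` obtained from `A n` by modifying an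
`εn × εn` submatrix tends to infinity almost surely. -/

theorem global_problem
    (Ω' : Type) [MeasureSpace Ω'] [IsProbabilityMeasure (ℙ : Measure Ω')]
    (X : Ω' → ℝ) (hXmeas : Measurable X)
    (hmoment : (Integrable X ℙ ∧ ∫ ω, X ω ∂ℙ ≠ 0) ∨
      (∫⁻ ω, (‖X ω‖₊ : ℝ≥0∞) ^ 2 ∂ℙ = ⊤))
    (ε : ℝ) (hε0 : 0 < ε) (hε1 : ε < 1)
    (Ω : Type) [MeasureSpace Ω] [IsProbabilityMeasure (ℙ : Measure Ω)]
    (A : (n : ℕ) → Ω → Matrix (Fin n) (Fin n) ℝ)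
    (hmeas : ∀ n i j, Measurable fun ω => A n ω i j)
    (hindep : ∀ n, iIndepFun
      (fun p : Fin n × Fin n => fun ω => A n ω p.1 p.2) ℙ)
    (hident : ∀ n i j, IdentDistrib (fun ω => A n ω i j) X ℙ ℙ) :
    ∀ᵐ ω ∂(ℙ : Measure Ω), Filter.Tendsto
      (fun n : ℕ => ⨅ B : {B : Matrix (Fin n) (Fin n) ℝ //
          ∃ I J : Finset (Fin n), (I.card : ℝ) ≤ ε * n ∧ (J.card : ℝ) ≤ ε * n ∧
            ∀ i j, (i ∉ I ∨ j ∉ J) → B i j = A n ω i j},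
        l2OpNorm B.1 / Real.sqrt n)
      Filter.atTop Filter.atTop := by
  have key : ∀ C : ℝ, 0 < C → ∃ E : ℕ → Set Ω, (∑' n, ℙ (E n)) ≠ ⊤ ∧
      ∀ᶠ (n : ℕ) in Filter.atTop, ∀ ω, ω ∉ E n →
      ∀ (B : Matrix (Fin n) (Fin n) ℝ) (I J : Finset (Fin n)),
        (I.card : ℝ) ≤ ε * n → (J.card : ℝ) ≤ ε * n →
        (∀ i j, (i ∉ I ∨ j ∉ J) → B i j = A n ω i j) →
        C ≤ l2OpNorm B / Real.sqrt n := by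
    intro C hC
    by_cases hsq : ∫⁻ ω, (‖X ω‖₊ : ℝ≥0∞) ^ 2 ∂ℙ = ⊤
    · exact keyA X hXmeas hsq ε hε0 hε1 A hmeas hindep hident C hC
    · obtain ⟨hint, hmean⟩ := hmoment.resolve_right hsq
      rcases hmean.lt_or_gt with hneg | hpos
      · have hint' : Integrable (fun ω => -X ω) ℙ := hint.neg
        have hpos' : 0 < ∫ ω, -X ω ∂ℙ := by rw [integral_neg]; linarith
        have hsq' : ∫⁻ ω, (‖-X ω‖₊ : ℝ≥0∞) ^ 2 ∂ℙ ≠ ⊤ := by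
          simpa only [nnnorm_neg] using hsq
        obtain ⟨E, hE1, hE2⟩ := keyB (fun ω => -X ω) hXmeas.neg hint' hpos' hsq' ε hε0 hε1
          (fun n ω => -(A n ω)) (fun n i j => (hmeas n i j).neg)
          (fun n => (hindep n).comp (fun _ => fun x : ℝ => -x) (fun _ => measurable_neg))
          (fun n i j => (hident n i j).comp measurable_neg) C hC
        refine ⟨E, hE1, ?_⟩
        filter_upwards [hE2] with n hn ω hω B I J hI hJ hB
        have h := hn ω hω (-B) I J hI hJ (fun i j hij => by
          show -(B i j) = -(A n ω i j)
          rw [hB i j hij])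
        rwa [l2OpNorm_neg] at h
      · exact keyB X hXmeas hint hpos hsq ε hε0 hε1 A hmeas hindep hident C hC
  have main : ∀ᵐ ω ∂(ℙ : Measure Ω), ∀ k : ℕ, ∀ᶠ (n : ℕ) in Filter.atTop,
      ((k : ℝ) + 1) ≤ ⨅ B : {B : Matrix (Fin n) (Fin n) ℝ //
          ∃ I J : Finset (Fin n), (I.card : ℝ) ≤ ε * n ∧ (J.card : ℝ) ≤ ε * n ∧
            ∀ i j, (i ∉ I ∨ j ∉ J) → B i j = A n ω i j},
        l2OpNorm B.1 / Real.sqrt n := by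
    rw [MeasureTheory.ae_all_iff]
    intro k
    obtain ⟨E, hE1, hE2⟩ := key ((k : ℝ) + 1) (by positivity)
    filter_upwards [MeasureTheory.ae_eventually_notMem hE1] with ω hω
    filter_upwards [hE2, hω] with n h1 h2
    have hne : Nonempty {B : Matrix (Fin n) (Fin n) ℝ //
        ∃ I J : Finset (Fin n), (I.card : ℝ) ≤ ε * n ∧ (J.card : ℝ) ≤ ε * n ∧
          ∀ i j, (i ∉ I ∨ j ∉ J) → B i j = A n ω i j} := by
      refine ⟨⟨A n ω, ∅, ∅, ?_, ?_, fun i j _ => rfl⟩⟩ <;>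
        · simp only [Finset.card_empty, Nat.cast_zero]
          positivity
    haveI := hne
    apply le_ciInf
    intro b
    obtain ⟨I, J, hI, hJ, hB⟩ := b.2
    exact h1 ω h2 b.1 I J hI hJ hB
  filter_upwards [main] with ω hω
  rw [Filter.tendsto_atTop]
  intro b
  filter_upwards [hω ⌈b⌉₊] with n hn
  refine le_trans ?_ hn
  calc b ≤ (⌈b⌉₊ : ℝ) := Nat.le_ceil b
    _ ≤ (⌈b⌉₊ : ℝ) + 1 := by linarith
end

section
/- Let X be a real random variable with X ≥ 0 almost surely and E X ≤ 1, and let ε ∈ (0,1). Then there exists a random variable W, defined on the same probability space and taking values in [0,1], such that X·W ≤ ε^{−1} almost surely and 1 ≤ E(W^{−1}) ≤ 1 + ε. -/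
open MeasureTheory ProbabilityTheory
open scoped ENNReal NNReal

/-- **Damping one random variable.** If `X ≥ 0` a.s. and `E X ≤ 1`, then for any `ε ∈ (0,1)`
there is a random variable `W` with values in `[0,1]` such that `X·W ≤ ε⁻¹` almost surely and
`1 ≤ E(W⁻¹) ≤ 1 + ε`. -/
theorem damping_one_rv
    (Ω : Type) [MeasureSpace Ω] [IsProbabilityMeasure (ℙ : Measure Ω)]
    (X : Ω → ℝ) (hXmeas : Measurable X)
    (hX0 : ∀ᵐ ω ∂ℙ, 0 ≤ X ω)
    (hXint : Integrable X ℙ) (hXmean : ∫ ω, X ω ∂ℙ ≤ 1)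
    (ε : ℝ) (hε0 : 0 < ε) (hε1 : ε < 1) :
    ∃ W : Ω → ℝ, Measurable W ∧ (∀ ω, W ω ∈ Set.Icc (0 : ℝ) 1) ∧
      (∀ᵐ ω ∂ℙ, X ω * W ω ≤ ε⁻¹) ∧
      Integrable (fun ω => (W ω)⁻¹) ℙ ∧
      1 ≤ ∫ ω, (W ω)⁻¹ ∂ℙ ∧ ∫ ω, (W ω)⁻¹ ∂ℙ ≤ 1 + ε := by
  set W : Ω → ℝ := fun ω => if ε * X ω ≤ 1 then 1 else (ε * X ω)⁻¹ with hW
  have hWmeas : Measurable W := by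
    apply Measurable.ite (measurableSet_le (measurable_const.mul hXmeas) measurable_const)
      measurable_const ((measurable_const.mul hXmeas).inv)
  have hWinv : ∀ ω, (W ω)⁻¹ = if ε * X ω ≤ 1 then 1 else ε * X ω := by
    intro ω
    by_cases h : ε * X ω ≤ 1 <;> simp [hW, h]
  -- values in [0,1]
  have hWicc : ∀ ω, W ω ∈ Set.Icc (0 : ℝ) 1 := by
    intro ω
    by_cases h : ε * X ω ≤ 1
    · simp [hW, h]
    · push_neg at h
      have h0 : 0 < ε * X ω := lt_trans one_pos h
      constructor
      · simp only [hW, if_neg (not_le.2 h)]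
        exact inv_nonneg.2 h0.le
      · simp only [hW, if_neg (not_le.2 h)]
        exact inv_le_one_of_one_le₀ h.le
  have hinv_le : ∀ ω, 0 ≤ X ω → (W ω)⁻¹ ≤ 1 + ε * X ω := by
    intro ω h0
    rw [hWinv]
    by_cases h : ε * X ω ≤ 1
    · simp [h]; positivity
    · simp [h]
  have hinv_ge : ∀ ω, 0 ≤ X ω → (1:ℝ) ≤ (W ω)⁻¹ := by
    intro ω h0
    rw [hWinv]
    by_cases h : ε * X ω ≤ 1
    · simp [h]
    · simp [h]; linarith [not_le.1 h]
  have hdomint : Integrable (fun ω => 1 + ε * X ω) ℙ :=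
    (integrable_const 1).add (hXint.const_mul ε)
  have hint : Integrable (fun ω => (W ω)⁻¹) ℙ := by
    refine Integrable.mono hdomint (hWmeas.inv.aestronglyMeasurable) ?_
    filter_upwards [hX0] with ω h0
    have h1 : 0 ≤ (W ω)⁻¹ := le_trans zero_le_one (hinv_ge ω h0)
    have h2 : (0:ℝ) ≤ 1 + ε * X ω := by positivity
    rw [Real.norm_eq_abs, Real.norm_eq_abs, abs_of_nonneg h1, abs_of_nonneg h2]
    exact hinv_le ω h0
  refine ⟨W, hWmeas, hWicc, ?_, hint, ?_, ?_⟩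
  · filter_upwards [hX0] with ω h0
    by_cases h : ε * X ω ≤ 1
    · simp only [hW, if_pos h, mul_one]
      rw [← mul_le_mul_iff_right₀ hε0]
      rw [mul_inv_cancel₀ hε0.ne']
      exact h
    · push_neg at h
      have hXpos : 0 < X ω := by nlinarith
      simp only [hW, if_neg (not_le.2 h), mul_inv]
      rw [mul_comm ε⁻¹, ← mul_assoc, mul_inv_cancel₀ hXpos.ne', one_mul]
  · have h1 : ∫ _ω, (1:ℝ) ∂(ℙ : Measure Ω) ≤ ∫ ω, (W ω)⁻¹ ∂ℙ := by
      refine integral_mono_ae (integrable_const 1) hint ?_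
      filter_upwards [hX0] with ω h0 using hinv_ge ω h0
    simpa using h1
  · have h1 : ∫ ω, (W ω)⁻¹ ∂ℙ ≤ ∫ ω, (1 + ε * X ω) ∂ℙ := by
      refine integral_mono_ae hint hdomint ?_
      filter_upwards [hX0] with ω h0 using hinv_le ω h0
    have h2 : ∫ ω, (1 + ε * X ω) ∂ℙ = 1 + ε * ∫ ω, X ω ∂ℙ := by
      rw [integral_add (integrable_const 1) (hXint.const_mul ε), integral_const,
        integral_const_mul]
      simp
    nlinarith
end

section
/- Let X be a nonnegative real random variable with a continuous cumulative distribution function. Then there exists a nonnegative random variable X′ such that: (1) E X′ ≤ 4·E X; (2) X′ stochastically dominates X, i.e. P(X′ ≥ t) ≥ P(X ≥ t) for all t ≥ 0; and (3) X′ = ∑_{k=0}^∞ q_k ξ_k, where q_k are nonnegative real numbers and ξ_k are independent Bernoulli random variables with P(ξ_k = 1) = 2^{−k}. -/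
open MeasureTheory ProbabilityTheory
open scoped ENNReal NNReal

noncomputable section

namespace DiscretizationAux

/-! ### The probability space: random finite subsets of `ℕ` -/

/-- success probability of label `j` (it will correspond to `ξ (j+1)`). -/
def w (j : ℕ) : ℝ≥0∞ := 2⁻¹ ^ (j + 1)

/-- failure probability of label `j`. -/
def v (j : ℕ) : ℝ≥0∞ := 1 - w j

/-- odds ratio of label `j`. -/
def s (j : ℕ) : ℝ≥0∞ := w j / v j

lemma half_ne_top : (2:ℝ≥0∞)⁻¹ ≠ ∞ := by simp
lemma half_le_one : (2:ℝ≥0∞)⁻¹ ≤ 1 := by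
  simp [ENNReal.inv_le_one, one_le_two]

lemma one_sub_half : (1:ℝ≥0∞) - 2⁻¹ = 2⁻¹ := by
  rw [← ENNReal.inv_two_add_inv_two]
  simp

lemma w_le_half (j : ℕ) : w j ≤ 2⁻¹ := by
  calc w j = 2⁻¹ * 2⁻¹ ^ j := by rw [w, pow_succ, mul_comm]
  _ ≤ 2⁻¹ * 1 := by
      exact mul_le_mul_right (pow_le_one₀ zero_le half_le_one) _
  _ = 2⁻¹ := mul_one _

lemma w_le_one (j : ℕ) : w j ≤ 1 := (w_le_half j).trans half_le_one

lemma w_ne_top (j : ℕ) : w j ≠ ∞ := ((w_le_one j).trans_lt ENNReal.one_lt_top).ne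

lemma half_le_v (j : ℕ) : 2⁻¹ ≤ v j := by
  calc (2:ℝ≥0∞)⁻¹ = 1 - 2⁻¹ := one_sub_half.symm
  _ ≤ v j := tsub_le_tsub_left (w_le_half j) 1

lemma v_ne_zero (j : ℕ) : v j ≠ 0 :=
  fun h => by simpa [h] using (half_le_v j)

lemma v_le_one (j : ℕ) : v j ≤ 1 := tsub_le_self

lemma v_ne_top (j : ℕ) : v j ≠ ∞ := ((v_le_one j).trans_lt ENNReal.one_lt_top).ne

lemma v_add_w (j : ℕ) : v j + w j = 1 := by
  rw [v]
  exact tsub_add_cancel_of_le (w_le_one j)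

lemma s_ne_top (j : ℕ) : s j ≠ ∞ := by
  rw [s]
  exact (ENNReal.div_lt_top (w_ne_top j) (v_ne_zero j)).ne

lemma s_mul_v (j : ℕ) : s j * v j = w j :=
  ENNReal.div_mul_cancel (v_ne_zero j) (v_ne_top j)

lemma one_add_s (j : ℕ) : 1 + s j = (v j)⁻¹ := by
  have h1 : (1:ℝ≥0∞) = v j / v j := (ENNReal.div_self (v_ne_zero j) (v_ne_top j)).symm
  calc 1 + s j = v j / v j + w j / v j := by rw [← h1, s]
  _ = (v j + w j) / v j := ENNReal.div_add_div_same
  _ = 1 / v j := by rw [v_add_w]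
  _ = (v j)⁻¹ := one_div _

/-- the weight of a finite set: product of odds ratios. -/
def g (F : Finset ℕ) : ℝ≥0∞ := ∏ j ∈ F, s j

lemma g_ne_top (F : Finset ℕ) : g F ≠ ∞ := by
  rw [g]
  exact (ENNReal.prod_lt_top (fun j _ => (s_ne_top j).lt_top)).ne

lemma g_union {A B : Finset ℕ} (h : Disjoint A B) : g (A ∪ B) = g A * g B :=
  Finset.prod_union h

/-- partial products of failure probabilities. -/
def P (n : ℕ) : ℝ≥0∞ := ∏ j ∈ Finset.range n, v j

/-- the infinite product of all failure probabilities. -/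
def V : ℝ≥0∞ := ⨅ n, P n

lemma sub_sub_le_mul {a b : ℝ≥0∞} (hb : b ≤ 1) : 1 - a - b ≤ (1 - a) * (1 - b) := by
  have h : (1 - a) ≤ (1 - a) * (1 - b) + b := by
    calc 1 - a = (1 - a) * ((1 - b) + b) := by
          rw [tsub_add_cancel_of_le hb, mul_one]
    _ = (1 - a) * (1 - b) + (1 - a) * b := mul_add _ _ _
    _ ≤ (1 - a) * (1 - b) + 1 * b := by
          exact add_le_add_right (mul_le_mul_left tsub_le_self b) _
    _ = (1 - a) * (1 - b) + b := by rw [one_mul]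
  calc 1 - a - b ≤ ((1 - a) * (1 - b) + b) - b := tsub_le_tsub_right h b
  _ ≤ (1 - a) * (1 - b) := by
      exact tsub_le_iff_right.2 le_rfl

lemma tail_prod_ge (n : ℕ) :
    1 - ∑ j ∈ Finset.range n, w (j + 1) ≤ ∏ j ∈ Finset.range n, v (j + 1) := by
  induction n with
  | zero => simp
  | succ n ih =>
      rw [Finset.sum_range_succ, Finset.prod_range_succ]
      calc 1 - (∑ j ∈ Finset.range n, w (j + 1) + w (n + 1))
          = 1 - ∑ j ∈ Finset.range n, w (j + 1) - w (n + 1) := by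
            rw [tsub_add_eq_tsub_tsub]
        _ ≤ (1 - ∑ j ∈ Finset.range n, w (j + 1)) * (1 - w (n + 1)) :=
            sub_sub_le_mul (w_le_one (n + 1))
        _ ≤ (∏ j ∈ Finset.range n, v (j + 1)) * v (n + 1) := by
            exact mul_le_mul_left ih _

lemma sum_w_shift_le (n : ℕ) : ∑ j ∈ Finset.range n, w (j + 1) ≤ 2⁻¹ := by
  have h1 : ∑ j ∈ Finset.range n, w (j + 1) ≤ ∑' j : ℕ, w (j + 1) :=
    ENNReal.sum_le_tsum _
  refine h1.trans ?_
  have : ∀ j : ℕ, w (j + 1) = 2⁻¹ ^ 2 * 2⁻¹ ^ j := by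
    intro j; rw [w]; ring
  have heq : ∑' j : ℕ, w (j + 1) = 2⁻¹ := by
    rw [tsum_congr this, ENNReal.tsum_mul_left, ENNReal.tsum_geometric, one_sub_half,
      pow_two, mul_assoc, ENNReal.mul_inv_cancel (by simp) half_ne_top, mul_one]
  exact heq.le

lemma quarter_le_P (n : ℕ) : 2⁻¹ * 2⁻¹ ≤ P n := by
  cases n with
  | zero =>
      calc (2:ℝ≥0∞)⁻¹ * 2⁻¹ ≤ 1 * 1 := mul_le_mul' half_le_one half_le_one
      _ = P 0 := by simp [P]
  | succ n =>
      rw [P, Finset.prod_range_succ']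
      have hv0 : (2:ℝ≥0∞)⁻¹ ≤ v 0 := half_le_v 0
      have h2 : (2:ℝ≥0∞)⁻¹ ≤ ∏ j ∈ Finset.range n, v (j + 1) := by
        calc (2:ℝ≥0∞)⁻¹ = 1 - 2⁻¹ := one_sub_half.symm
        _ ≤ 1 - ∑ j ∈ Finset.range n, w (j + 1) :=
            tsub_le_tsub_left (sum_w_shift_le n) 1
        _ ≤ _ := tail_prod_ge n
      calc (2:ℝ≥0∞)⁻¹ * 2⁻¹ = 2⁻¹ * 2⁻¹ := rfl
      _ ≤ (∏ j ∈ Finset.range n, v (j + 1)) * v 0 := mul_le_mul' h2 hv0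

lemma V_pos : V ≠ 0 := by
  have : (2:ℝ≥0∞)⁻¹ * 2⁻¹ ≤ V := le_iInf quarter_le_P
  intro h
  rw [h] at this
  simp [le_zero_iff] at this

lemma P_le_one (n : ℕ) : P n ≤ 1 :=
  Finset.prod_le_one (fun j _ => zero_le) (fun j _ => v_le_one j)

lemma V_ne_top : V ≠ ∞ := by
  have : V ≤ 1 := (iInf_le _ 0).trans (P_le_one 0)
  exact (this.trans_lt ENNReal.one_lt_top).ne

/-! ### Summing the weights -/

lemma sum_powerset_g (n : ℕ) :
    ∑ F ∈ (Finset.range n).powerset, g F = (P n)⁻¹ := by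
  have h := Finset.prod_add s (fun _ => (1:ℝ≥0∞)) (Finset.range n)
  simp only [Finset.prod_const_one, mul_one] at h
  have h2 : ∏ j ∈ Finset.range n, (s j + 1) = (P n)⁻¹ := by
    rw [P, ENNReal.prod_inv_distrib (fun i _ j _ _ => Or.inl (v_ne_zero i))]
    refine Finset.prod_congr rfl fun j _ => ?_
    rw [add_comm, one_add_s]
  rw [← h2, h]
  rfl

lemma tsum_g : ∑' F : Finset ℕ, g F = V⁻¹ := by
  have hsub : ∀ t : Finset (Finset ℕ), ∃ n : ℕ, t ⊆ (Finset.range n).powerset := by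
    intro t
    refine ⟨(t.sup fun F => F.sup id) + 1, fun F hF => ?_⟩
    rw [Finset.mem_powerset]
    intro j hj
    rw [Finset.mem_range]
    have h1 : j ≤ F.sup id := Finset.le_sup (f := id) hj
    have h2 : F.sup id ≤ t.sup fun F => F.sup id := Finset.le_sup hF
    omega
  rw [ENNReal.tsum_eq_iSup_sum' (fun n => (Finset.range n).powerset) hsub]
  have : ∀ n, ∑ F ∈ (Finset.range n).powerset, g F = (P n)⁻¹ := sum_powerset_g
  rw [iSup_congr this, V, ENNReal.inv_iInf]

/-- splitting a finite set along a fixed finite set `A`. -/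
def splitEquiv (A : Finset ℕ) :
    Finset ℕ ≃ {E : Finset ℕ // E ∈ A.powerset} × {G : Finset ℕ // Disjoint G A} where
  toFun F := (⟨F ∩ A, Finset.mem_powerset.2 Finset.inter_subset_right⟩,
    ⟨F \ A, Finset.sdiff_disjoint⟩)
  invFun p := p.1.1 ∪ p.2.1
  left_inv F := by
    ext j
    simp only [Finset.mem_union, Finset.mem_inter, Finset.mem_sdiff]
    tauto
  right_inv p := by
    obtain ⟨⟨E, hE⟩, ⟨G, hG⟩⟩ := p
    rw [Finset.mem_powerset] at hE
    have hGA : ∀ j ∈ G, j ∉ A := fun j hj hjA =>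
      (Finset.disjoint_left.1 hG) hj hjA
    have h1 : (E ∪ G) ∩ A = E := by
      ext j
      simp only [Finset.mem_inter, Finset.mem_union]
      constructor
      · rintro ⟨h1 | h1, h2⟩
        · exact h1
        · exact absurd h2 (hGA j h1)
      · intro h; exact ⟨Or.inl h, hE h⟩
    have h2 : (E ∪ G) \ A = G := by
      ext j
      simp only [Finset.mem_sdiff, Finset.mem_union]
      constructor
      · rintro ⟨h1 | h1, h2⟩
        · exact absurd (hE h1) h2
        · exact h1
      · intro h; exact ⟨Or.inr h, hGA j h⟩
    simp only [Prod.mk.injEq, Subtype.mk.injEq]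
    exact ⟨h1, h2⟩

lemma tsum_g_disj (A : Finset ℕ) :
    ∑' G : {G : Finset ℕ // Disjoint G A}, g G.1 = (∏ j ∈ A, v j) * V⁻¹ := by
  have key : V⁻¹ = (∏ j ∈ A, v j)⁻¹ * ∑' G : {G : Finset ℕ // Disjoint G A}, g G.1 := by
    have h1 : ∑' F : Finset ℕ, g F
        = ∑' p : {E : Finset ℕ // E ∈ A.powerset} × {G : Finset ℕ // Disjoint G A},
            g ((splitEquiv A).symm p) := ((splitEquiv A).symm.tsum_eq fun F => g F).symm
    rw [tsum_g] at h1
    have h2 : ∀ (E : {E : Finset ℕ // E ∈ A.powerset}) (G : {G : Finset ℕ // Disjoint G A}),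
        g ((splitEquiv A).symm (E, G)) = g E.1 * g G.1 := by
      rintro ⟨E, hE⟩ ⟨G, hG⟩
      have hd : Disjoint E G := (hG.mono_right (Finset.mem_powerset.1 hE)).symm
      exact g_union hd
    rw [ENNReal.tsum_prod'] at h1
    simp only [h2] at h1
    have h3 : ∀ E : {E : Finset ℕ // E ∈ A.powerset},
        ∑' G : {G : Finset ℕ // Disjoint G A}, g E.1 * g G.1
          = g E.1 * ∑' G : {G : Finset ℕ // Disjoint G A}, g G.1 := fun E =>
      ENNReal.tsum_mul_left
    rw [tsum_congr h3, ENNReal.tsum_mul_right, Finset.tsum_subtype A.powerset g] at h1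
    have h4 : ∑ E ∈ A.powerset, g E = (∏ j ∈ A, v j)⁻¹ := by
      have h := Finset.prod_add s (fun _ => (1:ℝ≥0∞)) A
      simp only [Finset.prod_const_one, mul_one] at h
      calc ∑ E ∈ A.powerset, g E = ∏ j ∈ A, (s j + 1) := h.symm
        _ = ∏ j ∈ A, (v j)⁻¹ :=
            Finset.prod_congr rfl fun j _ => by rw [add_comm, one_add_s]
        _ = (∏ j ∈ A, v j)⁻¹ :=
            (ENNReal.prod_inv_distrib (fun i _ j _ _ => Or.inl (v_ne_zero i))).symm
    rw [h4] at h1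
    exact h1
  have hprod_ne_zero : (∏ j ∈ A, v j) ≠ 0 :=
    Finset.prod_ne_zero_iff.2 fun j _ => v_ne_zero j
  have hprod_ne_top : (∏ j ∈ A, v j) ≠ ∞ :=
    (ENNReal.prod_lt_top (fun j _ => (v_ne_top j).lt_top)).ne
  calc ∑' G : {G : Finset ℕ // Disjoint G A}, g G.1
      = ((∏ j ∈ A, v j) * (∏ j ∈ A, v j)⁻¹) * ∑' G : {G : Finset ℕ // Disjoint G A}, g G.1 := by
        rw [ENNReal.mul_inv_cancel hprod_ne_zero hprod_ne_top, one_mul]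
    _ = (∏ j ∈ A, v j) * ((∏ j ∈ A, v j)⁻¹ * ∑' G : {G : Finset ℕ // Disjoint G A}, g G.1) :=
        mul_assoc _ _ _
    _ = (∏ j ∈ A, v j) * V⁻¹ := by rw [← key]

/-! ### The probability measure -/

/-- the probability mass function of our random finite set. -/
def p (F : Finset ℕ) : ℝ≥0∞ := V * g F

lemma tsum_p : ∑' F : Finset ℕ, p F = 1 := by
  have h : ∀ F : Finset ℕ, p F = V * g F := fun _ => rfl
  rw [tsum_congr h, ENNReal.tsum_mul_left, tsum_g, ENNReal.mul_inv_cancel V_pos V_ne_top]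

instance : MeasurableSpace (Finset ℕ) := ⊤

/-- the pmf of our random finite set. -/
def pmf : PMF (Finset ℕ) := ⟨p, ENNReal.summable.hasSum_iff.2 tsum_p⟩

instance : MeasureSpace (Finset ℕ) := ⟨pmf.toMeasure⟩

instance : IsProbabilityMeasure (ℙ : Measure (Finset ℕ)) :=
  PMF.toMeasure.isProbabilityMeasure pmf

lemma meas_eq (A : Set (Finset ℕ)) : (ℙ : Measure (Finset ℕ)) A = ∑' F : A, p F := by
  have : (ℙ : Measure (Finset ℕ)) A = pmf.toMeasure A := rfl
  have hco : ⇑pmf = p := rfl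
  rw [this, PMF.toMeasure_apply pmf MeasurableSpace.measurableSet_top, hco,
    ← tsum_subtype A p]

/-- reparametrizing supersets of `S` by their complement part. -/
def supersetEquiv (S : Finset ℕ) :
    {G : Finset ℕ // Disjoint G S} ≃ {F : Finset ℕ | S ⊆ F} where
  toFun G := ⟨S ∪ G.1, Finset.subset_union_left⟩
  invFun F := ⟨F.1 \ S, Finset.sdiff_disjoint⟩
  left_inv G := by
    ext1
    exact Finset.union_sdiff_cancel_left G.2.symm
  right_inv F := by
    ext1
    exact Finset.union_sdiff_of_subset F.2

/-- the key rectangle computation: probability that the random set contains `S`. -/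
lemma meas_superset (S : Finset ℕ) :
    (ℙ : Measure (Finset ℕ)) {F : Finset ℕ | S ⊆ F} = ∏ j ∈ S, w j := by
  rw [meas_eq]
  have h1 : ∑' F : {F : Finset ℕ | S ⊆ F}, p F.1
      = ∑' G : {G : Finset ℕ // Disjoint G S}, p ((supersetEquiv S) G).1 :=
    ((supersetEquiv S).tsum_eq fun F => p F.1).symm
  rw [h1]
  have h2 : ∀ G : {G : Finset ℕ // Disjoint G S},
      p ((supersetEquiv S) G).1 = (V * g S) * g G.1 := by
    rintro ⟨G, hG⟩
    have hp : p ((supersetEquiv S) ⟨G, hG⟩).1 = V * g (S ∪ G) := rfl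
    rw [hp, g_union hG.symm, mul_assoc]
  rw [tsum_congr h2, ENNReal.tsum_mul_left, tsum_g_disj S]
  calc V * g S * ((∏ j ∈ S, v j) * V⁻¹)
      = (V * V⁻¹) * (g S * ∏ j ∈ S, v j) := by ring
    _ = g S * ∏ j ∈ S, v j := by
        rw [ENNReal.mul_inv_cancel V_pos V_ne_top, one_mul]
    _ = ∏ j ∈ S, (s j * v j) := by rw [g, ← Finset.prod_mul_distrib]
    _ = ∏ j ∈ S, w j := Finset.prod_congr rfl fun j _ => s_mul_v j

/-! ### The Bernoulli events -/

/-- the event corresponding to `ξ k = 1`. -/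
def B : ℕ → Set (Finset ℕ)
  | 0 => Set.univ
  | (k + 1) => {F : Finset ℕ | k ∈ F}

lemma mem_B (F : Finset ℕ) (i : ℕ) : F ∈ B i ↔ (i = 0 ∨ i - 1 ∈ F) := by
  cases i with
  | zero => simp [B]
  | succ k => simp [B]

lemma meas_B (k : ℕ) : (ℙ : Measure (Finset ℕ)) (B k) = 2⁻¹ ^ k := by
  cases k with
  | zero => simp [B]
  | succ k =>
      have : B (k + 1) = {F : Finset ℕ | {k} ⊆ F} := by
        ext F; simp [B]
      rw [this, meas_superset, Finset.prod_singleton, w]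

lemma iIndepSet_B : iIndepSet B (ℙ : Measure (Finset ℕ)) := by
  rw [iIndepSet_iff_meas_biInter (fun i => MeasurableSpace.measurableSet_top)]
  intro t
  classical
  have hinter : ⋂ i ∈ t, B i = {F : Finset ℕ | (t.erase 0).image (fun i => i - 1) ⊆ F} := by
    ext F
    simp only [Set.mem_iInter, Set.mem_setOf_eq, Finset.subset_iff, Finset.mem_image,
      Finset.mem_erase]
    constructor
    · rintro h j ⟨i, ⟨hi0, hit⟩, rfl⟩
      rcases (mem_B F i).1 (h i hit) with h0 | h1
      · exact absurd h0 hi0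
      · exact h1
    · intro h i hit
      rw [mem_B]
      by_cases hi0 : i = 0
      · exact Or.inl hi0
      · exact Or.inr (h ⟨i, ⟨hi0, hit⟩, rfl⟩)
  rw [hinter, meas_superset]
  have hinj : ∀ x ∈ t.erase 0, ∀ y ∈ t.erase 0,
      (fun i => i - 1) x = (fun i => i - 1) y → x = y := by
    intro x hx y hy hxy
    have hx0 : x ≠ 0 := (Finset.mem_erase.1 hx).1
    have hy0 : y ≠ 0 := (Finset.mem_erase.1 hy).1
    simp only at hxy
    omega
  rw [Finset.prod_image hinj]
  have h1 : ∀ i ∈ t.erase 0, w (i - 1) = 2⁻¹ ^ i := by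
    intro i hi
    have hi0 : i ≠ 0 := (Finset.mem_erase.1 hi).1
    rw [w]
    congr 1
    omega
  rw [Finset.prod_congr rfl h1]
  have h2 : ∀ i ∈ t, (ℙ : Measure (Finset ℕ)) (B i) = 2⁻¹ ^ i := fun i _ => meas_B i
  rw [Finset.prod_congr rfl h2]
  rcases Finset.decidableMem 0 t with h0 | h0
  · rw [Finset.erase_eq_of_notMem h0]
  · rw [Finset.prod_erase t (by norm_num : (2:ℝ≥0∞)⁻¹ ^ 0 = 1)]

/-- the Bernoulli random variables. -/
def ξ (k : ℕ) : Finset ℕ → ℝ := (B k).indicator fun _ => 1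

lemma ξ_indep : iIndepFun ξ (ℙ : Measure (Finset ℕ)) :=
  iIndepSet_B.iIndepFun_indicator

lemma ξ_eq_one_iff (k : ℕ) (F : Finset ℕ) : ξ k F = 1 ↔ F ∈ B k := by
  by_cases h : F ∈ B k
  · simp [ξ, Set.indicator_of_mem h, h]
  · simp [ξ, Set.indicator_of_notMem h, h]

lemma ξ_nonneg (k : ℕ) (F : Finset ℕ) : 0 ≤ ξ k F := by
  rw [ξ, Set.indicator]
  split <;> norm_num

lemma ξ_zero_or_one (k : ℕ) (F : Finset ℕ) : ξ k F = 0 ∨ ξ k F = 1 := by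
  rw [ξ, Set.indicator]
  split
  · exact Or.inr rfl
  · exact Or.inl rfl

lemma meas_ξ_eq_one (k : ℕ) :
    (ℙ : Measure (Finset ℕ)) {F : Finset ℕ | ξ k F = 1} = (2:ℝ≥0∞)⁻¹ ^ k := by
  have : {F : Finset ℕ | ξ k F = 1} = B k := by
    ext F; exact ξ_eq_one_iff k F
  rw [this, meas_B]

/-- the support finset of the sequence `k ↦ q k * ξ k F`. -/
def supp (F : Finset ℕ) : Finset ℕ := insert 0 (F.image (· + 1))

lemma mem_supp_of_mem_B {F : Finset ℕ} {k : ℕ} (h : F ∈ B k) : k ∈ supp F := by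
  rw [supp, Finset.mem_insert]
  rcases (mem_B F k).1 h with h0 | h1
  · exact Or.inl h0
  · rcases Nat.eq_zero_or_pos k with rfl | hk
    · exact Or.inl rfl
    · right
      rw [Finset.mem_image]
      exact ⟨k - 1, h1, by omega⟩

lemma ξ_eq_zero_of_not_mem_supp {F : Finset ℕ} {k : ℕ} (h : k ∉ supp F) : ξ k F = 0 := by
  rcases ξ_zero_or_one k F with h0 | h1
  · exact h0
  · exact absurd (mem_supp_of_mem_B ((ξ_eq_one_iff k F).1 h1)) h

end DiscretizationAux

section sums

open DiscretizationAux

/-- geometric tail sums. -/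
lemma tsum_geom_tail (j : ℕ) :
    ∑' k : ℕ, (if j ≤ k then (2:ℝ≥0∞)⁻¹ ^ k else 0) = 2⁻¹ ^ j * 2 := by
  induction j with
  | zero =>
      simp only [Nat.zero_le, if_true, pow_zero, one_mul]
      rw [ENNReal.tsum_geometric, one_sub_half]
      simp
  | succ j ih =>
      have hsplit : ∀ k : ℕ, (if j ≤ k then (2:ℝ≥0∞)⁻¹ ^ k else 0)
          = (if j + 1 ≤ k then (2:ℝ≥0∞)⁻¹ ^ k else 0) + (if k = j then (2:ℝ≥0∞)⁻¹ ^ k else 0) := by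
        intro k
        rcases lt_trichotomy k j with h | h | h
        · rw [if_neg (by omega), if_neg (by omega), if_neg (by omega), add_zero]
        · subst h
          rw [if_pos le_rfl, if_neg (by omega), if_pos rfl, zero_add]
        · rw [if_pos (by omega), if_pos (by omega), if_neg (by omega), add_zero]
      rw [tsum_congr hsplit, ENNReal.tsum_add] at ih
      have hsingle : ∑' k : ℕ, (if k = j then (2:ℝ≥0∞)⁻¹ ^ k else 0) = 2⁻¹ ^ j := by
        rw [tsum_eq_sum (s := {j}) (fun k hk => by
          rw [if_neg (by simpa using hk)])]
        simp
      rw [hsingle] at ih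
      have h2 : (2:ℝ≥0∞)⁻¹ ^ j * 2 = 2⁻¹ ^ j + 2⁻¹ ^ j := mul_two _
      rw [h2, add_comm (∑' (a : ℕ), if j + 1 ≤ a then (2:ℝ≥0∞)⁻¹ ^ a else 0) (2⁻¹ ^ j)] at ih
      have hne : (2:ℝ≥0∞)⁻¹ ^ j ≠ ∞ := ENNReal.pow_ne_top half_ne_top
      have h3 := (ENNReal.add_right_inj hne).1 ih
      rw [h3, pow_succ, mul_assoc, ENNReal.inv_mul_cancel (by simp) (by simp), mul_one]

end sums

end

open DiscretizationAux

/-- **Discretization.** For any nonnegative random variable `X` with continuous cumulative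
distribution function there is a nonnegative random variable `X'` (on some probability space)
such that `E X' ≤ 4 E X`, `X'` stochastically dominates `X`, and `X'` is a sum
`∑_k q_k ξ_k` of scaled independent Bernoulli random variables with `P(ξ_k = 1) = 2^{-k}`. -/
theorem discretization
    (Ω : Type) [MeasureSpace Ω] [IsProbabilityMeasure (ℙ : Measure Ω)]
    (X : Ω → ℝ) (hXmeas : Measurable X) (hX0 : ∀ ω, 0 ≤ X ω)
    (hcdf : Continuous fun t : ℝ => (ℙ {ω | X ω ≤ t}).toReal) :
    ∃ (Ω' : Type) (_ : MeasureSpace Ω') (_ : IsProbabilityMeasure (ℙ : Measure Ω'))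
      (X' : Ω' → ℝ) (q : ℕ → ℝ) (ξ : ℕ → Ω' → ℝ),
      Measurable X' ∧ (∀ ω', 0 ≤ X' ω') ∧
      -- (1) `E X' ≤ 4 E X`
      (∫⁻ ω', ENNReal.ofReal (X' ω') ∂ℙ ≤ 4 * ∫⁻ ω, ENNReal.ofReal (X ω) ∂ℙ) ∧
      -- (2) stochastic domination
      (∀ t : ℝ, 0 ≤ t → ℙ {ω | t ≤ X ω} ≤ ℙ {ω' | t ≤ X' ω'}) ∧
      -- (3) `X' = ∑_k q_k ξ_k` with `ξ_k` independent Bernoulli `2^{-k}`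
      (∀ k, 0 ≤ q k) ∧
      (∀ k, Measurable (ξ k)) ∧
      iIndepFun ξ ℙ ∧
      (∀ k ω', ξ k ω' = 0 ∨ ξ k ω' = 1) ∧
      (∀ k, ℙ {ω' | ξ k ω' = 1} = (2 : ℝ≥0∞)⁻¹ ^ k) ∧
      (∀ᵐ ω' ∂ℙ, HasSum (fun k => q k * ξ k ω') (X' ω')) := by
  classical
  -- the tail function of `X`
  set G : ℝ → ℝ≥0∞ := fun t => ℙ {ω | t ≤ X ω} with hG
  have hGanti : Antitone G := by
    intro a b hab
    exact measure_mono fun ω (h : b ≤ X ω) => hab.trans h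
  have hGle_one : ∀ t, G t ≤ 1 := fun t => prob_le_one
  -- nonemptiness of the quantile sets
  have hne : ∀ k : ℕ, ∃ t : ℝ, 0 ≤ t ∧ G t ≤ 2⁻¹ ^ k := by
    intro k
    have htends : Filter.Tendsto (fun n : ℕ => G n) Filter.atTop (nhds 0) := by
      have hmeas : ∀ n : ℕ, NullMeasurableSet {ω | (n:ℝ) ≤ X ω} (ℙ : Measure Ω) :=
        fun n => (hXmeas measurableSet_Ici).nullMeasurableSet
      have hanti : Antitone fun n : ℕ => {ω | (n:ℝ) ≤ X ω} := by
        intro a b hab ω (h : (b:ℝ) ≤ X ω)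
        exact le_trans (by exact_mod_cast Nat.cast_le.2 hab) h
      have h0 : ⋂ n : ℕ, {ω | (n:ℝ) ≤ X ω} = ∅ := by
        ext ω
        simp only [Set.mem_iInter, Set.mem_setOf_eq, Set.mem_empty_iff_false, iff_false,
          not_forall, not_le]
        obtain ⟨n, hn⟩ := exists_nat_gt (X ω)
        exact ⟨n, hn⟩
      have := tendsto_measure_iInter_atTop (μ := (ℙ : Measure Ω)) hmeas hanti
        ⟨0, measure_ne_top _ _⟩
      rw [h0] at this
      simp only [measure_empty] at this; exact this
    have hpos : (0:ℝ≥0∞) < 2⁻¹ ^ k := by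
      apply ENNReal.pow_pos
      simp
    have := htends.eventually_le_const hpos
    obtain ⟨n, hn⟩ := this.exists
    exact ⟨n, Nat.cast_nonneg n, hn⟩
  -- the quantile points
  set T : ℕ → ℝ := fun k => sInf {t : ℝ | 0 ≤ t ∧ G t ≤ 2⁻¹ ^ k} with hT
  have hbdd : ∀ k, BddBelow {t : ℝ | 0 ≤ t ∧ G t ≤ 2⁻¹ ^ k} :=
    fun k => ⟨0, fun t ht => ht.1⟩
  have hTnonneg : ∀ k, 0 ≤ T k := fun k =>
    le_csInf (let ⟨t, ht⟩ := hne k; ⟨t, ht⟩) fun t ht => ht.1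
  have hT0 : T 0 = 0 := by
    have h1 : T 0 ≤ 0 := csInf_le (hbdd 0) ⟨le_rfl, by simpa using hGle_one 0⟩
    exact le_antisymm h1 (hTnonneg 0)
  have hTmono : Monotone T := by
    intro a b hab
    apply le_csInf (let ⟨t, ht⟩ := hne b; ⟨t, ht⟩)
    intro t ht
    apply csInf_le (hbdd a)
    exact ⟨ht.1, ht.2.trans (pow_le_pow_right_of_le_one' half_le_one hab)⟩
  -- if `T k < t` then the tail at `t` is at most `2⁻¹ ^ k`
  have hub : ∀ k (t : ℝ), T k < t → G t ≤ 2⁻¹ ^ k := by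
    intro k t ht
    obtain ⟨y, hy, hyt⟩ := (csInf_lt_iff (hbdd k) (let ⟨t, ht⟩ := hne k; ⟨t, ht⟩)).1 ht
    exact (hGanti hyt.le).trans hy.2
  -- if `0 ≤ t < T k` then the tail at `t` is more than `2⁻¹ ^ k`
  have hlb : ∀ k (t : ℝ), 0 ≤ t → t < T k → 2⁻¹ ^ k < G t := by
    intro k t ht0 ht
    by_contra h
    push_neg at h
    exact absurd (csInf_le (hbdd k) ⟨ht0, h⟩) (not_le.2 ht)
  -- the coefficients
  set q : ℕ → ℝ := fun k => T (k + 1) with hq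
  have hq0 : ∀ k, 0 ≤ q k := fun k => hTnonneg (k + 1)
  -- the dominating random variable
  set X' : Finset ℕ → ℝ := fun F => ∑ k ∈ supp F, q k * ξ k F with hX'
  have hXsum : ∀ F : Finset ℕ, HasSum (fun k => q k * ξ k F) (X' F) := by
    intro F
    apply hasSum_sum_of_ne_finset_zero
    intro k hk
    rw [ξ_eq_zero_of_not_mem_supp hk, mul_zero]
  have hX'nonneg : ∀ F, 0 ≤ X' F :=
    fun F => Finset.sum_nonneg fun k _ => mul_nonneg (hq0 k) (ξ_nonneg k F)
  -- lower bound for `X'` on the event `B k`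
  have hX'ge : ∀ (k : ℕ) (F : Finset ℕ), F ∈ B k → q k ≤ X' F := by
    intro k F hF
    have h1 : q k * ξ k F = q k := by
      rw [(ξ_eq_one_iff k F).2 hF, mul_one]
    calc q k = q k * ξ k F := h1.symm
    _ ≤ ∑ k' ∈ supp F, q k' * ξ k' F :=
        Finset.single_le_sum (fun k' _ => mul_nonneg (hq0 k') (ξ_nonneg k' F))
          (mem_supp_of_mem_B hF)
  refine ⟨Finset ℕ, inferInstance, inferInstance, X', q, ξ, measurable_from_top,
    hX'nonneg, ?_, ?_, hq0, fun k => measurable_from_top, ξ_indep, ξ_zero_or_one,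
    meas_ξ_eq_one, Filter.Eventually.of_forall hXsum⟩
  · -- expectation bound
    -- E X' = ∑ 2⁻¹^k ofReal (T (k+1))
    have hEX' : ∫⁻ F, ENNReal.ofReal (X' F) ∂ℙ
        = ∑' k : ℕ, ENNReal.ofReal (T (k + 1)) * 2⁻¹ ^ k := by
      have hpt : ∀ F : Finset ℕ, ENNReal.ofReal (X' F)
          = ∑' k : ℕ, ENNReal.ofReal (q k * ξ k F) := by
        intro F
        rw [hX']
        rw [ENNReal.ofReal_sum_of_nonneg
          (fun k _ => mul_nonneg (hq0 k) (ξ_nonneg k F))]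
        rw [tsum_eq_sum (s := supp F) (fun k hk => by
          rw [ξ_eq_zero_of_not_mem_supp hk, mul_zero, ENNReal.ofReal_zero])]
      calc ∫⁻ F, ENNReal.ofReal (X' F) ∂ℙ
          = ∫⁻ F, ∑' k : ℕ, ENNReal.ofReal (q k * ξ k F) ∂ℙ := by
            exact lintegral_congr hpt
        _ = ∑' k : ℕ, ∫⁻ F, ENNReal.ofReal (q k * ξ k F) ∂ℙ :=
            lintegral_tsum fun k => measurable_from_top.aemeasurable
        _ = ∑' k : ℕ, ENNReal.ofReal (T (k + 1)) * 2⁻¹ ^ k := by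
            refine tsum_congr fun k => ?_
            have hind : ∀ F : Finset ℕ, ENNReal.ofReal (q k * ξ k F)
                = (B k).indicator (fun _ => ENNReal.ofReal (q k)) F := by
              intro F
              rw [ξ, Set.indicator, Set.indicator]
              split
              · rw [mul_one]
              · rw [mul_zero, ENNReal.ofReal_zero]
            calc ∫⁻ F, ENNReal.ofReal (q k * ξ k F) ∂ℙ
                = ∫⁻ F, (B k).indicator (fun _ => ENNReal.ofReal (q k)) F ∂ℙ := by
                  exact lintegral_congr hind
              _ = ENNReal.ofReal (q k) * ℙ (B k) :=
                  lintegral_indicator_const MeasurableSpace.measurableSet_top _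
              _ = ENNReal.ofReal (T (k + 1)) * 2⁻¹ ^ k := by rw [meas_B]
    rw [hEX']
    -- E X = ∫ G over (0, ∞)
    have hEX : ∫⁻ ω, ENNReal.ofReal (X ω) ∂ℙ = ∫⁻ t in Set.Ioi 0, G t := by
      exact lintegral_eq_lintegral_meas_le ℙ (Filter.Eventually.of_forall hX0)
        hXmeas.aemeasurable
    -- the increments
    set d : ℕ → ℝ≥0∞ := fun k => ENNReal.ofReal (T (k + 1) - T k) with hd
    have hofReal : ∀ n : ℕ, ENNReal.ofReal (T n) = ∑ j ∈ Finset.range n, d j := by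
      intro n
      induction n with
      | zero => simp [hT0]
      | succ n ih =>
          rw [Finset.sum_range_succ, ← ih, hd]
          rw [← ENNReal.ofReal_add (hTnonneg n) (sub_nonneg.2 (hTmono (Nat.le_succ n)))]
          congr 1
          ring
    -- lower bound: ∑ 2⁻¹^(k+1) d k ≤ ∫ G over (0,∞)
    have hGmeas : Measurable G := hGanti.measurable
    have hlower : ∑' k : ℕ, 2⁻¹ ^ (k + 1) * d k ≤ ∫⁻ t in Set.Ioi 0, G t := by
      set I : ℕ → Set ℝ := fun k => Set.Ioo (T k) (T (k + 1)) with hI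
      have hImeas : ∀ k, MeasurableSet (I k) := fun k => measurableSet_Ioo
      have hIdisj : Pairwise (Function.onFun Disjoint I) := by
        intro i j hij
        rcases hij.lt_or_gt with h | h
        · apply Set.disjoint_left.2
          rintro t ⟨_, ht2⟩ ⟨ht3, _⟩
          exact absurd (ht2.trans_le ((hTmono h).trans ht3.le)) (lt_irrefl t)
        · apply Set.disjoint_left.2
          rintro t ⟨ht1, _⟩ ⟨_, ht4⟩
          exact absurd (ht4.trans_le ((hTmono h).trans ht1.le)) (lt_irrefl t)
      have hIsub : (⋃ k, I k) ⊆ Set.Ioi 0 := by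
        rintro t ⟨_, ⟨k, rfl⟩, ht⟩
        exact lt_of_le_of_lt (hTnonneg k) ht.1
      calc ∑' k : ℕ, 2⁻¹ ^ (k + 1) * d k
          ≤ ∑' k : ℕ, ∫⁻ t in I k, G t := by
            refine ENNReal.tsum_le_tsum fun k => ?_
            have hvol : (volume (I k)) = d k := by
              rw [hI, hd, Real.volume_Ioo]
            calc 2⁻¹ ^ (k + 1) * d k = 2⁻¹ ^ (k + 1) * volume (I k) := by rw [hvol]
              _ = ∫⁻ _ in I k, 2⁻¹ ^ (k + 1) := (setLIntegral_const _ _).symm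
              _ ≤ ∫⁻ t in I k, G t := by
                  refine setLIntegral_mono hGmeas fun t ht => ?_
                  exact (hlb (k + 1) t ((hTnonneg k).trans ht.1.le) ht.2).le
        _ = ∫⁻ t in ⋃ k, I k, G t := (lintegral_iUnion hImeas hIdisj _).symm
        _ ≤ ∫⁻ t in Set.Ioi 0, G t := lintegral_mono_set hIsub
    -- summation by parts
    have hsum : ∑' k : ℕ, ENNReal.ofReal (T (k + 1)) * 2⁻¹ ^ k
        = 4 * ∑' k : ℕ, 2⁻¹ ^ (k + 1) * d k := by
      have h1 : ∀ k : ℕ, ENNReal.ofReal (T (k + 1)) * 2⁻¹ ^ k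
          = ∑' j : ℕ, (if j ≤ k then d j * 2⁻¹ ^ k else 0) := by
        intro k
        rw [hofReal, Finset.sum_mul]
        rw [tsum_eq_sum (s := Finset.range (k + 1)) (fun j hj => by
          rw [if_neg (by simpa [Nat.lt_succ_iff] using hj)])]
        refine Finset.sum_congr rfl fun j hj => ?_
        rw [if_pos (by simpa [Nat.lt_succ_iff] using hj)]
      rw [tsum_congr h1, ENNReal.tsum_comm]
      have h2 : ∀ j : ℕ, ∑' k : ℕ, (if j ≤ k then d j * 2⁻¹ ^ k else 0)
          = d j * (2⁻¹ ^ j * 2) := by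
        intro j
        rw [← tsum_geom_tail j, ← ENNReal.tsum_mul_left]
        refine tsum_congr fun k => ?_
        split <;> simp
      rw [tsum_congr h2, ← ENNReal.tsum_mul_left]
      refine tsum_congr fun j => ?_
      have : (4:ℝ≥0∞) * (2⁻¹ ^ (j + 1) * d j) = (4 * 2⁻¹) * 2⁻¹ ^ j * d j := by
        rw [pow_succ]
        ring
      rw [this]
      have h4 : (4:ℝ≥0∞) * 2⁻¹ = 2 := by
        have : (4:ℝ≥0∞) = 2 * 2 := by norm_num
        rw [this, mul_assoc, ENNReal.mul_inv_cancel (by norm_num) (by norm_num), mul_one]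
      rw [h4]
      ring
    rw [hsum, hEX]
    exact mul_le_mul_right hlower 4
  · -- stochastic domination
    intro t ht
    by_cases hGt : G t = 0
    · change G t ≤ _
      rw [hGt]
      exact zero_le
    · obtain ⟨m, hm⟩ := ENNReal.exists_inv_two_pow_lt hGt
      have hex : ∃ k : ℕ, (2:ℝ≥0∞)⁻¹ ^ (k + 1) < G t := by
        refine ⟨m, lt_of_le_of_lt ?_ hm⟩
        exact pow_le_pow_right_of_le_one' half_le_one (Nat.le_succ m)
      set k := Nat.find hex with hk
      have hklt : (2:ℝ≥0∞)⁻¹ ^ (k + 1) < G t := Nat.find_spec hex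
      have hGk : G t ≤ 2⁻¹ ^ k := by
        cases hk' : k with
        | zero => simpa using hGle_one t
        | succ n =>
            have := Nat.find_min hex (by omega : n < k)
            push_neg at this
            simpa [hk'] using this
      have hqk : t ≤ q k := by
        by_contra h
        push_neg at h
        exact absurd (hub (k + 1) t h) (not_le.2 hklt)
      have hsub : B k ⊆ {F : Finset ℕ | t ≤ X' F} := by
        intro F hF
        exact hqk.trans (hX'ge k F hF)
      calc ℙ {ω | t ≤ X ω} ≤ 2⁻¹ ^ k := hGk
        _ = ℙ (B k) := (meas_B k).symm
        _ ≤ ℙ {F : Finset ℕ | t ≤ X' F} := measure_mono hsub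
end

section
/- There exists an absolute constant C such that the following holds. Let A be an n × n random matrix with i.i.d. entries A_{ij} that have mean zero, variance at most one, and satisfy |A_{ij}| ≤ √n/2 almost surely, and let ε ∈ (0,1/2]. Then with probability at least 1 − exp(−εn) there exists a set J ⊆ {1,...,n} with |J| ≤ εn such that the matrix A_{J^c}, obtained from A by replacing all entries in the columns indexed by J with zero, satisfies ‖A_{J^c}‖_{2→∞} ≤ C·√(ln ε^{−1})·√n. -/
open MeasureTheory ProbabilityTheory
open scoped ENNReal NNReal

/-- The `ℓ₂ → ℓ∞` norm of a matrix: the maximum Euclidean norm of its rows. -/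
noncomputable def norm2toInf {n : ℕ} (A : Matrix (Fin n) (Fin n) ℝ) : ℝ :=
  ⨆ i, Real.sqrt (∑ j, (A i j) ^ 2)

/-- The matrix obtained from `A` by setting to zero all entries in the columns indexed by `J`. -/
noncomputable def colZero {n : ℕ} (A : Matrix (Fin n) (Fin n) ℝ) (J : Finset (Fin n)) :
    Matrix (Fin n) (Fin n) ℝ :=
  Matrix.of fun i j => if j ∈ J then 0 else A i j

namespace CR
open Finset

noncomputable def lvl (K : ℝ) (t : ℕ) : ℝ := K * 2 ^ t

noncomputable def ntR {n : ℕ} (K : ℝ) (t : ℕ) (x : Fin n → ℝ) : ℝ :=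
  ∑ j, if lvl K t < (x j) ^ 2 then (1:ℝ) else 0

noncomputable def fRow {n : ℕ} (K : ℝ) (c : ℕ → ℝ) (T : ℕ) (x : Fin n → ℝ) : ℝ :=
  (Finset.range (T+1)).sup' (Finset.nonempty_range_add_one)
    (fun t => if c t < ntR K t x then ntR K t x else 0)

noncomputable def RRow {n : ℕ} (K : ℝ) (c : ℕ → ℝ) (T : ℕ) (x : Fin n → ℝ) : Finset (Fin n) :=
  Finset.filter (fun j => ∃ t ≤ T, c t < ntR K t x ∧ lvl K t < (x j) ^ 2) Finset.univ

lemma mem_RRow {n : ℕ} {K : ℝ} {c : ℕ → ℝ} {T : ℕ} {x : Fin n → ℝ} {j : Fin n} :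
    j ∈ RRow K c T x ↔ ∃ t, t ≤ T ∧ c t < ntR K t x ∧ lvl K t < (x j)^2 := by
  unfold RRow
  rw [Finset.mem_filter]
  simp

lemma ntR_nonneg {n : ℕ} (K : ℝ) (t : ℕ) (x : Fin n → ℝ) : 0 ≤ ntR K t x := by
  apply Finset.sum_nonneg; intro j _; positivity

lemma ntR_eq_card {n : ℕ} (K : ℝ) (t : ℕ) (x : Fin n → ℝ) :
    ntR K t x = ((@Finset.filter _ (fun j => lvl K t < (x j) ^ 2) (Classical.decPred _)
      Finset.univ).card : ℝ) := by
  rw [ntR]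
  rw [Finset.card_filter]
  push_cast
  apply Finset.sum_congr rfl
  intro j _
  split <;> simp

lemma ntR_le {n : ℕ} (K : ℝ) (t : ℕ) (x : Fin n → ℝ) : ntR K t x ≤ n := by
  rw [ntR_eq_card]
  exact_mod_cast Finset.card_le_card (Finset.subset_univ _) |>.trans (le_of_eq (Finset.card_univ.trans (Fintype.card_fin n)))

lemma fRow_nonneg {n : ℕ} (K : ℝ) (c : ℕ → ℝ) (T : ℕ) (x : Fin n → ℝ) : 0 ≤ fRow K c T x := by
  refine le_trans ?_ (Finset.le_sup' _ (Finset.self_mem_range_succ T))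
  split
  · exact ntR_nonneg K T x
  · exact le_refl 0


lemma lvl_nonneg {K : ℝ} (hK : 0 < K) (t : ℕ) : 0 ≤ lvl K t := by
  unfold lvl; positivity

lemma lvl_mono {K : ℝ} (hK : 0 < K) {s t : ℕ} (h : s ≤ t) : lvl K s ≤ lvl K t := by
  unfold lvl
  have : (2:ℝ)^s ≤ 2^t := pow_le_pow_right₀ (by norm_num) h
  nlinarith

lemma lvl_geom {K : ℝ} (T : ℕ) : ∑ t ∈ Finset.range (T+1), lvl K t = K * (2^(T+1) - 1) := by
  unfold lvl
  rw [← Finset.mul_sum]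
  congr 1
  have := geom_sum_eq (by norm_num : (2:ℝ) ≠ 1) (T+1)
  rw [this]; ring

lemma ite_lvl_nonneg {K : ℝ} (hK : 0 < K) (t : ℕ) (y : ℝ) :
    0 ≤ (if lvl K t < y then lvl K t else 0) := by
  split
  · exact lvl_nonneg hK t
  · exact le_refl 0

-- L2 pointwise upper decomposition
lemma ptwise_upper {K : ℝ} (hK : 0 < K) : ∀ (T : ℕ) (y : ℝ), 0 ≤ y → y ≤ lvl K T →
    y ≤ K + ∑ t ∈ Finset.range (T+1), (if lvl K t < y then lvl K t else 0) := by
  intro T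
  induction T with
  | zero =>
    intro y hy0 hyT
    rw [Finset.sum_range_succ, Finset.sum_range_zero]
    have h0 : ¬ (lvl K 0 < y) := by
      simp only [lvl, pow_zero, mul_one] at hyT ⊢; linarith
    rw [if_neg h0]
    simp only [lvl, pow_zero, mul_one] at hyT; linarith
  | succ T ih =>
    intro y hy0 hyT
    by_cases h : y ≤ lvl K T
    · have hind := ih y hy0 h
      rw [Finset.sum_range_succ]
      have hnn := ite_lvl_nonneg hK (T+1) y
      linarith
    · push_neg at h
      have hall : ∀ t ∈ Finset.range (T+1), (if lvl K t < y then lvl K t else 0) = lvl K t := by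
        intro t ht
        rw [Finset.mem_range] at ht
        exact if_pos (lt_of_le_of_lt (lvl_mono hK (by omega)) h)
      rw [Finset.sum_range_succ, Finset.sum_congr rfl hall, lvl_geom]
      have hnn := ite_lvl_nonneg hK (T+1) y
      have h2 : y ≤ K * 2^(T+1) := by unfold lvl at hyT; exact hyT
      nlinarith

-- L3 pointwise moment
lemma ptwise_moment {K : ℝ} (hK : 0 < K) : ∀ (T : ℕ) (y : ℝ), 0 ≤ y →
    ∑ t ∈ Finset.range (T+1), (if lvl K t < y then lvl K t else 0) ≤ 2 * y := by
  intro T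
  induction T with
  | zero =>
    intro y hy0
    rw [Finset.sum_range_succ, Finset.sum_range_zero, zero_add]
    split
    · rename_i hlt; simp only [lvl, pow_zero, mul_one] at hlt ⊢; linarith
    · linarith
  | succ T ih =>
    intro y hy0
    rw [Finset.sum_range_succ]
    by_cases h : lvl K (T+1) < y
    · rw [if_pos h]
      have hall : ∀ t ∈ Finset.range (T+1), (if lvl K t < y then lvl K t else 0) = lvl K t := by
        intro t ht
        rw [Finset.mem_range] at ht
        exact if_pos (lt_of_le_of_lt (lvl_mono hK (by omega)) h)
      rw [Finset.sum_congr rfl hall, lvl_geom]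
      unfold lvl at h ⊢
      nlinarith
    · rw [if_neg h, add_zero]
      exact ih y hy0


lemma card_RRow_le_fRow {n : ℕ} {K : ℝ} (hK : 0 < K) (c : ℕ → ℝ) (T : ℕ) (x : Fin n → ℝ) :
    ((RRow K c T x).card : ℝ) ≤ fRow K c T x := by
  by_cases hb : ∃ t, t ≤ T ∧ c t < ntR K t x
  · set s := Nat.find hb with hs_def
    have hs := Nat.find_spec hb
    have hsub : RRow K c T x ⊆ @Finset.filter _ (fun j => lvl K s < (x j) ^ 2)
        (Classical.decPred _) Finset.univ := by
      intro j hj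
      simp only [RRow, Finset.mem_filter, Finset.mem_univ, true_and] at hj ⊢
      obtain ⟨t, htT, hbad, hlt⟩ := hj
      have hst : s ≤ t := Nat.find_min' hb ⟨htT, hbad⟩
      exact lt_of_le_of_lt (lvl_mono hK hst) hlt
    have h1 : ((RRow K c T x).card : ℝ) ≤ ntR K s x := by
      rw [ntR_eq_card]
      exact_mod_cast Finset.card_le_card hsub
    refine h1.trans ?_
    have hmem : s ∈ Finset.range (T+1) := Finset.mem_range.2 (by omega)
    refine le_trans ?_ (Finset.le_sup' _ hmem)
    rw [if_pos hs.2]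
  · have hempty : RRow K c T x = ∅ := by
      apply Finset.eq_empty_of_forall_notMem
      intro j hj
      simp only [RRow, Finset.mem_filter, Finset.mem_univ, true_and] at hj
      obtain ⟨t, htT, hbad, _⟩ := hj
      exact hb ⟨t, htT, hbad⟩
    rw [hempty]
    simpa using fRow_nonneg K c T x

lemma kept_bound {n : ℕ} {K : ℝ} (hK : 0 < K) (c : ℕ → ℝ) (T : ℕ) (x : Fin n → ℝ)
    (hx : ∀ j, (x j)^2 ≤ lvl K T) (hc : ∀ t, 0 ≤ c t)
    (kept : Finset (Fin n)) (hkept : ∀ j ∈ kept, j ∉ RRow K c T x) :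
    ∑ j ∈ kept, (x j)^2 ≤ K * n + ∑ t ∈ Finset.range (T+1), lvl K t * c t := by
  have h1 : ∀ j ∈ kept, (x j)^2 ≤ K + ∑ t ∈ Finset.range (T+1),
      (if lvl K t < (x j)^2 then lvl K t else 0) :=
    fun j _ => ptwise_upper hK T ((x j)^2) (sq_nonneg _) (hx j)
  calc ∑ j ∈ kept, (x j)^2
      ≤ ∑ j ∈ kept, (K + ∑ t ∈ Finset.range (T+1),
          (if lvl K t < (x j)^2 then lvl K t else 0)) := Finset.sum_le_sum h1
    _ = K * kept.card + ∑ t ∈ Finset.range (T+1), ∑ j ∈ kept,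
          (if lvl K t < (x j)^2 then lvl K t else 0) := by
        rw [Finset.sum_add_distrib, Finset.sum_const, Finset.sum_comm]
        simp [mul_comm]
    _ ≤ K * n + ∑ t ∈ Finset.range (T+1), lvl K t * c t := by
        gcongr K * ?_ + ?_
        · exact_mod_cast (Finset.card_le_card (Finset.subset_univ _)).trans
            (le_of_eq (by simp))
        · apply Finset.sum_le_sum
          intro t ht
          rw [Finset.mem_range] at ht
          have htT : t ≤ T := by omega
          by_cases hbad : c t < ntR K t x
          · have hzero : ∀ j ∈ kept, (if lvl K t < (x j)^2 then lvl K t else 0) = 0 := by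
              intro j hj
              rw [if_neg]
              intro hlt
              exact hkept j hj (mem_RRow.2 ⟨t, htT, hbad, hlt⟩)
            rw [Finset.sum_congr rfl hzero]
            simp only [Finset.sum_const_zero]
            exact mul_nonneg (lvl_nonneg hK t) (hc t)
          · push_neg at hbad
            have heq : ∑ j ∈ kept, (if lvl K t < (x j)^2 then lvl K t else 0)
                = lvl K t * ∑ j ∈ kept, (if lvl K t < (x j)^2 then (1:ℝ) else 0) := by
              rw [Finset.mul_sum]
              apply Finset.sum_congr rfl
              intro j _
              split <;> simp
            rw [heq]
            have h2 : ∑ j ∈ kept, (if lvl K t < (x j)^2 then (1:ℝ) else 0) ≤ ntR K t x := by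
              rw [ntR]
              apply Finset.sum_le_sum_of_subset_of_nonneg (Finset.subset_univ _)
              intro j _ _
              positivity
            have h3 := h2.trans hbad
            have := lvl_nonneg hK t
            nlinarith

lemma natsum_pow (T : ℕ) : (∑ t ∈ Finset.range (T+1), 2^t * (T - t)) + T + 2 = 2^(T+1) := by
  induction T with
  | zero => simp
  | succ T ih =>
    have hstep : ∑ t ∈ Finset.range (T+2), 2^t * (T + 1 - t)
        = (∑ t ∈ Finset.range (T+1), 2^t * (T - t)) + (2^(T+1) - 1) := by
      rw [Finset.sum_range_succ]
      have h1 : ∀ t ∈ Finset.range (T+1), 2^t * (T + 1 - t) = 2^t * (T - t) + 2^t := by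
        intro t ht
        rw [Finset.mem_range] at ht
        have : T + 1 - t = (T - t) + 1 := by omega
        rw [this, Nat.mul_add, Nat.mul_one]
      rw [Finset.sum_congr rfl h1, Finset.sum_add_distrib]
      have h2 : ∑ t ∈ Finset.range (T+1), 2^t = 2^(T+1) - 1 := by
        have := Nat.geomSum_eq (le_refl 2) (T+1)
        simpa using this
      rw [h2]
      simp

    have h2 : (1:ℕ) ≤ 2^(T+1) := Nat.one_le_two_pow
    rw [hstep]
    omega

lemma budget {n : ℕ} {K : ℝ} (T : ℕ) (μ : ℕ → ℝ) (hK : Real.exp 5 ≤ K) (h1K : 1 ≤ K)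
    (hT : K * 2^(T+1) ≤ n) (hμ : ∑ t ∈ Finset.range (T+1), lvl K t * μ t ≤ 2*n)
    (hμ0 : ∀ t, 0 ≤ μ t) :
    ∑ t ∈ Finset.range (T+1), lvl K t * (Real.exp 5 * μ t + 4*K + ((T - t : ℕ):ℝ)) ≤ 7*K*n := by
  have hK0 : 0 < K := lt_of_lt_of_le (Real.exp_pos 5) hK
  have hn0 : (0:ℝ) ≤ n := Nat.cast_nonneg n
  have hsplit : ∑ t ∈ Finset.range (T+1), lvl K t * (Real.exp 5 * μ t + 4*K + ((T - t : ℕ):ℝ))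
      = Real.exp 5 * (∑ t ∈ Finset.range (T+1), lvl K t * μ t)
        + 4*K*(∑ t ∈ Finset.range (T+1), lvl K t)
        + K * (∑ t ∈ Finset.range (T+1), (2:ℝ)^t * ((T - t : ℕ):ℝ)) := by
    rw [Finset.mul_sum, Finset.mul_sum, Finset.mul_sum, ← Finset.sum_add_distrib,
      ← Finset.sum_add_distrib]
    apply Finset.sum_congr rfl
    intro t _
    unfold lvl
    ring
  rw [hsplit]
  have hb1 : Real.exp 5 * (∑ t ∈ Finset.range (T+1), lvl K t * μ t) ≤ 2*K*n := by
    have h0 : 0 ≤ ∑ t ∈ Finset.range (T+1), lvl K t * μ t := by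
      apply Finset.sum_nonneg
      intro t _
      exact mul_nonneg (lvl_nonneg hK0 t) (hμ0 t)
    calc Real.exp 5 * (∑ t ∈ Finset.range (T+1), lvl K t * μ t) ≤ K * (2*n) := by
          apply mul_le_mul hK (by linarith) h0 (le_of_lt hK0)
      _ = 2*K*n := by ring
  have hb2 : 4*K*(∑ t ∈ Finset.range (T+1), lvl K t) ≤ 4*K*n := by
    rw [lvl_geom]
    have : K * (2^(T+1) - 1) ≤ n := by nlinarith
    nlinarith
  have hb3 : K * (∑ t ∈ Finset.range (T+1), (2:ℝ)^t * ((T - t : ℕ):ℝ)) ≤ K*n := by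
    have hnat : (∑ t ∈ Finset.range (T+1), 2^t * (T - t)) ≤ 2^(T+1) := by
      have := natsum_pow T
      omega
    have hcast : (∑ t ∈ Finset.range (T+1), (2:ℝ)^t * ((T - t : ℕ):ℝ)) ≤ (2:ℝ)^(T+1) := by
      have := (Nat.cast_le (α := ℝ)).2 hnat
      push_cast at this
      convert this using 2
    have h2 : K * ((2:ℝ)^(T+1)) ≤ n := by
      calc K * ((2:ℝ)^(T+1)) = K * 2^(T+1) := by norm_num
        _ ≤ n := hT
    nlinarith [pow_pos (by norm_num : (0:ℝ) < 2) (T+1)]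
  have : (0:ℝ) ≤ K*n := by positivity
  linarith

section Prob
variable {Ω : Type} [MeasureSpace Ω] [IsProbabilityMeasure (ℙ : Measure Ω)]

lemma integrable_ite_const {p : Ω → Prop} [DecidablePred p] (h : MeasurableSet {ω | p ω})
    (a b : ℝ) : Integrable (fun ω => if p ω then a else b) ℙ := by
  have heq : (fun ω => if p ω then a else b)
      = fun ω => Set.indicator {ω | p ω} (fun _ => a - b) ω + b := by
    funext ω
    by_cases hp : p ω
    · simp [hp, Set.indicator_of_mem (by exact hp : ω ∈ {ω | p ω})]
    · simp [hp, Set.indicator_of_notMem (by exact hp : ω ∉ {ω | p ω})]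
  rw [heq]
  exact (((integrable_const (a - b)).indicator h)).add (integrable_const b)

lemma integral_ite_const {p : Ω → Prop} [DecidablePred p] (h : MeasurableSet {ω | p ω})
    (a : ℝ) : ∫ ω, (if p ω then a else 0) ∂ℙ = a * (ℙ {ω | p ω}).toReal := by
  have heq : (fun ω => if p ω then a else (0:ℝ))
      = fun ω => Set.indicator {ω | p ω} (fun _ => a) ω := by
    funext ω
    by_cases hp : p ω
    · simp [hp, Set.indicator_of_mem (by exact hp : ω ∈ {ω | p ω})]
    · simp [hp, Set.indicator_of_notMem (by exact hp : ω ∉ {ω | p ω})]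
  rw [heq, MeasureTheory.integral_indicator_const _ h]
  simp [mul_comm, measureReal_def]

lemma integral_ite_const' {p : Ω → Prop} [DecidablePred p] (h : MeasurableSet {ω | p ω})
    (a : ℝ) : ∫ ω, (if p ω then a else 1) ∂ℙ = 1 + (a - 1) * (ℙ {ω | p ω}).toReal := by
  have heq : (fun ω => if p ω then a else (1:ℝ))
      = fun ω => (if p ω then (a-1) else 0) + 1 := by
    funext ω
    by_cases hp : p ω <;> simp [hp]
  rw [heq, MeasureTheory.integral_add (integrable_ite_const h (a-1) 0) (integrable_const 1),
    integral_ite_const h]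
  simp [add_comm]

end Prob

section Chernoff
variable {Ω : Type} [MeasureSpace Ω] [IsProbabilityMeasure (ℙ : Measure Ω)]
variable {n : ℕ} {X : Fin n × Fin n → Ω → ℝ}

lemma count_chernoff (hmeas : ∀ p, Measurable (X p))
    (hindep : iIndepFun X ℙ)
    {K : ℝ} (t : ℕ) (i : Fin n) (a : ℝ)
    (ha : Real.exp 5 * (∑ j, (ℙ {ω | lvl K t < (X (i,j) ω)^2}).toReal) ≤ a) :
    ℙ {ω | a ≤ ntR K t (fun j => X (i,j) ω)} ≤ ENNReal.ofReal (Real.exp (-4 * a)) := by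
  classical
  set χ : Fin n × Fin n → Ω → ℝ :=
    fun p ω => if lvl K t < (X p ω)^2 then 1 else 0 with hχ
  have hmeasset : ∀ p, MeasurableSet {ω | lvl K t < (X p ω)^2} :=
    fun p => measurableSet_lt measurable_const ((hmeas p).pow_const 2)
  have hχmeas : ∀ p, Measurable (χ p) := by
    intro p
    exact Measurable.ite (hmeasset p) measurable_const measurable_const
  have hχindep : iIndepFun χ ℙ := by
    have := hindep.comp (fun _ (y : ℝ) => if lvl K t < y^2 then (1:ℝ) else 0)
      (fun _ => Measurable.ite (measurableSet_lt measurable_const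
        ((measurable_id.pow_const 2))) measurable_const measurable_const)
    exact this
  set S : Finset (Fin n × Fin n) := {i} ×ˢ Finset.univ with hS
  have hexpχ : ∀ p, (fun ω => Real.exp (5 * χ p ω))
      = fun ω => if lvl K t < (X p ω)^2 then Real.exp 5 else 1 := by
    intro p
    funext ω
    by_cases hp : lvl K t < (X p ω)^2 <;> simp [hχ, hp]
  have hint : ∀ p ∈ S, Integrable (fun ω => Real.exp (5 * χ p ω)) ℙ := by
    intro p _
    rw [hexpχ p]
    exact integrable_ite_const (hmeasset p) _ _
  have hseteq : {ω | a ≤ ntR K t (fun j => X (i,j) ω)}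
      = {ω | a ≤ (∑ p ∈ S, χ p) ω} := by
    ext ω
    simp only [Set.mem_setOf_eq, Finset.sum_apply, hS, Finset.sum_product,
      Finset.sum_singleton]
    rw [ntR]
  have hto := measure_ge_le_exp_mul_mgf (X := ∑ p ∈ S, χ p) (μ := ℙ) a (by norm_num : (0:ℝ) ≤ 5)
    (hχindep.integrable_exp_mul_sum hχmeas hint)
  rw [hχindep.mgf_sum hχmeas S] at hto
  have hmgf_le : ∀ p ∈ S, mgf (χ p) ℙ 5
      ≤ Real.exp (Real.exp 5 * (ℙ {ω | lvl K t < (X p ω)^2}).toReal) := by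
    intro p _
    have : mgf (χ p) ℙ 5 = 1 + (Real.exp 5 - 1) * (ℙ {ω | lvl K t < (X p ω)^2}).toReal := by
      rw [mgf]
      rw [show (fun ω => Real.exp (5 * χ p ω)) = _ from hexpχ p] at *
      exact integral_ite_const' (hmeasset p) _
    rw [this]
    have h0 : (0:ℝ) ≤ (ℙ {ω | lvl K t < (X p ω)^2}).toReal := ENNReal.toReal_nonneg
    calc 1 + (Real.exp 5 - 1) * (ℙ _).toReal
        ≤ Real.exp ((Real.exp 5 - 1) * (ℙ {ω | lvl K t < (X p ω)^2}).toReal) := by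
          apply Real.add_one_le_exp _ |>.trans_eq' (by ring_nf)
      _ ≤ _ := by
          apply Real.exp_le_exp.2
          nlinarith [Real.exp_pos (5:ℝ)]
  have hprod : ∏ p ∈ S, mgf (χ p) ℙ 5
      ≤ Real.exp (Real.exp 5 * (∑ j, (ℙ {ω | lvl K t < (X (i,j) ω)^2}).toReal)) := by
    calc ∏ p ∈ S, mgf (χ p) ℙ 5
        ≤ ∏ p ∈ S, Real.exp (Real.exp 5 * (ℙ {ω | lvl K t < (X p ω)^2}).toReal) := by
          apply Finset.prod_le_prod
          · intro p _
            apply mgf_nonneg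
          · exact hmgf_le
      _ = Real.exp (∑ p ∈ S, Real.exp 5 * (ℙ {ω | lvl K t < (X p ω)^2}).toReal) := by
          rw [Real.exp_sum]
      _ = _ := by
          rw [hS, Finset.sum_product, Finset.sum_singleton, Finset.mul_sum]
  have hfinal : (ℙ {ω | a ≤ ntR K t (fun j => X (i,j) ω)}).toReal ≤ Real.exp (-4 * a) := by
    rw [hseteq]
    refine hto.trans ?_
    calc Real.exp (-5 * a) * ∏ p ∈ S, mgf (χ p) ℙ 5
        ≤ Real.exp (-5 * a) * Real.exp (Real.exp 5
            * (∑ j, (ℙ {ω | lvl K t < (X (i,j) ω)^2}).toReal)) := by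
          apply mul_le_mul_of_nonneg_left hprod (le_of_lt (Real.exp_pos _))
      _ = Real.exp (-5 * a + Real.exp 5 * (∑ j, (ℙ {ω | lvl K t < (X (i,j) ω)^2}).toReal)) := by
          rw [← Real.exp_add]
      _ ≤ Real.exp (-4 * a) := by
          apply Real.exp_le_exp.2
          linarith
  rw [← hseteq] at *
  exact (ENNReal.le_ofReal_iff_toReal_le (measure_ne_top _ _) (le_of_lt (Real.exp_pos _))).2 hfinal

end Chernoff

lemma measurable_ntR {n : ℕ} (K : ℝ) (t : ℕ) : Measurable (fun x : Fin n → ℝ => ntR K t x) := by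
  unfold ntR
  apply Finset.measurable_sum
  intro j _
  exact Measurable.ite (measurableSet_lt measurable_const
    ((measurable_pi_apply j).pow_const 2)) measurable_const measurable_const

lemma measurable_sup' {β : Type*} [MeasurableSpace β] {ι : Type*} (s : Finset ι)
    (hs : s.Nonempty) (g : ι → β → ℝ) (hg : ∀ i, Measurable (g i)) :
    Measurable (fun b => s.sup' hs (fun i => g i b)) := by
  induction hs using Finset.Nonempty.cons_induction with
  | singleton a => simpa using hg a
  | cons a s ha hs ih =>
    have heq : ∀ b : β, (Finset.cons a s ha).sup' (Finset.cons_nonempty ha) (fun i => g i b)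
        = max (g a b) (s.sup' hs (fun i => g i b)) := by
      intro b
      rw [Finset.sup'_cons hs]
    simp only [heq]
    exact (hg a).max ih

lemma measurable_fRow {n : ℕ} (K : ℝ) (c : ℕ → ℝ) (T : ℕ) :
    Measurable (fun x : Fin n → ℝ => fRow K c T x) := by
  unfold fRow
  apply measurable_sup'
  intro t
  exact Measurable.ite (measurableSet_lt measurable_const (measurable_ntR K t))
    (measurable_ntR K t) measurable_const

section Moment
variable {Ω : Type} [MeasureSpace Ω] [IsProbabilityMeasure (ℙ : Measure Ω)]

lemma entry_moment {K : ℝ} (hK : 0 < K) (T : ℕ) (Y : Ω → ℝ) (hY : Measurable Y)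
    (hsq : Integrable (fun ω => (Y ω)^2) ℙ) (hvar : ∫ ω, (Y ω)^2 ∂ℙ ≤ 1) :
    ∑ t ∈ Finset.range (T+1), lvl K t * (ℙ {ω | lvl K t < (Y ω)^2}).toReal ≤ 2 := by
  classical
  have hmeasset : ∀ t, MeasurableSet {ω | lvl K t < (Y ω)^2} :=
    fun t => measurableSet_lt measurable_const (hY.pow_const 2)
  have hterm : ∀ t, lvl K t * (ℙ {ω | lvl K t < (Y ω)^2}).toReal
      = ∫ ω, (if lvl K t < (Y ω)^2 then lvl K t else 0) ∂ℙ := by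
    intro t
    rw [integral_ite_const (hmeasset t)]
  have hsum : ∑ t ∈ Finset.range (T+1), lvl K t * (ℙ {ω | lvl K t < (Y ω)^2}).toReal
      = ∫ ω, (∑ t ∈ Finset.range (T+1), if lvl K t < (Y ω)^2 then lvl K t else 0) ∂ℙ := by
    rw [MeasureTheory.integral_finset_sum]
    · exact Finset.sum_congr rfl (fun t _ => hterm t)
    · intro t _
      exact integrable_ite_const (hmeasset t) _ _
  rw [hsum]
  have hle : ∫ ω, (∑ t ∈ Finset.range (T+1), if lvl K t < (Y ω)^2 then lvl K t else 0) ∂ℙ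
      ≤ ∫ ω, 2 * (Y ω)^2 ∂ℙ := by
    apply MeasureTheory.integral_mono
    · apply MeasureTheory.integrable_finset_sum
      intro t _
      exact integrable_ite_const (hmeasset t) _ _
    · exact hsq.const_mul 2
    · intro ω
      exact ptwise_moment hK T ((Y ω)^2) (sq_nonneg _)
  refine hle.trans ?_
  rw [MeasureTheory.integral_const_mul]
  linarith

end Moment

lemma exp_neg_one_lt : Real.exp (-1) ≤ 0.375 := by
  rw [Real.exp_neg]
  have h := Real.exp_one_gt_d9
  rw [inv_le_comm₀ (by positivity) (by norm_num)]
  linarith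

lemma expgeo (N : ℕ) : ∑ s ∈ Finset.range N, Real.exp (-(s:ℝ)) ≤ 1.6 := by
  have hr : ∀ s : ℕ, Real.exp (-(s:ℝ)) = (Real.exp (-1))^s := by
    intro s
    rw [← Real.exp_nat_mul]
    norm_num
  simp only [hr]
  have h1 : Real.exp (-1) ≤ 0.375 := exp_neg_one_lt
  have h0 : 0 < Real.exp (-1) := Real.exp_pos _
  have hlt : Real.exp (-1) < 1 := by linarith
  have := geom_sum_eq (ne_of_lt hlt) N
  rw [this]
  have hpow : 0 < (Real.exp (-1))^N := pow_pos h0 N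
  have hpow1 : (Real.exp (-1))^N ≤ 1 := pow_le_one₀ (le_of_lt h0) (le_of_lt hlt)
  rw [div_le_iff_of_neg (by linarith)]
  nlinarith

section RowTail
variable {Ω : Type} [MeasureSpace Ω] [IsProbabilityMeasure (ℙ : Measure Ω)]
variable {n : ℕ} {X : Fin n × Fin n → Ω → ℝ}

/-- the `c` coefficients for row `i` -/
noncomputable def cdef (X : Fin n × Fin n → Ω → ℝ) (K : ℝ) (T : ℕ) (i : Fin n) (t : ℕ) : ℝ :=
  Real.exp 5 * (∑ j, (ℙ {ω | lvl K t < (X (i,j) ω)^2}).toReal) + 4*K + ((T - t : ℕ):ℝ)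

lemma cdef_nonneg (X : Fin n × Fin n → Ω → ℝ) {K : ℝ} (hK : 0 < K) (T : ℕ) (i : Fin n) (t : ℕ) :
    0 ≤ cdef X K T i t := by
  unfold cdef
  have h1 : 0 ≤ ∑ j, (ℙ {ω | lvl K t < (X (i,j) ω)^2}).toReal :=
    Finset.sum_nonneg fun j _ => ENNReal.toReal_nonneg
  have h2 : 0 ≤ ((T - t : ℕ):ℝ) := Nat.cast_nonneg _
  nlinarith [Real.exp_pos (5:ℝ)]

lemma row_tail (hmeas : ∀ p, Measurable (X p))
    (hindep : iIndepFun X ℙ)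
    {K : ℝ} (hK : 0 < K) (T : ℕ) (i : Fin n) (m : ℕ) (hm : 1 ≤ m) :
    ℙ {ω | (m:ℝ) ≤ fRow K (cdef X K T i) T (fun j => X (i,j) ω)}
      ≤ ENNReal.ofReal (1.6 * Real.exp (-3*(m:ℝ) - 4*K)) := by
  classical
  have hsub : {ω | (m:ℝ) ≤ fRow K (cdef X K T i) T (fun j => X (i,j) ω)}
      ⊆ ⋃ t ∈ Finset.range (T+1),
        {ω | max (cdef X K T i t) (m:ℝ) ≤ ntR K t (fun j => X (i,j) ω)} := by
    intro ω hω
    simp only [Set.mem_setOf_eq] at hω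
    obtain ⟨t, ht, hval⟩ := Finset.exists_mem_eq_sup' (Finset.nonempty_range_add_one)
      (fun t => if cdef X K T i t < ntR K t (fun j => X (i,j) ω)
        then ntR K t (fun j => X (i,j) ω) else 0)
    rw [fRow] at hω
    rw [hval] at hω
    simp only [Set.mem_iUnion]
    refine ⟨t, ht, ?_⟩
    by_cases hb : cdef X K T i t < ntR K t (fun j => X (i,j) ω)
    · rw [if_pos hb] at hω
      simp only [Set.mem_setOf_eq]
      exact max_le hb.le hω
    · rw [if_neg hb] at hω
      exfalso
      have : (1:ℝ) ≤ m := by exact_mod_cast hm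
      linarith
  refine (measure_mono hsub).trans ?_
  refine (measure_biUnion_finset_le _ _).trans ?_
  have hbound : ∀ t ∈ Finset.range (T+1),
      ℙ {ω | max (cdef X K T i t) (m:ℝ) ≤ ntR K t (fun j => X (i,j) ω)}
      ≤ ENNReal.ofReal (Real.exp (-3*(m:ℝ) - 4*K - ((T - t : ℕ):ℝ))) := by
    intro t ht
    have hμ : Real.exp 5 * (∑ j, (ℙ {ω | lvl K t < (X (i,j) ω)^2}).toReal)
        ≤ max (cdef X K T i t) (m:ℝ) := by
      refine le_trans ?_ (le_max_left _ _)
      unfold cdef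
      have : 0 ≤ ((T - t : ℕ):ℝ) := Nat.cast_nonneg _
      linarith
    refine (count_chernoff hmeas hindep t i _ hμ).trans ?_
    apply ENNReal.ofReal_le_ofReal
    apply Real.exp_le_exp.2
    set a := max (cdef X K T i t) (m:ℝ)
    have h1 : (m:ℝ) ≤ a := le_max_right _ _
    have h2 : cdef X K T i t ≤ a := le_max_left _ _
    have h3 : 4*K + ((T - t : ℕ):ℝ) ≤ cdef X K T i t := by
      unfold cdef
      nlinarith [Real.exp_pos (5:ℝ), Finset.sum_nonneg
        (fun j (_ : j ∈ Finset.univ) => (ENNReal.toReal_nonneg :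
          (0:ℝ) ≤ (ℙ {ω | lvl K t < (X (i,j) ω)^2}).toReal))]
    linarith
  refine (Finset.sum_le_sum hbound).trans ?_
  rw [← ENNReal.ofReal_sum_of_nonneg (fun t _ => le_of_lt (Real.exp_pos _))]
  apply ENNReal.ofReal_le_ofReal
  have hre : ∑ t ∈ Finset.range (T+1), Real.exp (-3*(m:ℝ) - 4*K - ((T - t : ℕ):ℝ))
      = Real.exp (-3*(m:ℝ) - 4*K) * ∑ t ∈ Finset.range (T+1), Real.exp (-(((T - t : ℕ)):ℝ)) := by
    rw [Finset.mul_sum]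
    apply Finset.sum_congr rfl
    intro t _
    rw [← Real.exp_add]
    ring_nf
  rw [hre]
  have hgeo : ∑ t ∈ Finset.range (T+1), Real.exp (-(((T - t : ℕ)):ℝ)) ≤ 1.6 := by
    have hrefl := Finset.sum_range_reflect (fun s => Real.exp (-(s:ℝ))) (T+1)
    have heq : ∑ t ∈ Finset.range (T+1), Real.exp (-(((T - t : ℕ)):ℝ))
        = ∑ s ∈ Finset.range (T+1), Real.exp (-(s:ℝ)) := by
      rw [← hrefl]
      apply Finset.sum_congr rfl
      intro t ht
      rw [Finset.mem_range] at ht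
      congr 2
    rw [heq]
    exact expgeo (T+1)
  nlinarith [Real.exp_pos (-3*(m:ℝ) - 4*K)]

end RowTail

lemma fRow_le_n {n : ℕ} {K : ℝ} (c : ℕ → ℝ) (T : ℕ) (x : Fin n → ℝ) : fRow K c T x ≤ n := by
  apply Finset.sup'_le
  intro t _
  split
  · exact ntR_le K t x
  · exact Nat.cast_nonneg n

lemma fRow_natval {n : ℕ} (K : ℝ) (c : ℕ → ℝ) (T : ℕ) (x : Fin n → ℝ) :
    ∃ k : ℕ, k ≤ n ∧ fRow K c T x = (k:ℝ) := by
  obtain ⟨t, _, hval⟩ := Finset.exists_mem_eq_sup' (Finset.nonempty_range_add_one)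
    (fun t => if c t < ntR K t x then ntR K t x else 0)
  rw [fRow, hval]
  by_cases hb : c t < ntR K t x
  · rw [if_pos hb, ntR_eq_card]
    refine ⟨_, ?_, rfl⟩
    exact le_trans (Finset.card_le_card (Finset.subset_univ _)) (le_of_eq (by simp))
  · rw [if_neg hb]
    exact ⟨0, Nat.zero_le n, by norm_num⟩

section RowMgf
variable {Ω : Type} [MeasureSpace Ω] [IsProbabilityMeasure (ℙ : Measure Ω)]
variable {n : ℕ} {X : Fin n × Fin n → Ω → ℝ}

lemma row_mgf (hmeas : ∀ p, Measurable (X p))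
    (hindep : iIndepFun X ℙ)
    {K : ℝ} (hK : 0 < K) (T : ℕ) (i : Fin n) :
    ∫ ω, Real.exp (2 * fRow K (cdef X K T i) T (fun j => X (i,j) ω)) ∂ℙ
      ≤ 1 + Real.exp (-4*K) := by
  classical
  set F := fun ω => fRow K (cdef X K T i) T (fun j => X (i,j) ω) with hF
  have hFmeas : Measurable F := by
    exact (measurable_fRow K _ T).comp (measurable_pi_lambda _ (fun j => hmeas (i,j)))
  have hF0 : ∀ ω, 0 ≤ F ω := fun ω => fRow_nonneg _ _ _ _
  have hFn : ∀ ω, F ω ≤ n := fun ω => fRow_le_n _ _ _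
  have hpt : ∀ ω, Real.exp (2 * F ω)
      ≤ 1 + ∑ m ∈ Finset.range n, Real.exp (2*((m:ℝ)+1))
          * (if ((m:ℝ)+1) ≤ F ω then 1 else 0) := by
    intro ω
    obtain ⟨k, hkn, hkval⟩ := fRow_natval K (cdef X K T i) T (fun j => X (i,j) ω)
    simp only [hF, hkval]
    rcases Nat.eq_zero_or_pos k with hk0 | hkpos
    · subst hk0
      simp only [Nat.cast_zero, mul_zero, Real.exp_zero]
      have : 0 ≤ ∑ m ∈ Finset.range n, Real.exp (2*((m:ℝ)+1))
          * (if ((m:ℝ)+1) ≤ (0:ℝ) then 1 else 0) := by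
        apply Finset.sum_nonneg
        intro m _
        have := Real.exp_pos (2*((m:ℝ)+1))
        split <;> nlinarith
      linarith
    · have hmem : k - 1 ∈ Finset.range n := Finset.mem_range.2 (by omega)
      have hcast : (((k-1:ℕ):ℝ)+1) = (k:ℝ) := by
        push_cast [Nat.cast_sub hkpos]
        ring
      have hle : Real.exp (2*(k:ℝ)) ≤ ∑ m ∈ Finset.range n, Real.exp (2*((m:ℝ)+1))
          * (if ((m:ℝ)+1) ≤ (k:ℝ) then 1 else 0) := by
        have hterm : Real.exp (2*(((k-1:ℕ):ℝ)+1))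
            * (if (((k-1:ℕ):ℝ)+1) ≤ (k:ℝ) then 1 else 0) = Real.exp (2*(k:ℝ)) := by
          rw [hcast, if_pos (le_refl (k:ℝ))]
          norm_num
        rw [← hterm]
        apply Finset.single_le_sum
          (f := fun m : ℕ => Real.exp (2*((m:ℝ)+1)) * (if ((m:ℝ)+1) ≤ (k:ℝ) then 1 else 0))
          _ hmem
        intro m _
        have := Real.exp_pos (2*((m:ℝ)+1))
        split <;> nlinarith
      linarith
  have hlhs_int : Integrable (fun ω => Real.exp (2 * F ω)) ℙ := by
    apply MeasureTheory.Integrable.mono' (integrable_const (Real.exp (2*(n:ℝ))))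
    · exact (hFmeas.const_mul 2).exp.aestronglyMeasurable
    · apply Filter.Eventually.of_forall
      intro ω
      rw [Real.norm_eq_abs, abs_of_pos (Real.exp_pos _)]
      exact Real.exp_le_exp.2 (by nlinarith [hFn ω])
  have hrhs_int : Integrable (fun ω => 1 + ∑ m ∈ Finset.range n, Real.exp (2*((m:ℝ)+1))
      * (if ((m:ℝ)+1) ≤ F ω then 1 else 0)) ℙ := by
    apply (integrable_const (1:ℝ)).add
    apply MeasureTheory.integrable_finset_sum
    intro m _
    have : (fun ω => Real.exp (2*((m:ℝ)+1)) * (if ((m:ℝ)+1) ≤ F ω then 1 else 0))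
        = fun ω => (if ((m:ℝ)+1) ≤ F ω then Real.exp (2*((m:ℝ)+1)) else 0) := by
      funext ω
      split <;> simp
    rw [this]
    exact integrable_ite_const (measurableSet_le measurable_const hFmeas) _ _
  have hstep := MeasureTheory.integral_mono hlhs_int hrhs_int hpt
  refine hstep.trans ?_
  rw [MeasureTheory.integral_add (integrable_const 1) (hrhs_int.sub (integrable_const 1)
    |>.congr ?_)]
  swap
  · apply Filter.Eventually.of_forall
    intro ω
    simp
  rw [MeasureTheory.integral_const]
  simp only [smul_eq_mul, measure_univ, ENNReal.toReal_one, probReal_univ, one_mul]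
  have hsum_int : ∫ ω, (∑ m ∈ Finset.range n, Real.exp (2*((m:ℝ)+1))
      * (if ((m:ℝ)+1) ≤ F ω then 1 else 0)) ∂ℙ
      = ∑ m ∈ Finset.range n, Real.exp (2*((m:ℝ)+1)) * (ℙ {ω | ((m:ℝ)+1) ≤ F ω}).toReal := by
    rw [MeasureTheory.integral_finset_sum]
    · apply Finset.sum_congr rfl
      intro m _
      have heq : (fun ω => Real.exp (2*((m:ℝ)+1)) * (if ((m:ℝ)+1) ≤ F ω then 1 else 0))
          = fun ω => (if ((m:ℝ)+1) ≤ F ω then Real.exp (2*((m:ℝ)+1)) else 0) := by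
        funext ω
        split <;> simp
      rw [heq, integral_ite_const (measurableSet_le measurable_const hFmeas)]
    · intro m _
      have heq : (fun ω => Real.exp (2*((m:ℝ)+1)) * (if ((m:ℝ)+1) ≤ F ω then 1 else 0))
          = fun ω => (if ((m:ℝ)+1) ≤ F ω then Real.exp (2*((m:ℝ)+1)) else 0) := by
        funext ω
        split <;> simp
      rw [heq]
      exact integrable_ite_const (measurableSet_le measurable_const hFmeas) _ _
  rw [hsum_int]
  have htail : ∀ m ∈ Finset.range n, (ℙ {ω | ((m:ℝ)+1) ≤ F ω}).toReal
      ≤ 1.6 * Real.exp (-3*((m:ℝ)+1) - 4*K) := by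
    intro m _
    have h1 := row_tail hmeas hindep hK T i (m+1) (by omega)
    have hcast : (((m+1:ℕ)):ℝ) = (m:ℝ)+1 := by push_cast; ring
    rw [hcast] at h1
    refine ENNReal.toReal_le_of_le_ofReal ?_ h1
    positivity
  have hfinal : ∑ m ∈ Finset.range n, Real.exp (2*((m:ℝ)+1))
      * (ℙ {ω | ((m:ℝ)+1) ≤ F ω}).toReal ≤ Real.exp (-4*K) := by
    calc ∑ m ∈ Finset.range n, Real.exp (2*((m:ℝ)+1)) * (ℙ {ω | ((m:ℝ)+1) ≤ F ω}).toReal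
        ≤ ∑ m ∈ Finset.range n, Real.exp (2*((m:ℝ)+1))
            * (1.6 * Real.exp (-3*((m:ℝ)+1) - 4*K)) := by
          apply Finset.sum_le_sum
          intro m hm
          exact mul_le_mul_of_nonneg_left (htail m hm) (le_of_lt (Real.exp_pos _))
      _ = 1.6 * Real.exp (-4*K) * ∑ m ∈ Finset.range n, Real.exp (-((m:ℝ)+1)) := by
          rw [Finset.mul_sum]
          apply Finset.sum_congr rfl
          intro m _
          have h1 : Real.exp (2*((m:ℝ)+1)) * Real.exp (-3*((m:ℝ)+1) - 4*K)
              = Real.exp (-((m:ℝ)+1) + -4*K) := by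
            rw [← Real.exp_add]
            congr 1
            ring
          have h2 : Real.exp (-((m:ℝ)+1) + -4*K)
              = Real.exp (-((m:ℝ)+1)) * Real.exp (-4*K) := Real.exp_add _ _
          linear_combination 1.6 * h1 + 1.6 * h2
      _ ≤ 1.6 * Real.exp (-4*K) * (0.375 * 1.6) := by
          have hge : ∑ m ∈ Finset.range n, Real.exp (-((m:ℝ)+1))
              = Real.exp (-1) * ∑ m ∈ Finset.range n, Real.exp (-(m:ℝ)) := by
            rw [Finset.mul_sum]
            apply Finset.sum_congr rfl
            intro m _
            rw [← Real.exp_add]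
            ring_nf
          rw [hge]
          have h1 := expgeo n
          have h2 := exp_neg_one_lt
          have h3 : 0 ≤ ∑ m ∈ Finset.range n, Real.exp (-(m:ℝ)) :=
            Finset.sum_nonneg fun m _ => le_of_lt (Real.exp_pos _)
          have h5 : Real.exp (-1) * ∑ m ∈ Finset.range n, Real.exp (-(m:ℝ)) ≤ 0.375 * 1.6 :=
            mul_le_mul h2 h1 h3 (by norm_num)
          have h6 : (0:ℝ) ≤ 1.6 * Real.exp (-4*K) := by positivity
          exact mul_le_mul_of_nonneg_left h5 h6
      _ ≤ Real.exp (-4*K) := by nlinarith [Real.exp_pos (-4*K)]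
  linarith

end RowMgf

section Rows
variable {Ω : Type} [MeasureSpace Ω] [IsProbabilityMeasure (ℙ : Measure Ω)]
variable {n : ℕ} {X : Fin n × Fin n → Ω → ℝ}

lemma exp_sum_integrable {K : ℝ} (hmeas : ∀ p, Measurable (X p)) (T : ℕ) (s : Finset (Fin n)) :
    Integrable (fun ω => Real.exp (2 * ∑ i ∈ s, fRow K (cdef X K T i) T
      (fun j => X (i,j) ω))) ℙ := by
  apply MeasureTheory.Integrable.mono' (integrable_const (Real.exp (2*(n:ℝ)*(s.card:ℝ))))
  · apply Measurable.aestronglyMeasurable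
    apply Measurable.exp
    apply Measurable.const_mul
    apply Finset.measurable_sum
    intro i _
    exact (measurable_fRow K _ T).comp (measurable_pi_lambda _ (fun j => hmeas (i,j)))
  · apply Filter.Eventually.of_forall
    intro ω
    rw [Real.norm_eq_abs, abs_of_pos (Real.exp_pos _)]
    apply Real.exp_le_exp.2
    have hsum : ∑ i ∈ s, fRow K (cdef X K T i) T (fun j => X (i,j) ω) ≤ (s.card:ℝ) * n := by
      calc ∑ i ∈ s, fRow K (cdef X K T i) T (fun j => X (i,j) ω)
          ≤ ∑ _i ∈ s, (n:ℝ) := Finset.sum_le_sum (fun i _ => fRow_le_n _ _ _)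
        _ = (s.card:ℝ) * n := by rw [Finset.sum_const]; simp [mul_comm]
    nlinarith [hsum]

lemma rows_product (hmeas : ∀ p, Measurable (X p))
    (hindep : iIndepFun X ℙ)
    {K : ℝ} (hK : 0 < K) (T : ℕ) (s : Finset (Fin n)) :
    (∫ ω, Real.exp (2 * ∑ i ∈ s, fRow K (cdef X K T i) T (fun j => X (i,j) ω)) ∂ℙ)
      ≤ (1 + Real.exp (-4*K)) ^ s.card := by
  classical
  induction s using Finset.induction_on with
  | empty => simp
  | insert i s hinotin ih =>
    have hdisj : Disjoint ({i} ×ˢ (Finset.univ : Finset (Fin n))) (s ×ˢ Finset.univ) := by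
      rw [Finset.disjoint_left]
      intro p hp1 hp2
      rw [Finset.mem_product] at hp1 hp2
      rw [Finset.mem_singleton] at hp1
      exact hinotin (hp1.1 ▸ hp2.1)
    have base := hindep.indepFun_finset ({i} ×ˢ Finset.univ) (s ×ˢ Finset.univ) hdisj hmeas
    have hmemS1 : ∀ j : Fin n, ((i,j) : Fin n × Fin n) ∈ ({i} ×ˢ (Finset.univ : Finset (Fin n))) := by
      intro j
      rw [Finset.mem_product, Finset.mem_singleton]
      exact ⟨rfl, Finset.mem_univ j⟩
    have hmemS2 : ∀ (i' : {x // x ∈ s}) (j : Fin n),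
        ((i'.1, j) : Fin n × Fin n) ∈ s ×ˢ (Finset.univ : Finset (Fin n)) := by
      intro i' j
      rw [Finset.mem_product]
      exact ⟨i'.2, Finset.mem_univ j⟩
    set φ : (({i} ×ˢ (Finset.univ : Finset (Fin n))) → ℝ) → ℝ :=
      fun y => Real.exp (2 * fRow K (cdef X K T i) T (fun j => y ⟨(i,j), hmemS1 j⟩)) with hφdef
    set ψ : ((s ×ˢ (Finset.univ : Finset (Fin n))) → ℝ) → ℝ :=
      fun y => Real.exp (2 * ∑ i' ∈ s.attach, fRow K (cdef X K T i'.1) T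
        (fun j => y ⟨(i'.1, j), hmemS2 i' j⟩)) with hψdef
    have hφ : Measurable φ := by
      apply Measurable.exp
      apply Measurable.const_mul
      exact (measurable_fRow K _ T).comp (measurable_pi_lambda _
        (fun j => measurable_pi_apply _))
    have hψ : Measurable ψ := by
      apply Measurable.exp
      apply Measurable.const_mul
      apply Finset.measurable_sum
      intro i' _
      exact (measurable_fRow K _ T).comp (measurable_pi_lambda _
        (fun j => measurable_pi_apply _))
    have hIF := (base.comp hφ hψ)
    have heq1 : (φ ∘ (fun ω (p : ({i} ×ˢ (Finset.univ : Finset (Fin n)))) => X p ω))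
        = fun ω => Real.exp (2 * fRow K (cdef X K T i) T (fun j => X (i,j) ω)) := rfl
    have heq2 : (ψ ∘ (fun ω (p : (s ×ˢ (Finset.univ : Finset (Fin n)))) => X p ω))
        = fun ω => Real.exp (2 * ∑ i' ∈ s, fRow K (cdef X K T i') T
          (fun j => X (i',j) ω)) := by
      funext ω
      simp only [Function.comp_apply, hψdef]
      congr 1
      congr 1
      exact Finset.sum_attach s (fun i' => fRow K (cdef X K T i') T (fun j => X (i',j) ω))
    rw [heq1, heq2] at hIF
    have hint1 : Integrable (fun ω => Real.exp (2 * fRow K (cdef X K T i) T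
        (fun j => X (i,j) ω))) ℙ := by
      have := exp_sum_integrable (K := K) hmeas T {i}
      simpa using this
    have hint2 := exp_sum_integrable (K := K) hmeas T s
    have hmul := ProbabilityTheory.IndepFun.integral_mul_eq_mul_integral hIF hint1.aestronglyMeasurable
      hint2.aestronglyMeasurable
    have hpt : (fun ω => Real.exp (2 * ∑ i' ∈ insert i s, fRow K (cdef X K T i') T
        (fun j => X (i',j) ω)))
        = (fun ω => Real.exp (2 * fRow K (cdef X K T i) T (fun j => X (i,j) ω)))
          * (fun ω => Real.exp (2 * ∑ i' ∈ s, fRow K (cdef X K T i') T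
            (fun j => X (i',j) ω))) := by
      funext ω
      simp only [Pi.mul_apply]
      rw [Finset.sum_insert hinotin, ← Real.exp_add]
      congr 1
      ring
    rw [hpt, hmul]
    have h1 := row_mgf hmeas hindep hK T i
    have h2 := ih
    have hnn1 : 0 ≤ ∫ ω, Real.exp (2 * fRow K (cdef X K T i) T (fun j => X (i,j) ω)) ∂ℙ :=
      MeasureTheory.integral_nonneg (fun ω => le_of_lt (Real.exp_pos _))
    have hnn2 : 0 ≤ ∫ ω, Real.exp (2 * ∑ i' ∈ s, fRow K (cdef X K T i') T
        (fun j => X (i',j) ω)) ∂ℙ :=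
      MeasureTheory.integral_nonneg (fun ω => le_of_lt (Real.exp_pos _))
    rw [Finset.card_insert_of_notMem hinotin, pow_succ]
    calc (∫ ω, Real.exp (2 * fRow K (cdef X K T i) T (fun j => X (i,j) ω)) ∂ℙ)
          * (∫ ω, Real.exp (2 * ∑ i' ∈ s, fRow K (cdef X K T i') T (fun j => X (i',j) ω)) ∂ℙ)
        ≤ (1 + Real.exp (-4*K)) * (1 + Real.exp (-4*K)) ^ s.card := by
          apply mul_le_mul h1 h2 hnn2
          nlinarith [Real.exp_pos (-4*K)]
      _ = (1 + Real.exp (-4*K)) ^ s.card * (1 + Real.exp (-4*K)) := by ring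
end Rows

section SumTail
variable {Ω : Type} [MeasureSpace Ω] [IsProbabilityMeasure (ℙ : Measure Ω)]
variable {n : ℕ} {X : Fin n × Fin n → Ω → ℝ}

lemma sum_tail (hmeas : ∀ p, Measurable (X p))
    (hindep : iIndepFun X ℙ)
    {K : ℝ} (hK : 0 < K) (T : ℕ) (b : ℝ) :
    ℙ {ω | b ≤ ∑ i, fRow K (cdef X K T i) T (fun j => X (i,j) ω)}
      ≤ ENNReal.ofReal (Real.exp (-2*b) * (1 + Real.exp (-4*K))^n) := by
  have hint := exp_sum_integrable (K := K) hmeas T Finset.univ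
  have h := measure_ge_le_exp_mul_mgf
    (X := fun ω => ∑ i, fRow K (cdef X K T i) T (fun j => X (i,j) ω)) (μ := ℙ) b
    (by norm_num : (0:ℝ) ≤ 2) hint
  have hmgf : mgf (fun ω => ∑ i, fRow K (cdef X K T i) T (fun j => X (i,j) ω)) ℙ 2
      ≤ (1 + Real.exp (-4*K))^n := by
    have := rows_product hmeas hindep hK T Finset.univ
    rw [Finset.card_univ, Fintype.card_fin] at this
    exact this
  have hfin : (ℙ {ω | b ≤ ∑ i, fRow K (cdef X K T i) T (fun j => X (i,j) ω)}).toReal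
      ≤ Real.exp (-2*b) * (1 + Real.exp (-4*K))^n := by
    refine h.trans ?_
    apply mul_le_mul_of_nonneg_left hmgf (le_of_lt (Real.exp_pos _))
  refine (ENNReal.le_ofReal_iff_toReal_le (measure_ne_top _ _) ?_).2 hfin
  positivity

end SumTail

end CR

namespace CRMain
open CR

lemma numeric_K {ε : ℝ} (hε : 0 < ε) (hε2 : ε ≤ 1/2) :
    0 < Real.log ε⁻¹ ∧ Real.exp 5 ≤ 300 * Real.log ε⁻¹ ∧ (1:ℝ) ≤ 300 * Real.log ε⁻¹ := by
  have h2inv : (2:ℝ) ≤ ε⁻¹ := by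
    rw [show (2:ℝ) = (1/2)⁻¹ by norm_num]
    exact inv_anti₀ hε hε2
  have hlog2 : Real.log 2 ≤ Real.log ε⁻¹ :=
    Real.log_le_log (by norm_num) h2inv
  have hl2 : (0.6931471803 : ℝ) < Real.log 2 := Real.log_two_gt_d9
  have hexp5 : Real.exp 5 < 149 := by
    have h1 : Real.exp 1 < 2.7182818286 := Real.exp_one_lt_d9
    have h5 : Real.exp 5 = (Real.exp 1)^(5:ℕ) := by
      rw [← Real.exp_nat_mul]
      norm_num
    rw [h5]
    have : (Real.exp 1)^(5:ℕ) < 2.7182818286^(5:ℕ) :=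
      pow_lt_pow_left₀ h1 (le_of_lt (Real.exp_pos 1)) (by norm_num)
    nlinarith
  refine ⟨by linarith, by nlinarith, by nlinarith⟩

lemma exp_neg4K_le {ε : ℝ} (hε : 0 < ε) (hε2 : ε ≤ 1/2) :
    Real.exp (-4 * (300 * Real.log ε⁻¹)) ≤ ε / 2 := by
  have heq : Real.exp (-4 * (300 * Real.log ε⁻¹)) = ε ^ (1200:ℕ) := by
    rw [Real.log_inv]
    have : (-4 : ℝ) * (300 * -Real.log ε) = (1200:ℕ) * Real.log ε := by push_cast; ring
    rw [this, Real.exp_nat_mul, Real.exp_log hε]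
  rw [heq]
  have h1 : ε ^ (1200:ℕ) = ε * ε ^ (1199:ℕ) := by ring
  have h2 : ε ^ (1199:ℕ) ≤ (1/2:ℝ) ^ (1199:ℕ) := pow_le_pow_left₀ (le_of_lt hε) hε2 _
  have h3 : ((1/2:ℝ)) ^ (1199:ℕ) ≤ 1/2 := by
    calc ((1/2:ℝ)) ^ (1199:ℕ) ≤ ((1/2:ℝ)) ^ (1:ℕ) :=
          pow_le_pow_of_le_one (by norm_num) (by norm_num) (by norm_num)
      _ = 1/2 := by norm_num
  calc ε ^ (1200:ℕ) = ε * ε ^ (1199:ℕ) := h1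
    _ ≤ ε * (1/2) := by nlinarith [mul_le_mul_of_nonneg_left (h2.trans h3) hε.le]
    _ = ε / 2 := by ring

end CRMain


set_option maxHeartbeats 1000000 in
open CR CRMain in
/-- **Bounding the `2 → ∞` norm by removing a few columns.** There is an absolute constant `C`
such that: if `A` is an `n × n` random matrix with i.i.d. entries of mean zero, variance at
most one, and `|A_{ij}| ≤ √n/2` a.s., and `ε ∈ (0,1/2]`, then with probability at least
`1 - exp(-εn)` there is `J ⊆ [n]`, `|J| ≤ εn`, with `‖A_{Jᶜ}‖_{2→∞} ≤ C √(ln ε⁻¹) √n`. -/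
theorem two_to_infty_norm_column_removal :
    ∃ C : ℝ, 0 < C ∧
    ∀ (n : ℕ) (Ω : Type) (_ : MeasureSpace Ω) (_ : IsProbabilityMeasure (ℙ : Measure Ω))
      (A : Ω → Matrix (Fin n) (Fin n) ℝ),
      (∀ i j, Measurable fun ω => A ω i j) →
      iIndepFun (fun p : Fin n × Fin n => fun ω => A ω p.1 p.2) ℙ →
      (∀ i j k l, IdentDistrib (fun ω => A ω i j) (fun ω => A ω k l) ℙ ℙ) →
      (∀ i j, MemLp (fun ω => A ω i j) 2 ℙ) →
      (∀ i j, ∫ ω, A ω i j ∂ℙ = 0) →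
      (∀ i j, ∫ ω, (A ω i j) ^ 2 ∂ℙ ≤ 1) →
      (∀ i j, ∀ᵐ ω ∂ℙ, |A ω i j| ≤ Real.sqrt n / 2) →
      ∀ ε : ℝ, 0 < ε → ε ≤ 1 / 2 →
      ENNReal.ofReal (1 - Real.exp (-(ε * n))) ≤
        ℙ {ω | ∃ J : Finset (Fin n), (J.card : ℝ) ≤ ε * n ∧
          norm2toInf (colZero (A ω) J) ≤ C * Real.sqrt (Real.log ε⁻¹) * Real.sqrt n} := by
  classical
  refine ⟨50, by norm_num, ?_⟩
  intro n Ω mΩ hprob A hAmeas hAindep hAident hAL2 hAmean hAvar hAbd ε hε hε2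
  obtain ⟨hlogpos, hKe5, hK1⟩ := CRMain.numeric_K hε hε2
  set L : ℝ := Real.log ε⁻¹ with hLdef
  set K : ℝ := 300 * L with hKdef
  have hK0 : 0 < K := by positivity
  set X : Fin n × Fin n → Ω → ℝ := fun p ω => A ω p.1 p.2 with hXdef
  have hXmeas : ∀ p, Measurable (X p) := fun p => hAmeas p.1 p.2
  have hXindep : iIndepFun X ℙ := hAindep
  -- a.s. boundedness event
  set E0 : Set Ω := {ω | ∀ i j, |A ω i j| ≤ Real.sqrt n / 2} with hE0def
  have hE0meas : MeasurableSet E0 := by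
    have : E0 = ⋂ i, ⋂ j, {ω | |A ω i j| ≤ Real.sqrt n / 2} := by
      ext ω
      simp [hE0def, Set.mem_iInter]
    rw [this]
    exact MeasurableSet.iInter fun i => MeasurableSet.iInter fun j =>
      measurableSet_le (hAmeas i j).abs measurable_const
  have hE0c : ℙ E0ᶜ = 0 := by
    have hae : ∀ᵐ ω ∂ℙ, ∀ i j, |A ω i j| ≤ Real.sqrt n / 2 := by
      rw [MeasureTheory.ae_all_iff]
      intro i
      rw [MeasureTheory.ae_all_iff]
      intro j
      exact hAbd i j
    have hcompl : E0ᶜ = {ω | ¬ ∀ i j, |A ω i j| ≤ Real.sqrt n / 2} := by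
      rw [hE0def, ← Set.compl_setOf]
    rw [hcompl]
    exact MeasureTheory.ae_iff.mp hae
  have hsq_bound : ∀ ω ∈ E0, ∀ i j, (A ω i j)^2 ≤ (n:ℝ)/4 := by
    intro ω hω i j
    have h1 : |A ω i j| ≤ Real.sqrt n / 2 := hω i j
    have h2 : (A ω i j)^2 = |A ω i j|^2 := (sq_abs _).symm
    have h3 : |A ω i j|^2 ≤ (Real.sqrt n / 2)^2 :=
      pow_le_pow_left₀ (abs_nonneg _) h1 2
    have h4 : (Real.sqrt n / 2)^2 = (n:ℝ)/4 := by
      rw [div_pow, Real.sq_sqrt (Nat.cast_nonneg n)]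
      norm_num
    linarith
  -- the norm bound constant comparison
  have hnorm_const : ∀ (B : ℝ), 0 ≤ B → B ≤ 2500 * L * n →
      Real.sqrt B ≤ 50 * Real.sqrt L * Real.sqrt n := by
    intro B hB0 hBle
    have h1 : Real.sqrt B ≤ Real.sqrt (2500 * L * n) := Real.sqrt_le_sqrt hBle
    refine h1.trans_eq ?_
    rw [show (2500:ℝ) * L * n = (50 * Real.sqrt L * Real.sqrt n)^2 by
      rw [mul_pow, mul_pow, Real.sq_sqrt (le_of_lt hlogpos), Real.sq_sqrt (Nat.cast_nonneg n)]
      ring]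
    exact Real.sqrt_sq (by positivity)
  by_cases hbig : (n:ℝ) ≤ 4 * K
  · -- small n case : J = ∅ works on E0
    have hsub : E0 ⊆ {ω | ∃ J : Finset (Fin n), (J.card : ℝ) ≤ ε * n ∧
        norm2toInf (colZero (A ω) J) ≤ 50 * Real.sqrt (Real.log ε⁻¹) * Real.sqrt n} := by
      intro ω hω
      refine ⟨∅, by simp only [Finset.card_empty, Nat.cast_zero]; positivity, ?_⟩
      rw [norm2toInf]
      rcases Nat.eq_zero_or_pos n with hn0 | hnpos
      · subst hn0
        rw [Real.iSup_of_isEmpty]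
        positivity
      · have : Nonempty (Fin n) := ⟨⟨0, hnpos⟩⟩
        apply ciSup_le
        intro i
        have hrow : ∑ j, (colZero (A ω) ∅ i j)^2 ≤ 2500 * L * n := by
          have heq : ∀ j, (colZero (A ω) ∅ i j)^2 = (A ω i j)^2 := by
            intro j
            simp [colZero]
          rw [Finset.sum_congr rfl (fun j _ => heq j)]
          have hterm : ∀ j, (A ω i j)^2 ≤ (n:ℝ)/4 := hsq_bound ω hω i
          calc ∑ j, (A ω i j)^2 ≤ ∑ _j : Fin n, (n:ℝ)/4 :=
                Finset.sum_le_sum (fun j _ => hterm j)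
            _ = n * ((n:ℝ)/4) := by rw [Finset.sum_const]; simp [mul_comm]
            _ ≤ K * n := by nlinarith [Nat.cast_nonneg (α := ℝ) n]
            _ ≤ 2500 * L * n := by
                rw [hKdef]
                nlinarith [Nat.cast_nonneg (α := ℝ) n, hlogpos]
        exact hnorm_const _ (Finset.sum_nonneg fun j _ => sq_nonneg _) hrow
    calc ENNReal.ofReal (1 - Real.exp (-(ε * n))) ≤ ℙ E0 := by
          have h1 : ℙ E0 = 1 := by
            have h2 := measure_add_measure_compl (μ := ℙ) hE0meas
            rw [hE0c, add_zero, measure_univ] at h2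
            exact h2
          rw [h1]
          exact ENNReal.ofReal_le_one.2 (by nlinarith [Real.exp_pos (-(ε * (n:ℝ)))])
      _ ≤ _ := measure_mono hsub
  · -- main case
    push_neg at hbig
    have hn1 : 1 ≤ n := by
      rcases Nat.eq_zero_or_pos n with h|h
      · exfalso
        subst h
        simp only [Nat.cast_zero] at hbig
        nlinarith
      · exact h
    have : Nonempty (Fin n) := ⟨⟨0, by omega⟩⟩
    have hTex : ∃ t : ℕ, (n:ℝ) ≤ 4 * K * 2^t := by
      refine ⟨n, ?_⟩
      have h1 : (n:ℝ) ≤ 2^n := by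
        exact_mod_cast (Nat.lt_two_pow_self (n := n)).le
      nlinarith [pow_pos (by norm_num : (0:ℝ) < 2) n]
    set T : ℕ := Nat.find hTex with hTdef
    have hT : (n:ℝ) ≤ 4 * K * 2^T := Nat.find_spec hTex
    have hT1 : 1 ≤ T := by
      rcases Nat.eq_zero_or_pos T with h|h
      · exfalso
        have h2 := hT
        rw [h] at h2
        simp only [pow_zero, mul_one] at h2
        nlinarith
      · exact h
    have hKT : K * 2^(T+1) ≤ n := by
      have hmin := Nat.find_min hTex (show T - 1 < T by omega)
      push_neg at hmin
      have h2 : 4 * K * 2^(T-1) < n := hmin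
      have h3 : (2:ℝ)^(T+1) = 4 * 2^(T-1) := by
        rw [show T + 1 = (T-1) + 2 by omega]
        rw [pow_add]
        ring
      rw [h3]
      nlinarith
    have hlvlT : (n:ℝ)/4 ≤ lvl K T := by
      rw [lvl]
      nlinarith
    -- good event
    set SF : Ω → ℝ := fun ω => ∑ i, fRow K (cdef X K T i) T (fun j => X (i,j) ω) with hSFdef
    have hSFmeas : Measurable SF := by
      apply Finset.measurable_sum
      intro i _
      exact (measurable_fRow K _ T).comp (measurable_pi_lambda _ (fun j => hXmeas (i,j)))
    set G : Set Ω := {ω | SF ω < ε * n} with hGdef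
    have hGmeas : MeasurableSet G := measurableSet_lt hSFmeas measurable_const
    -- tail bound on Gᶜ
    have hGc : ℙ Gᶜ ≤ ENNReal.ofReal (Real.exp (-(ε * n))) := by
      have hcompl : Gᶜ = {ω | ε * n ≤ SF ω} := by
        ext ω
        simp [hGdef, not_lt]
      rw [hcompl]
      have h1 := sum_tail (n := n) hXmeas hXindep hK0 T (ε * n)
      refine h1.trans ?_
      apply ENNReal.ofReal_le_ofReal
      have h2 : (1 + Real.exp (-4*K))^n ≤ Real.exp (ε * n / 2) := by
        calc (1 + Real.exp (-4*K))^n ≤ (Real.exp (Real.exp (-4*K)))^n := by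
              apply pow_le_pow_left₀ (by positivity)
              exact Real.add_one_le_exp _ |>.trans_eq' (by ring)
          _ = Real.exp (n * Real.exp (-4*K)) := by
              rw [← Real.exp_nat_mul]
          _ ≤ Real.exp (ε * n / 2) := by
              apply Real.exp_le_exp.2
              have h3 : Real.exp (-4*K) ≤ ε / 2 := by
                rw [hKdef, hLdef]
                exact CRMain.exp_neg4K_le hε hε2
              have hn0 : (0:ℝ) ≤ n := Nat.cast_nonneg n
              nlinarith
      calc Real.exp (-2*(ε * n)) * (1 + Real.exp (-4*K))^n
          ≤ Real.exp (-2*(ε * n)) * Real.exp (ε * n / 2) := by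
            apply mul_le_mul_of_nonneg_left h2 (le_of_lt (Real.exp_pos _))
        _ = Real.exp (-2*(ε * n) + ε * n / 2) := by rw [← Real.exp_add]
        _ ≤ Real.exp (-(ε * n)) := by
            apply Real.exp_le_exp.2
            have hn0 : (0:ℝ) ≤ n := Nat.cast_nonneg n
            nlinarith
    -- G ∩ E0 is inside the target event
    have hsub : G ∩ E0 ⊆ {ω | ∃ J : Finset (Fin n), (J.card : ℝ) ≤ ε * n ∧
        norm2toInf (colZero (A ω) J) ≤ 50 * Real.sqrt (Real.log ε⁻¹) * Real.sqrt n} := by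
      rintro ω ⟨hG, hE⟩
      set J : Finset (Fin n) :=
        Finset.univ.biUnion (fun i => RRow K (cdef X K T i) T (fun j => X (i,j) ω)) with hJdef
      refine ⟨J, ?_, ?_⟩
      · -- cardinality
        have h1 : (J.card : ℝ) ≤ ∑ i, ((RRow K (cdef X K T i) T (fun j => X (i,j) ω)).card : ℝ) := by
          have := Finset.card_biUnion_le (s := Finset.univ)
            (t := fun i => RRow K (cdef X K T i) T (fun j => X (i,j) ω))
          exact_mod_cast this
        have h2 : ∑ i, ((RRow K (cdef X K T i) T (fun j => X (i,j) ω)).card : ℝ) ≤ SF ω := by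
          apply Finset.sum_le_sum
          intro i _
          exact card_RRow_le_fRow hK0 _ T _
        have h3 : SF ω < ε * n := hG
        linarith
      · -- norm bound
        rw [norm2toInf]
        apply ciSup_le
        intro i
        have hrowle : ∑ j, (colZero (A ω) J i j)^2
            ≤ ∑ j ∈ Finset.univ.filter
                (fun j => j ∉ RRow K (cdef X K T i) T (fun j' => X (i,j') ω)),
              (A ω i j)^2 := by
          have heq : ∑ j, (colZero (A ω) J i j)^2
              = ∑ j ∈ Finset.univ.filter (fun j => j ∉ J), (A ω i j)^2 := by
            rw [Finset.sum_filter]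
            apply Finset.sum_congr rfl
            intro j _
            by_cases hj : j ∈ J
            · simp [colZero, hj]
            · simp [colZero, hj]
          rw [heq]
          apply Finset.sum_le_sum_of_subset_of_nonneg
          · intro j hj
            rw [Finset.mem_filter] at hj ⊢
            refine ⟨hj.1, fun hmem => hj.2 ?_⟩
            rw [hJdef]
            exact Finset.mem_biUnion.2 ⟨i, Finset.mem_univ i, hmem⟩
          · intro j _ _
            exact sq_nonneg _
        have hkept : ∑ j ∈ Finset.univ.filter
            (fun j => j ∉ RRow K (cdef X K T i) T (fun j' => X (i,j') ω)),
            (A ω i j)^2 ≤ K * n + ∑ t ∈ Finset.range (T+1), lvl K t * cdef X K T i t := by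
          have hx : ∀ j, ((fun j' => X (i,j') ω) j)^2 ≤ lvl K T := by
            intro j
            exact le_trans (hsq_bound ω hE i j) hlvlT
          have := kept_bound hK0 (cdef X K T i) T (fun j' => X (i,j') ω) hx
            (fun t => cdef_nonneg X hK0 T i t)
            (Finset.univ.filter
              (fun j => j ∉ RRow K (cdef X K T i) T (fun j' => X (i,j') ω)))
            (fun j hj => (Finset.mem_filter.1 hj).2)
          exact this
        have hbudget : ∑ t ∈ Finset.range (T+1), lvl K t * cdef X K T i t ≤ 7*K*n := by
          have hμ : ∑ t ∈ Finset.range (T+1), lvl K t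
              * (∑ j, (ℙ {ω' | lvl K t < (X (i,j) ω')^2}).toReal) ≤ 2*n := by
            have hswap : ∑ t ∈ Finset.range (T+1), lvl K t
                * (∑ j, (ℙ {ω' | lvl K t < (X (i,j) ω')^2}).toReal)
                = ∑ j, ∑ t ∈ Finset.range (T+1), lvl K t
                  * (ℙ {ω' | lvl K t < (X (i,j) ω')^2}).toReal := by
              rw [Finset.sum_comm]
              apply Finset.sum_congr rfl
              intro t _
              rw [Finset.mul_sum]
            rw [hswap]
            calc ∑ j, ∑ t ∈ Finset.range (T+1), lvl K t
                  * (ℙ {ω' | lvl K t < (X (i,j) ω')^2}).toReal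
                ≤ ∑ _j : Fin n, (2:ℝ) := by
                  apply Finset.sum_le_sum
                  intro j _
                  exact entry_moment hK0 T (fun ω' => A ω' i j) (hAmeas i j)
                    ((hAL2 i j).integrable_sq) (hAvar i j)
              _ = 2*n := by rw [Finset.sum_const]; simp [mul_comm]
          exact budget T _ hKe5 hK1 hKT hμ
            (fun t => Finset.sum_nonneg fun j _ => ENNReal.toReal_nonneg)
        have hfinal : ∑ j, (colZero (A ω) J i j)^2 ≤ 2500 * L * n := by
          have h8 : K * n + 7*K*n = 8*K*n := by ring
          have : ∑ j, (colZero (A ω) J i j)^2 ≤ 8*K*n := by linarith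
          refine this.trans ?_
          rw [hKdef]
          nlinarith [Nat.cast_nonneg (α := ℝ) n, hlogpos]
        exact hnorm_const _ (Finset.sum_nonneg fun j _ => sq_nonneg _) hfinal
    -- probability of G ∩ E0
    have hGE0meas : MeasurableSet (G ∩ E0) := hGmeas.inter hE0meas
    have hcomplle : ℙ ((G ∩ E0)ᶜ) ≤ ENNReal.ofReal (Real.exp (-(ε * n))) := by
      rw [Set.compl_inter]
      refine (measure_union_le _ _).trans ?_
      rw [hE0c, add_zero]
      exact hGc
    have hkey : ENNReal.ofReal (1 - Real.exp (-(ε * n))) ≤ ℙ (G ∩ E0) := by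
      have hle1 : Real.exp (-(ε * n)) ≤ 1 := by
        apply Real.exp_le_one_iff.2
        have hn0 : (0:ℝ) ≤ n := Nat.cast_nonneg n
        nlinarith
      have hadd : ENNReal.ofReal (1 - Real.exp (-(ε * n)))
          + ENNReal.ofReal (Real.exp (-(ε * n))) = 1 := by
        rw [← ENNReal.ofReal_add (by linarith) (le_of_lt (Real.exp_pos _))]
        norm_num
      have hsplit : ℙ (G ∩ E0) + ℙ ((G ∩ E0)ᶜ) = 1 := by
        have h2 := measure_add_measure_compl (μ := ℙ) hGE0meas
        rw [measure_univ] at h2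
        exact h2
      have h1 : ENNReal.ofReal (1 - Real.exp (-(ε * n)))
          + ENNReal.ofReal (Real.exp (-(ε * n)))
          ≤ ℙ (G ∩ E0) + ENNReal.ofReal (Real.exp (-(ε * n))) := by
        rw [hadd, ← hsplit]
        exact add_le_add le_rfl hcomplle
      exact ENNReal.le_of_add_le_add_right ENNReal.ofReal_ne_top h1
    exact hkey.trans (measure_mono hsub)
end

section
/- Let B be an n × n random matrix whose entries are independent Bernoulli random variables with mean p, and let ε ∈ (0,1/2]. Call a row of B heavy if it contains more than 21pn + 2·ln ε^{−1} ones. Then with probability at least 1 − exp(−εn/2), the total number of ones contained in all heavy rows of B is at most εn. -/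
open MeasureTheory ProbabilityTheory
open scoped ENNReal NNReal

lemma indep_integral_prod {Ω ι κ : Type*} {mΩ : MeasurableSpace Ω} (μ : Measure Ω)
    [IsProbabilityMeasure μ]
    (m : ι → MeasurableSpace Ω) (h_le : ∀ i, m i ≤ mΩ) (h_indep : iIndep m μ)
    (T : κ → Set ι) (hT : Pairwise (Function.onFun Disjoint T))
    (g : κ → Ω → ℝ) (hg : ∀ k, Measurable[⨆ i ∈ T k, m i] (g k))
    (s : Finset κ) :
    ∫ ω, ∏ k ∈ s, g k ω ∂μ = ∏ k ∈ s, ∫ ω, g k ω ∂μ := by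
  classical
  have hsup_le : ∀ k, (⨆ i ∈ T k, m i) ≤ mΩ := fun k => iSup₂_le fun i _ => h_le i
  have hgM : ∀ k, Measurable (g k) := fun k => (hg k).mono (hsup_le k) le_rfl
  induction s using Finset.induction_on with
  | empty => simp
  | @insert a s ha ih =>
    have hprodM : Measurable[⨆ i ∈ (⋃ k ∈ (s : Set κ), T k), m i]
        (fun ω => ∏ k ∈ s, g k ω) := by
      apply Finset.measurable_prod
      intro k hk
      refine (hg k).mono ?_ le_rfl
      exact biSup_mono (fun i hi => Set.mem_biUnion hk hi)
    have hdisj : Disjoint (T a) (⋃ k ∈ (s : Set κ), T k) := by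
      rw [Set.disjoint_iUnion₂_right]
      intro k hk
      exact hT (fun h => ha (h ▸ hk))
    have hindep2 : ProbabilityTheory.Indep (⨆ i ∈ T a, m i)
        (⨆ i ∈ (⋃ k ∈ (s : Set κ), T k), m i) μ :=
      indep_iSup_of_disjoint h_le h_indep hdisj
    have hIF : IndepFun (g a) (fun ω => ∏ k ∈ s, g k ω) μ := by
      rw [IndepFun_iff_Indep]
      refine indep_of_indep_of_le_right (indep_of_indep_of_le_left hindep2 ?_) ?_
      · exact measurable_iff_comap_le.mp (hg a)
      · exact measurable_iff_comap_le.mp hprodM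
    have hmul := IndepFun.integral_mul_eq_mul_integral hIF (hgM a).aestronglyMeasurable
      ((Finset.measurable_prod s fun k _ => hgM k).aestronglyMeasurable)
    calc ∫ ω, ∏ k ∈ insert a s, g k ω ∂μ
        = ∫ ω, g a ω * ∏ k ∈ s, g k ω ∂μ := by
          simp_rw [Finset.prod_insert ha]
      _ = (∫ ω, g a ω ∂μ) * ∫ ω, ∏ k ∈ s, g k ω ∂μ := hmul
      _ = ∏ k ∈ insert a s, ∫ ω, g k ω ∂μ := by
          rw [ih, Finset.prod_insert ha]

lemma bernoulli_exp_two {Ω : Type*} {mΩ : MeasurableSpace Ω} {μ : Measure Ω}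
    [IsProbabilityMeasure μ] {X : Ω → ℝ} (hX : Measurable X)
    (h01 : ∀ᵐ ω ∂μ, X ω = 0 ∨ X ω = 1) {p : ℝ} (hp0 : 0 ≤ p)
    (hber : μ {ω | X ω = 1} = ENNReal.ofReal p) :
    ∫ ω, Real.exp (2 * X ω) ∂μ = 1 + (Real.exp 2 - 1) * p := by
  have hA : MeasurableSet {ω | X ω = 1} := hX (measurableSet_singleton 1)
  have hcongr : (fun ω => Real.exp (2 * X ω))
      =ᵐ[μ] fun ω => 1 + Set.indicator {ω | X ω = 1} (fun _ => Real.exp 2 - 1) ω := by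
    filter_upwards [h01] with ω hω
    rcases hω with h | h
    · have : ω ∉ {ω | X ω = 1} := by simp [Set.mem_setOf_eq, h]
      simp [h, Set.indicator_of_notMem this]
    · have : ω ∈ {ω | X ω = 1} := h
      simp [h, Set.indicator_of_mem this]
  rw [integral_congr_ae hcongr, integral_add (integrable_const 1)
    ((integrable_const (Real.exp 2 - 1)).indicator hA), integral_const,
    integral_indicator_const _ hA, measureReal_def, measureReal_def, hber, measure_univ, ENNReal.toReal_ofReal hp0]
  simp [smul_eq_mul, mul_comm]

open Classical in
/-- **Bernoulli random matrix, heavy rows.** Let `B` be an `n × n` random matrix with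
independent Bernoulli(`p`) entries and `ε ∈ (0,1/2]`. Call a row heavy if it contains more
than `21pn + 2 ln ε⁻¹` ones. Then with probability at least `1 - exp(-εn/2)` the heavy rows of
`B` contain at most `εn` ones altogether. -/
theorem bernoulli_heavy_rows
    (n : ℕ) (Ω : Type) [MeasureSpace Ω] [IsProbabilityMeasure (ℙ : Measure Ω)]
    (p : ℝ) (hp0 : 0 ≤ p) (hp1 : p ≤ 1)
    (B : Ω → Matrix (Fin n) (Fin n) ℝ)
    (hmeas : ∀ i j, Measurable fun ω => B ω i j)
    (hindep : iIndepFun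
      (fun q : Fin n × Fin n => fun ω => B ω q.1 q.2) ℙ)
    (h01 : ∀ i j, ∀ᵐ ω ∂ℙ, B ω i j = 0 ∨ B ω i j = 1)
    (hber : ∀ i j, ℙ {ω | B ω i j = 1} = ENNReal.ofReal p)
    (ε : ℝ) (hε0 : 0 < ε) (hε1 : ε ≤ 1 / 2) :
    ENNReal.ofReal (1 - Real.exp (-(ε * n) / 2)) ≤
      ℙ {ω | ∑ i, (if 21 * p * n + 2 * Real.log ε⁻¹ < ∑ j, B ω i j
          then ∑ j, B ω i j else 0) ≤ ε * n} := by
  classical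
  set t₀ : ℝ := 21 * p * n + 2 * Real.log ε⁻¹ with ht₀
  -- basic objects
  let S : Fin n → Ω → ℝ := fun i ω => ∑ j, B ω i j
  let Y : Fin n → Ω → ℝ := fun i ω => if t₀ < S i ω then S i ω else 0
  let W : Ω → ℝ := fun ω => ∑ i, Y i ω
  show ENNReal.ofReal (1 - Real.exp (-(ε * n) / 2)) ≤ ℙ {ω | W ω ≤ ε * n}
  -- measurability
  have hSmeas : ∀ i, Measurable (S i) := fun i =>
    Finset.measurable_sum _ fun j _ => hmeas i j
  have hYmeas : ∀ i, Measurable (Y i) := fun i =>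
    Measurable.ite (measurableSet_lt measurable_const (hSmeas i)) (hSmeas i) measurable_const
  have hWmeas : Measurable W := Finset.measurable_sum _ fun i _ => hYmeas i
  -- a.e. 0/1 entries
  have hgood : ∀ᵐ ω ∂ℙ, ∀ i j, B ω i j = 0 ∨ B ω i j = 1 :=
    ae_all_iff.mpr fun i => ae_all_iff.mpr fun j => h01 i j
  have hSbd : ∀ᵐ ω ∂ℙ, ∀ i, 0 ≤ S i ω ∧ S i ω ≤ n := by
    filter_upwards [hgood] with ω hω i
    constructor
    · exact Finset.sum_nonneg fun j _ => by rcases hω i j with h | h <;> simp [h]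
    · calc ∑ j, B ω i j ≤ ∑ _j : Fin n, (1 : ℝ) :=
            Finset.sum_le_sum fun j _ => by rcases hω i j with h | h <;> simp [h]
        _ = n := by simp
  -- the set-up for independence
  set m : Fin n × Fin n → MeasurableSpace Ω :=
    fun q => MeasurableSpace.comap (fun ω => B ω q.1 q.2) inferInstance with hm
  have h_le : ∀ q, m q ≤ _ := fun q => measurable_iff_comap_le.mp (hmeas q.1 q.2)
  have h_ind : iIndep m ℙ := (iIndepFun_iff_iIndep _ _ _).mp hindep
  -- per-row independence product for exp ∘ Y
  have hrow : ∫ ω, ∏ i, Real.exp (Y i ω) ∂ℙ = ∏ i, ∫ ω, Real.exp (Y i ω) ∂ℙ := by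
    refine indep_integral_prod ℙ m h_le h_ind
      (fun i : Fin n => (Prod.fst ⁻¹' {i} : Set (Fin n × Fin n))) ?_
      (fun i ω => Real.exp (Y i ω)) ?_ Finset.univ
    · intro i k hik
      refine Set.disjoint_left.mpr fun q hq hq' => hik ?_
      simp only [Set.mem_preimage, Set.mem_singleton_iff] at hq hq'
      exact hq.symm.trans hq'
    · intro i
      have hBm : ∀ j, Measurable[⨆ q ∈ (Prod.fst ⁻¹' {i} : Set (Fin n × Fin n)), m q]
          (fun ω => B ω i j) := fun j =>
        measurable_iff_comap_le.mpr (le_iSup₂ (f := fun q _ => m q) (i, j)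
          (show (i, j) ∈ (Prod.fst ⁻¹' {i} : Set (Fin n × Fin n)) from rfl))
      have hSm : Measurable[⨆ q ∈ (Prod.fst ⁻¹' {i} : Set (Fin n × Fin n)), m q] (S i) :=
        Finset.measurable_sum _ fun j _ => hBm j
      exact Real.measurable_exp.comp
        (Measurable.ite (measurableSet_lt measurable_const hSm) hSm measurable_const)
  -- per-entry independence product within row i
  have hcol : ∀ i : Fin n, ∫ ω, ∏ j, Real.exp (2 * B ω i j) ∂ℙ
      = (1 + (Real.exp 2 - 1) * p) ^ n := by
    intro i
    have h := indep_integral_prod ℙ m h_le h_ind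
      (fun j : Fin n => ({(i, j)} : Set (Fin n × Fin n)))
      (fun j k hjk => Set.disjoint_singleton.mpr fun h => hjk (congrArg Prod.snd h))
      (fun j ω => Real.exp (2 * B ω i j))
      (fun j => Real.measurable_exp.comp
        ((measurable_iff_comap_le.mpr
          (le_iSup₂ (f := fun q _ => m q) (i, j)
            (show (i, j) ∈ ({(i, j)} : Set (Fin n × Fin n)) from rfl))).const_mul 2))
      Finset.univ
    rw [h]
    have : ∀ j : Fin n, ∫ ω, Real.exp (2 * B ω i j) ∂ℙ = 1 + (Real.exp 2 - 1) * p :=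
      fun j => bernoulli_exp_two (hmeas i j) (h01 i j) hp0 (hber i j)
    simp [this]
  -- integrability facts
  have hIntY : ∀ i, Integrable (fun ω => Real.exp (Y i ω)) ℙ := by
    intro i
    refine Integrable.mono' (integrable_const (Real.exp n))
      (Real.measurable_exp.comp (hYmeas i)).aestronglyMeasurable ?_
    filter_upwards [hSbd] with ω hω
    rw [Real.norm_eq_abs, abs_of_pos (Real.exp_pos _), Real.exp_le_exp]
    simp only [Y]
    split
    · exact (hω i).2
    · exact Nat.cast_nonneg n
  have hIntProd : ∀ i, Integrable (fun ω => ∏ j, Real.exp (2 * B ω i j)) ℙ := by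
    intro i
    refine Integrable.mono' (integrable_const (Real.exp 2 ^ n))
      (Finset.measurable_prod _ fun j _ =>
        Real.measurable_exp.comp ((hmeas i j).const_mul 2)).aestronglyMeasurable ?_
    filter_upwards [hgood] with ω hω
    rw [Real.norm_eq_abs, abs_of_pos (Finset.prod_pos fun j _ => Real.exp_pos _)]
    calc ∏ j, Real.exp (2 * B ω i j) ≤ ∏ _j : Fin n, Real.exp 2 :=
          Finset.prod_le_prod (fun j _ => (Real.exp_pos _).le)
            (fun j _ => Real.exp_le_exp.mpr (by rcases hω i j with h | h <;> simp [h]))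
      _ = Real.exp 2 ^ n := by simp
  -- numeric facts
  have he2 : Real.exp 2 ≤ 22 := by
    have h2 : Real.exp 2 = Real.exp 1 * Real.exp 1 := by
      rw [← Real.exp_add]; norm_num
    nlinarith [Real.exp_one_lt_d9, Real.exp_pos 1]
  have hpn : 0 ≤ p * n := mul_nonneg hp0 (Nat.cast_nonneg n)
  -- bound each row integral
  have hEi : ∀ i, ∫ ω, Real.exp (Y i ω) ∂ℙ ≤ 1 + ε ^ 2 := by
    intro i
    have hpt : ∀ ω, Real.exp (Y i ω) ≤
        1 + Real.exp (-t₀) * ∏ j, Real.exp (2 * B ω i j) := by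
      intro ω
      have hprod : ∏ j, Real.exp (2 * B ω i j) = Real.exp (2 * S i ω) := by
        rw [← Real.exp_sum, Finset.mul_sum]
      rw [hprod, ← Real.exp_add]
      simp only [Y]
      split
      · rename_i h
        have h1 : S i ω ≤ -t₀ + 2 * S i ω := by linarith
        have := Real.exp_le_exp.mpr h1
        linarith
      · have := (Real.exp_pos (-t₀ + 2 * S i ω)).le
        simp only [Real.exp_zero]
        linarith
    have hIntRHS : Integrable
        (fun ω => 1 + Real.exp (-t₀) * ∏ j, Real.exp (2 * B ω i j)) ℙ :=
      (integrable_const 1).add ((hIntProd i).const_mul _)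
    calc ∫ ω, Real.exp (Y i ω) ∂ℙ
        ≤ ∫ ω, 1 + Real.exp (-t₀) * ∏ j, Real.exp (2 * B ω i j) ∂ℙ :=
          integral_mono (hIntY i) hIntRHS hpt
      _ = 1 + Real.exp (-t₀) * (1 + (Real.exp 2 - 1) * p) ^ n := by
          rw [integral_add (integrable_const 1) ((hIntProd i).const_mul _),
            integral_const, integral_const_mul, hcol i]
          simp
      _ ≤ 1 + ε ^ 2 := by
          have hbase : 0 ≤ 1 + (Real.exp 2 - 1) * p := by
            have h1 : (0:ℝ) ≤ (Real.exp 2 - 1) * p :=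
              mul_nonneg (by nlinarith [Real.add_one_le_exp (2:ℝ)]) hp0
            linarith
          have hkey : Real.exp (-t₀) * (1 + (Real.exp 2 - 1) * p) ^ n ≤ ε ^ 2 := by
            calc Real.exp (-t₀) * (1 + (Real.exp 2 - 1) * p) ^ n
                ≤ Real.exp (-t₀) * Real.exp ((Real.exp 2 - 1) * p) ^ n := by
                  refine mul_le_mul_of_nonneg_left (pow_le_pow_left₀ hbase ?_ n)
                    (Real.exp_pos _).le
                  linarith [Real.add_one_le_exp ((Real.exp 2 - 1) * p)]
              _ = Real.exp (-t₀ + n * ((Real.exp 2 - 1) * p)) := by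
                  rw [← Real.exp_nat_mul, ← Real.exp_add]
              _ ≤ Real.exp (2 * Real.log ε) := by
                  rw [Real.exp_le_exp, ht₀, Real.log_inv]
                  nlinarith [mul_nonneg hp0 (Nat.cast_nonneg n : (0:ℝ) ≤ n)]
              _ = ε ^ 2 := by
                  rw [two_mul, Real.exp_add, Real.exp_log hε0, sq]
          linarith
  -- the mgf bound
  have hmgfle : mgf W ℙ 1 ≤ Real.exp (ε ^ 2 * n) := by
    have h1 : mgf W ℙ 1 = ∫ ω, ∏ i, Real.exp (Y i ω) ∂ℙ := by
      unfold mgf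
      congr 1
      ext ω
      show Real.exp (1 * W ω) = _
      rw [one_mul]
      exact Real.exp_sum Finset.univ (fun i => Y i ω)
    rw [h1, hrow]
    calc ∏ i, ∫ ω, Real.exp (Y i ω) ∂ℙ
        ≤ ∏ _i : Fin n, (1 + ε ^ 2) :=
          Finset.prod_le_prod (fun i _ => integral_nonneg fun ω => (Real.exp_pos _).le)
            (fun i _ => hEi i)
      _ = (1 + ε ^ 2) ^ n := by simp
      _ ≤ Real.exp (ε ^ 2) ^ n := by
          refine pow_le_pow_left₀ (by positivity) ?_ n
          linarith [Real.add_one_le_exp (ε ^ 2)]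
      _ = Real.exp (ε ^ 2 * n) := by
          rw [← Real.exp_nat_mul, mul_comm]
  -- Chernoff
  have hIntW : Integrable (fun ω => Real.exp (1 * W ω)) ℙ := by
    refine Integrable.mono' (integrable_const (Real.exp (n * n)))
      (Real.measurable_exp.comp (hWmeas.const_mul 1)).aestronglyMeasurable ?_
    filter_upwards [hSbd] with ω hω
    rw [Real.norm_eq_abs, abs_of_pos (Real.exp_pos _), Real.exp_le_exp, one_mul]
    calc W ω ≤ ∑ _i : Fin n, (n : ℝ) := by
          refine Finset.sum_le_sum fun i _ => ?_
          simp only [Y]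
          split
          · exact (hω i).2
          · exact Nat.cast_nonneg n
      _ = n * n := by simp [mul_comm]
  have hch := measure_ge_le_exp_mul_mgf (μ := ℙ) (X := W) (ε * n) zero_le_one hIntW
  have hch' : (ℙ {ω | ε * n ≤ W ω}).toReal ≤ Real.exp (-(ε * n) / 2) := by
    have hεn : 0 ≤ ε * n := mul_nonneg hε0.le (Nat.cast_nonneg n)
    calc (ℙ {ω | ε * n ≤ W ω}).toReal
        ≤ Real.exp (-1 * (ε * n)) * mgf W ℙ 1 := hch
      _ ≤ Real.exp (-1 * (ε * n)) * Real.exp (ε ^ 2 * n) :=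
          mul_le_mul_of_nonneg_left hmgfle (Real.exp_pos _).le
      _ = Real.exp (-1 * (ε * n) + ε ^ 2 * n) := (Real.exp_add _ _).symm
      _ ≤ Real.exp (-(ε * n) / 2) := by
          rw [Real.exp_le_exp]
          nlinarith [mul_nonneg hε0.le (Nat.cast_nonneg n : (0:ℝ) ≤ n)]
  -- conclude
  have hmeasLt : MeasurableSet {ω | ε * n < W ω} := measurableSet_lt measurable_const hWmeas
  have hset : {ω | W ω ≤ ε * n} = {ω | ε * n < W ω}ᶜ := by
    ext ω; simp [not_lt]
  have hPlt : ℙ {ω | ε * n < W ω} ≤ ENNReal.ofReal (Real.exp (-(ε * n) / 2)) := by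
    refine le_trans (measure_mono fun ω (h : ε * ↑n < W ω) => le_of_lt h) ?_
    exact (ENNReal.le_ofReal_iff_toReal_le (measure_ne_top _ _) (Real.exp_pos _).le).mpr hch'
  rw [hset, prob_compl_eq_one_sub hmeasLt,
    ENNReal.ofReal_sub _ (Real.exp_pos _).le, ENNReal.ofReal_one]
  exact tsub_le_tsub_left hPlt 1
end
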